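/- arXiv:2301.10415 — 4 statements merged into one kernel-verified Lean document; each statement's English description precedes it below -/
import Mathlib

section
/- Let n ∈ ℕ (n ≥ 0) and let H : E → ℝ be continuous with |H(ξ,η)| ≤ (M^{n+2}/(n+1)!)·(ξ+η)^{n+1} for all (ξ,η) ∈ E. Then |Φ_H(ξ,η)| ≤ (M^{n+3}/(n+2)!)·(ξ+η)^{n+2} for all (ξ,η) ∈ E, where M := (f̄ + Λ̄)/2. -/
open MeasureTheory Set
open scoped ENNReal

noncomputable section

/-- The triangular domain `D = {(x,y) : 0 ≤ y ≤ x ≤ 1}`. -/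
def Dset : Set (ℝ × ℝ) := {p : ℝ × ℝ | 0 ≤ p.2 ∧ p.2 ≤ p.1 ∧ p.1 ≤ 1}

/-- Partial derivative in the first variable (within `D`). -/
def pd1 (K : ℝ × ℝ → ℝ) (p : ℝ × ℝ) : ℝ := fderivWithin ℝ K Dset p (1, 0)

/-- Partial derivative in the second variable (within `D`). -/
def pd2 (K : ℝ × ℝ → ℝ) (p : ℝ × ℝ) : ℝ := fderivWithin ℝ K Dset p (0, 1)

/-- `K` is a `C²` solution of the kernel equation on `D`:
(i) `k_xx - k_yy = μ k + f + ∫_y^x k(x,z) f(z,y) dz` on `D`;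
(ii) `k_x(x,x) + k_y(x,x) = λ0/2`; (iii) `k_y(x,0) = 0`; (iv) `k(0,0) = 0`. -/
def IsKernelSol (lam0 : ℝ) (c1 : ℝ → ℝ) (f : ℝ → ℝ → ℝ) (K : ℝ × ℝ → ℝ) : Prop :=
  ContDiffOn ℝ 2 K Dset ∧
  (∀ p ∈ Dset, pd1 (pd1 K) p - pd2 (pd2 K) p =
      (lam0 - c1 p.1 + c1 p.2) * K p + f p.1 p.2 + ∫ z in p.2..p.1, K (p.1, z) * f z p.2) ∧
  (∀ x ∈ Icc (0:ℝ) 1, pd1 K (x, x) + pd2 K (x, x) = lam0 / 2) ∧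
  (∀ x ∈ Icc (0:ℝ) 1, pd2 K (x, 0) = 0) ∧
  K (0, 0) = 0

/-- `f̄ := max_{[0,1]²} |f|`. -/
def fbar (f : ℝ → ℝ → ℝ) : ℝ :=
  sSup ((fun p : ℝ × ℝ => |f p.1 p.2|) '' (Icc (0:ℝ) 1 ×ˢ Icc (0:ℝ) 1))

/-- `Λ̄ := max {λ0, max_D |λ0 - c1(x) + c1(y)|}`. -/
def Lambdabar (lam0 : ℝ) (c1 : ℝ → ℝ) : ℝ :=
  max lam0 (sSup ((fun p : ℝ × ℝ => |lam0 - c1 p.1 + c1 p.2|) '' Dset))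

/-- `M := (f̄ + Λ̄)/2`. -/
def Mconst (lam0 : ℝ) (c1 : ℝ → ℝ) (f : ℝ → ℝ → ℝ) : ℝ :=
  (fbar f + Lambdabar lam0 c1) / 2

/-- The transformed domain `E = {(ξ,η) : 0 ≤ η ≤ 1, η ≤ ξ ≤ 2 - η}`. -/
def Eset : Set (ℝ × ℝ) := {p : ℝ × ℝ | 0 ≤ p.2 ∧ p.2 ≤ 1 ∧ p.2 ≤ p.1 ∧ p.1 ≤ 2 - p.2}

/-- `μ̃(ξ,η) := λ0 - c1((ξ+η)/2) + c1((ξ-η)/2)`. -/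
def mutld (lam0 : ℝ) (c1 : ℝ → ℝ) (xi eta : ℝ) : ℝ :=
  lam0 - c1 ((xi + eta) / 2) + c1 ((xi - eta) / 2)

/-- The inhomogeneous term `G0` of the integral equation. -/
def Gzero (lam0 : ℝ) (f : ℝ → ℝ → ℝ) (xi eta : ℝ) : ℝ :=
  lam0 / 4 * (xi + eta)
    + (1 / 4) * (∫ tau in eta..xi, ∫ s in (0:ℝ)..eta, f ((tau + s) / 2) ((tau - s) / 2))
    + (1 / 2) * (∫ tau in (0:ℝ)..eta, ∫ s in (0:ℝ)..tau, f ((tau + s) / 2) ((tau - s) / 2))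

/-- The integral operator `Φ_H`. -/
def Phi (lam0 : ℝ) (c1 : ℝ → ℝ) (f : ℝ → ℝ → ℝ) (H : ℝ → ℝ → ℝ) (xi eta : ℝ) : ℝ :=
  (1 / 4) * (∫ tau in eta..xi, ∫ s in (0:ℝ)..eta, mutld lam0 c1 tau s * H tau s)
    + (1 / 2) * (∫ tau in (0:ℝ)..eta, ∫ s in (0:ℝ)..tau, mutld lam0 c1 tau s * H tau s)
    + (1 / 4) * (∫ z in eta..xi, ∫ s in (0:ℝ)..eta, ∫ tau in z..(z + eta - s),
        f ((tau - s) / 2) (z - (tau + s) / 2) * H tau s)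
    + (1 / 2) * (∫ z in (0:ℝ)..eta, ∫ s in (0:ℝ)..z, ∫ tau in z..(2 * z - s),
        f ((tau - s) / 2) (z - (tau + s) / 2) * H tau s)

-- helpers
private lemma abs_int_le_const' {h : ℝ → ℝ} {a b K : ℝ} (hab : a ≤ b)
    (hb : ∀ x, a < x → x ≤ b → |h x| ≤ K) :
    |∫ x in a..b, h x| ≤ K * (b - a) := by
  have := intervalIntegral.norm_integral_le_of_norm_le_const (a := a) (b := b) (f := h) (C := K)
    (fun x hx => by rw [Set.uIoc_of_le hab] at hx; simpa [Real.norm_eq_abs] using hb x hx.1 hx.2)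
  simpa [Real.norm_eq_abs, abs_of_nonneg (sub_nonneg.2 hab)] using this

private lemma abs_int_le_fun {h g : ℝ → ℝ} {a b : ℝ} (hab : a ≤ b) (hg : Continuous g)
    (hb : ∀ x, a < x → x ≤ b → |h x| ≤ g x) :
    |∫ x in a..b, h x| ≤ |∫ x in a..b, g x| := by
  have hae : ∀ᵐ t ∂(MeasureTheory.volume.restrict (Set.uIoc a b)), ‖h t‖ ≤ g t := by
    refine (MeasureTheory.ae_restrict_iff' measurableSet_uIoc).2 (Filter.Eventually.of_forall ?_)
    intro x hx; rw [Set.uIoc_of_le hab] at hx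
    simpa [Real.norm_eq_abs] using hb x hx.1 hx.2
  have hle : |∫ x in a..b, h x| ≤ ∫ x in a..b, g x := by
    simpa [Real.norm_eq_abs] using
      intervalIntegral.norm_integral_le_of_norm_le (μ := MeasureTheory.volume) (f := h) hab
        (Filter.Eventually.of_forall fun x hx => by simpa [Real.norm_eq_abs] using hb x hx.1 hx.2)
        (hg.intervalIntegrable a b)
  exact hle.trans (le_abs_self _)

private lemma int_shift_pow (a b c : ℝ) (m : ℕ) :
    (∫ x in a..b, (x + c) ^ m) = ((b + c) ^ (m + 1) - (a + c) ^ (m + 1)) / (m + 1) := by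
  rw [intervalIntegral.integral_comp_add_right (fun y => y ^ m) c, integral_pow]

private lemma fbar_bound {f : ℝ → ℝ → ℝ}
    (hf : ContinuousOn (fun p : ℝ × ℝ => f p.1 p.2) (Icc 0 1 ×ˢ Icc 0 1)) :
    ∀ x y : ℝ, x ∈ Icc (0:ℝ) 1 → y ∈ Icc (0:ℝ) 1 → |f x y| ≤ fbar f := by
  intro x y hx hy
  have hK : IsCompact (Icc (0:ℝ) 1 ×ˢ Icc (0:ℝ) 1) := isCompact_Icc.prod isCompact_Icc
  have hbdd : BddAbove ((fun p : ℝ × ℝ => |f p.1 p.2|) '' (Icc (0:ℝ) 1 ×ˢ Icc (0:ℝ) 1)) :=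
    (hK.image_of_continuousOn hf.abs).bddAbove
  exact le_csSup hbdd ⟨(x, y), ⟨hx, hy⟩, rfl⟩

private lemma fbar_nonneg {f : ℝ → ℝ → ℝ}
    (hf : ContinuousOn (fun p : ℝ × ℝ => f p.1 p.2) (Icc 0 1 ×ˢ Icc 0 1)) :
    0 ≤ fbar f :=
  (abs_nonneg _).trans (fbar_bound hf 0 0 (by norm_num) (by norm_num))

private lemma isCompact_Dset : IsCompact Dset := by
  have hclosed : IsClosed Dset := by
    have : Dset = {p : ℝ × ℝ | 0 ≤ p.2} ∩ ({p | p.2 ≤ p.1} ∩ {p | p.1 ≤ 1}) := rfl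
    rw [this]
    exact (isClosed_le continuous_const continuous_snd).inter
      ((isClosed_le continuous_snd continuous_fst).inter
        (isClosed_le continuous_fst continuous_const))
  refine IsCompact.of_isClosed_subset
    (isCompact_Icc.prod isCompact_Icc : IsCompact (Icc (0:ℝ) 1 ×ˢ Icc (0:ℝ) 1)) hclosed ?_
  rintro ⟨a, b⟩ ⟨h1, h2, h3⟩
  exact ⟨⟨le_trans h1 h2, h3⟩, ⟨h1, le_trans h2 h3⟩⟩

private lemma lambdabar_bound {lam0 : ℝ} {c1 : ℝ → ℝ} (hc1 : ContinuousOn c1 (Icc 0 1)) :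
    ∀ p : ℝ × ℝ, p ∈ Dset → |lam0 - c1 p.1 + c1 p.2| ≤ Lambdabar lam0 c1 := by
  intro p hp
  have hcont : ContinuousOn (fun p : ℝ × ℝ => |lam0 - c1 p.1 + c1 p.2|) Dset := by
    refine ContinuousOn.abs ?_
    refine (continuousOn_const.sub (hc1.comp continuousOn_fst ?_)).add
      (hc1.comp continuousOn_snd ?_)
    · rintro ⟨a, b⟩ ⟨h1, h2, h3⟩; exact ⟨le_trans h1 h2, h3⟩
    · rintro ⟨a, b⟩ ⟨h1, h2, h3⟩; exact ⟨h1, le_trans h2 h3⟩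
  have hbdd : BddAbove ((fun p : ℝ × ℝ => |lam0 - c1 p.1 + c1 p.2|) '' Dset) :=
    (isCompact_Dset.image_of_continuousOn hcont).bddAbove
  exact le_trans (le_csSup hbdd ⟨p, hp, rfl⟩) (le_max_right _ _)

private lemma num_aux {a t Pk Qk : ℝ} (ha : 0 ≤ a) (ht0 : 0 ≤ t) (ht1 : t ≤ 1)
    (hQ : 0 ≤ Qk) (hPQ : Qk ≤ Pk) : a * t * (Pk - Qk) ≤ a * Pk := by
  nlinarith [mul_nonneg (mul_nonneg ha (sub_nonneg.2 ht1)) (sub_nonneg.2 hPQ),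
    mul_nonneg ha hQ]

set_option maxHeartbeats 2000000 in
/-- Induction step: if `|H| ≤ M^(n+2)/(n+1)! (ξ+η)^(n+1)` on `E`, then
`|Φ_H| ≤ M^(n+3)/(n+2)! (ξ+η)^(n+2)` on `E`. -/
theorem Phi_induction_step (lam0 : ℝ) (hlam0 : 0 < lam0)
    (c1 : ℝ → ℝ) (hc1 : ContinuousOn c1 (Icc 0 1))
    (f : ℝ → ℝ → ℝ)
    (hf : ContinuousOn (fun p : ℝ × ℝ => f p.1 p.2) (Icc 0 1 ×ˢ Icc 0 1))
    (n : ℕ) (H : ℝ → ℝ → ℝ) (hHcont : ContinuousOn (fun p : ℝ × ℝ => H p.1 p.2) Eset)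
    (hHbound : ∀ xi eta : ℝ, (xi, eta) ∈ Eset →
      |H xi eta| ≤ Mconst lam0 c1 f ^ (n + 2) / (Nat.factorial (n + 1) : ℝ)
        * (xi + eta) ^ (n + 1)) :
    ∀ xi eta : ℝ, (xi, eta) ∈ Eset →
      |Phi lam0 c1 f H xi eta| ≤
        Mconst lam0 c1 f ^ (n + 3) / (Nat.factorial (n + 2) : ℝ) * (xi + eta) ^ (n + 2) := by
  intro xi eta hE
  obtain ⟨he0, he1, hex, hx2⟩ := hE
  set F := fbar f with hFdef
  set Λ := Lambdabar lam0 c1 with hLdef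
  set M := Mconst lam0 c1 f with hMdef
  have hF0 : 0 ≤ F := fbar_nonneg hf
  have hL0 : 0 ≤ Λ := le_trans hlam0.le (le_max_left _ _)
  have hM : M = (F + Λ) / 2 := rfl
  have hM0 : 0 ≤ M := by rw [hM]; linarith
  set C : ℝ := M ^ (n + 2) / (Nat.factorial (n + 1) : ℝ) with hCdef
  have hC0 : 0 ≤ C := div_nonneg (pow_nonneg hM0 _) (Nat.cast_nonneg _)
  have hP0 : 0 ≤ xi + eta := by linarith
  have hP2 : xi + eta ≤ 2 := by linarith
  have hd0 : (0:ℝ) < (n:ℝ) + 2 := by positivity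
  set P : ℝ := xi + eta with hPdef
  have HB : ∀ tau s : ℝ, (tau, s) ∈ Eset → |H tau s| ≤ C * (tau + s) ^ (n + 1) :=
    fun tau s h => hHbound tau s h
  have hLC : 0 ≤ Λ * C := mul_nonneg hL0 hC0
  have hFC : 0 ≤ F * C := mul_nonneg hF0 hC0
  have hpowQ : (eta + eta) ^ (n + 2) ≤ P ^ (n + 2) :=
    pow_le_pow_left₀ (by linarith) (by simp only [hPdef]; linarith) _
  have hQ0 : (0:ℝ) ≤ (eta + eta) ^ (n + 2) := pow_nonneg (by linarith) _
  have hPk0 : (0:ℝ) ≤ P ^ (n + 2) := pow_nonneg hP0 _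
  -- Term 1
  have hT1 : |∫ tau in eta..xi, ∫ s in (0:ℝ)..eta, mutld lam0 c1 tau s * H tau s| ≤
      Λ * C * P ^ (n + 2) / ((n:ℝ) + 2) := by
    have hgB : ∀ tau, eta < tau → tau ≤ xi →
        |∫ s in (0:ℝ)..eta, mutld lam0 c1 tau s * H tau s| ≤
          Λ * C * eta * (tau + eta) ^ (n + 1) := by
      intro tau ht1 ht2
      have key : ∀ s, 0 < s → s ≤ eta →
          |mutld lam0 c1 tau s * H tau s| ≤ Λ * (C * (tau + eta) ^ (n + 1)) := by
        intro s hs0 hse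
        have hmemE : (tau, s) ∈ Eset := ⟨hs0.le, hse.trans he1, by linarith, by linarith⟩
        have hD : ((tau + s) / 2, (tau - s) / 2) ∈ Dset :=
          ⟨by linarith, by linarith, by linarith⟩
        have hmu : |mutld lam0 c1 tau s| ≤ Λ := by
          simpa [mutld] using lambdabar_bound hc1 _ hD
        calc |mutld lam0 c1 tau s * H tau s| = |mutld lam0 c1 tau s| * |H tau s| := abs_mul _ _
          _ ≤ Λ * (C * (tau + s) ^ (n + 1)) :=
              mul_le_mul hmu (HB tau s hmemE) (abs_nonneg _) hL0
          _ ≤ Λ * (C * (tau + eta) ^ (n + 1)) := by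
              have hp : (tau + s) ^ (n + 1) ≤ (tau + eta) ^ (n + 1) :=
                pow_le_pow_left₀ (by linarith) (by linarith) _
              exact mul_le_mul_of_nonneg_left (mul_le_mul_of_nonneg_left hp hC0) hL0
      have h1 := abs_int_le_const' he0 key
      calc |∫ s in (0:ℝ)..eta, mutld lam0 c1 tau s * H tau s|
          ≤ Λ * (C * (tau + eta) ^ (n + 1)) * (eta - 0) := h1
        _ = Λ * C * eta * (tau + eta) ^ (n + 1) := by ring
    have houter := abs_int_le_fun hex
      (by fun_prop : Continuous fun tau : ℝ => Λ * C * eta * (tau + eta) ^ (n + 1)) hgB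
    have hval : (∫ tau in eta..xi, Λ * C * eta * (tau + eta) ^ (n + 1)) =
        Λ * C * eta * ((P ^ (n + 2) - (eta + eta) ^ (n + 2)) / ((n:ℝ) + 2)) := by
      rw [intervalIntegral.integral_const_mul, int_shift_pow]
      push_cast; simp only [hPdef]; ring_nf
    have hV0 : 0 ≤ Λ * C * eta * ((P ^ (n + 2) - (eta + eta) ^ (n + 2)) / ((n:ℝ) + 2)) :=
      mul_nonneg (mul_nonneg hLC he0) (div_nonneg (by linarith) hd0.le)
    calc |∫ tau in eta..xi, ∫ s in (0:ℝ)..eta, mutld lam0 c1 tau s * H tau s|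
        ≤ |∫ tau in eta..xi, Λ * C * eta * (tau + eta) ^ (n + 1)| := houter
      _ = Λ * C * eta * ((P ^ (n + 2) - (eta + eta) ^ (n + 2)) / ((n:ℝ) + 2)) := by
          rw [hval, abs_of_nonneg hV0]
      _ = Λ * C * eta * (P ^ (n + 2) - (eta + eta) ^ (n + 2)) / ((n:ℝ) + 2) := by ring
      _ ≤ Λ * C * P ^ (n + 2) / ((n:ℝ) + 2) :=
          div_le_div₀ (mul_nonneg hLC hPk0) (num_aux hLC he0 he1 hQ0 hpowQ) hd0 le_rfl
  -- Term 2
  have hT2 : |∫ tau in (0:ℝ)..eta, ∫ s in (0:ℝ)..tau, mutld lam0 c1 tau s * H tau s| ≤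
      Λ * C * (P ^ (n + 2) / 2) / ((n:ℝ) + 2) := by
    have hgB : ∀ tau, 0 < tau → tau ≤ eta →
        |∫ s in (0:ℝ)..tau, mutld lam0 c1 tau s * H tau s| ≤
          Λ * C * 2 ^ (n + 1) * tau ^ (n + 2) := by
      intro tau ht0 ht1
      have key : ∀ s, 0 < s → s ≤ tau →
          |mutld lam0 c1 tau s * H tau s| ≤ Λ * (C * (2 * tau) ^ (n + 1)) := by
        intro s hs0 hst
        have hmemE : (tau, s) ∈ Eset := ⟨hs0.le, by linarith, hst, by linarith⟩
        have hD : ((tau + s) / 2, (tau - s) / 2) ∈ Dset :=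
          ⟨by linarith, by linarith, by linarith⟩
        have hmu : |mutld lam0 c1 tau s| ≤ Λ := by
          simpa [mutld] using lambdabar_bound hc1 _ hD
        calc |mutld lam0 c1 tau s * H tau s| = |mutld lam0 c1 tau s| * |H tau s| := abs_mul _ _
          _ ≤ Λ * (C * (tau + s) ^ (n + 1)) :=
              mul_le_mul hmu (HB tau s hmemE) (abs_nonneg _) hL0
          _ ≤ Λ * (C * (2 * tau) ^ (n + 1)) := by
              have hp : (tau + s) ^ (n + 1) ≤ (2 * tau) ^ (n + 1) :=
                pow_le_pow_left₀ (by linarith) (by linarith) _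
              exact mul_le_mul_of_nonneg_left (mul_le_mul_of_nonneg_left hp hC0) hL0
      have h1 := abs_int_le_const' ht0.le key
      calc |∫ s in (0:ℝ)..tau, mutld lam0 c1 tau s * H tau s|
          ≤ Λ * (C * (2 * tau) ^ (n + 1)) * (tau - 0) := h1
        _ = Λ * C * 2 ^ (n + 1) * tau ^ (n + 2) := by rw [mul_pow]; ring
    have houter := abs_int_le_fun he0
      (by fun_prop : Continuous fun tau : ℝ => Λ * C * 2 ^ (n + 1) * tau ^ (n + 2)) hgB
    have hval : (∫ tau in (0:ℝ)..eta, Λ * C * 2 ^ (n + 1) * tau ^ (n + 2)) =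
        Λ * C * 2 ^ (n + 1) * (eta ^ (n + 3) / ((n:ℝ) + 3)) := by
      rw [intervalIntegral.integral_const_mul, integral_pow,
        zero_pow (by omega : n + 2 + 1 ≠ 0)]
      push_cast; ring
    have hV0 : 0 ≤ Λ * C * 2 ^ (n + 1) * (eta ^ (n + 3) / ((n:ℝ) + 3)) :=
      mul_nonneg (mul_nonneg hLC (by positivity))
        (div_nonneg (pow_nonneg he0 _) (by positivity))
    have hkey : 2 ^ (n + 1) * eta ^ (n + 3) ≤ P ^ (n + 2) / 2 := by
      have h1 : (eta + eta) ^ (n + 3) ≤ P ^ (n + 3) :=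
        pow_le_pow_left₀ (by linarith) (by simp only [hPdef]; linarith) _
      have h2 : P ^ (n + 3) ≤ 2 * P ^ (n + 2) := by
        calc P ^ (n + 3) = P ^ (n + 2) * P := pow_succ P (n + 2)
          _ ≤ P ^ (n + 2) * 2 := mul_le_mul_of_nonneg_left hP2 hPk0
          _ = 2 * P ^ (n + 2) := by ring
      have h3 : (eta + eta) ^ (n + 3) = 4 * (2 ^ (n + 1) * eta ^ (n + 3)) := by
        calc (eta + eta) ^ (n + 3) = (2 * eta) ^ (n + 3) := by ring_nf
          _ = 2 ^ (n + 3) * eta ^ (n + 3) := mul_pow _ _ _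
          _ = 4 * (2 ^ (n + 1) * eta ^ (n + 3)) := by rw [pow_succ, pow_succ]; ring
      linarith
    calc |∫ tau in (0:ℝ)..eta, ∫ s in (0:ℝ)..tau, mutld lam0 c1 tau s * H tau s|
        ≤ |∫ tau in (0:ℝ)..eta, Λ * C * 2 ^ (n + 1) * tau ^ (n + 2)| := houter
      _ = Λ * C * 2 ^ (n + 1) * (eta ^ (n + 3) / ((n:ℝ) + 3)) := by
          rw [hval, abs_of_nonneg hV0]
      _ = Λ * C * (2 ^ (n + 1) * eta ^ (n + 3)) / ((n:ℝ) + 3) := by ring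
      _ ≤ Λ * C * (P ^ (n + 2) / 2) / ((n:ℝ) + 2) :=
          div_le_div₀ (mul_nonneg hLC (by linarith))
            (mul_le_mul_of_nonneg_left hkey hLC) hd0 (by linarith)
  -- Term 3
  have hT3 : |∫ z in eta..xi, ∫ s in (0:ℝ)..eta, ∫ tau in z..(z + eta - s),
      f ((tau - s) / 2) (z - (tau + s) / 2) * H tau s| ≤
      F * C * P ^ (n + 2) / ((n:ℝ) + 2) := by
    have hgB : ∀ z, eta < z → z ≤ xi →
        |∫ s in (0:ℝ)..eta, ∫ tau in z..(z + eta - s),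
            f ((tau - s) / 2) (z - (tau + s) / 2) * H tau s| ≤
          F * C * eta ^ 2 * (z + eta) ^ (n + 1) := by
      intro z hz1 hz2
      have hKn : 0 ≤ F * (C * (z + eta) ^ (n + 1)) :=
        mul_nonneg hF0 (mul_nonneg hC0 (pow_nonneg (by linarith) _))
      have hmid : ∀ s, 0 < s → s ≤ eta →
          |∫ tau in z..(z + eta - s), f ((tau - s) / 2) (z - (tau + s) / 2) * H tau s|
            ≤ F * (C * (z + eta) ^ (n + 1)) * eta := by
        intro s hs0 hse
        have hinner : ∀ tau, z < tau → tau ≤ z + eta - s →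
            |f ((tau - s) / 2) (z - (tau + s) / 2) * H tau s| ≤
              F * (C * (z + eta) ^ (n + 1)) := by
          intro tau htz hte
          have hmemE : (tau, s) ∈ Eset := ⟨hs0.le, hse.trans he1, by linarith, by linarith⟩
          have hfb : |f ((tau - s) / 2) (z - (tau + s) / 2)| ≤ F :=
            fbar_bound hf _ _ ⟨by linarith, by linarith⟩ ⟨by linarith, by linarith⟩
          calc |f ((tau - s) / 2) (z - (tau + s) / 2) * H tau s|
              = |f ((tau - s) / 2) (z - (tau + s) / 2)| * |H tau s| := abs_mul _ _
            _ ≤ F * (C * (tau + s) ^ (n + 1)) :=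
                mul_le_mul hfb (HB tau s hmemE) (abs_nonneg _) hF0
            _ ≤ F * (C * (z + eta) ^ (n + 1)) :=
                mul_le_mul_of_nonneg_left (mul_le_mul_of_nonneg_left
                  (pow_le_pow_left₀ (by linarith) (by linarith) _) hC0) hF0
        have h2 := abs_int_le_const' (by linarith : z ≤ z + eta - s) hinner
        calc |∫ tau in z..(z + eta - s), f ((tau - s) / 2) (z - (tau + s) / 2) * H tau s|
            ≤ F * (C * (z + eta) ^ (n + 1)) * (z + eta - s - z) := h2
          _ ≤ F * (C * (z + eta) ^ (n + 1)) * eta := mul_le_mul_of_nonneg_left (by linarith) hKn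
      have h3 := abs_int_le_const' he0 hmid
      calc |∫ s in (0:ℝ)..eta, ∫ tau in z..(z + eta - s),
              f ((tau - s) / 2) (z - (tau + s) / 2) * H tau s|
          ≤ F * (C * (z + eta) ^ (n + 1)) * eta * (eta - 0) := h3
        _ = F * C * eta ^ 2 * (z + eta) ^ (n + 1) := by ring
    have houter := abs_int_le_fun hex
      (by fun_prop : Continuous fun z : ℝ => F * C * eta ^ 2 * (z + eta) ^ (n + 1)) hgB
    have hval : (∫ z in eta..xi, F * C * eta ^ 2 * (z + eta) ^ (n + 1)) =
        F * C * eta ^ 2 * ((P ^ (n + 2) - (eta + eta) ^ (n + 2)) / ((n:ℝ) + 2)) := by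
      rw [intervalIntegral.integral_const_mul, int_shift_pow]
      push_cast; simp only [hPdef]; ring_nf
    have hV0 : 0 ≤ F * C * eta ^ 2 * ((P ^ (n + 2) - (eta + eta) ^ (n + 2)) / ((n:ℝ) + 2)) :=
      mul_nonneg (mul_nonneg hFC (sq_nonneg _)) (div_nonneg (by linarith) hd0.le)
    calc |∫ z in eta..xi, ∫ s in (0:ℝ)..eta, ∫ tau in z..(z + eta - s),
            f ((tau - s) / 2) (z - (tau + s) / 2) * H tau s|
        ≤ |∫ z in eta..xi, F * C * eta ^ 2 * (z + eta) ^ (n + 1)| := houter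
      _ = F * C * eta ^ 2 * ((P ^ (n + 2) - (eta + eta) ^ (n + 2)) / ((n:ℝ) + 2)) := by
          rw [hval, abs_of_nonneg hV0]
      _ = F * C * eta ^ 2 * (P ^ (n + 2) - (eta + eta) ^ (n + 2)) / ((n:ℝ) + 2) := by ring
      _ ≤ F * C * P ^ (n + 2) / ((n:ℝ) + 2) :=
          div_le_div₀ (mul_nonneg hFC hPk0)
            (num_aux hFC (sq_nonneg eta) (by nlinarith) hQ0 hpowQ) hd0 le_rfl
  -- Term 4
  have hT4 : |∫ z in (0:ℝ)..eta, ∫ s in (0:ℝ)..z, ∫ tau in z..(2 * z - s),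
      f ((tau - s) / 2) (z - (tau + s) / 2) * H tau s| ≤
      F * C * (P ^ (n + 2) / 2) / ((n:ℝ) + 2) := by
    have hgB : ∀ z, 0 < z → z ≤ eta →
        |∫ s in (0:ℝ)..z, ∫ tau in z..(2 * z - s),
            f ((tau - s) / 2) (z - (tau + s) / 2) * H tau s| ≤
          F * C * 2 ^ (n + 1) * z ^ (n + 3) := by
      intro z hz1 hz2
      have hKn : 0 ≤ F * (C * (2 * z) ^ (n + 1)) :=
        mul_nonneg hF0 (mul_nonneg hC0 (pow_nonneg (by linarith) _))
      have hmid : ∀ s, 0 < s → s ≤ z →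
          |∫ tau in z..(2 * z - s), f ((tau - s) / 2) (z - (tau + s) / 2) * H tau s|
            ≤ F * (C * (2 * z) ^ (n + 1)) * z := by
        intro s hs0 hsz
        have hinner : ∀ tau, z < tau → tau ≤ 2 * z - s →
            |f ((tau - s) / 2) (z - (tau + s) / 2) * H tau s| ≤
              F * (C * (2 * z) ^ (n + 1)) := by
          intro tau htz hte
          have hmemE : (tau, s) ∈ Eset :=
            ⟨hs0.le, by linarith, by linarith, by linarith⟩
          have hfb : |f ((tau - s) / 2) (z - (tau + s) / 2)| ≤ F :=
            fbar_bound hf _ _ ⟨by linarith, by linarith⟩ ⟨by linarith, by linarith⟩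
          calc |f ((tau - s) / 2) (z - (tau + s) / 2) * H tau s|
              = |f ((tau - s) / 2) (z - (tau + s) / 2)| * |H tau s| := abs_mul _ _
            _ ≤ F * (C * (tau + s) ^ (n + 1)) :=
                mul_le_mul hfb (HB tau s hmemE) (abs_nonneg _) hF0
            _ ≤ F * (C * (2 * z) ^ (n + 1)) :=
                mul_le_mul_of_nonneg_left (mul_le_mul_of_nonneg_left
                  (pow_le_pow_left₀ (by linarith) (by linarith) _) hC0) hF0
        have h2 := abs_int_le_const' (by linarith : z ≤ 2 * z - s) hinner
        calc |∫ tau in z..(2 * z - s), f ((tau - s) / 2) (z - (tau + s) / 2) * H tau s|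
            ≤ F * (C * (2 * z) ^ (n + 1)) * (2 * z - s - z) := h2
          _ ≤ F * (C * (2 * z) ^ (n + 1)) * z := mul_le_mul_of_nonneg_left (by linarith) hKn
      have h3 := abs_int_le_const' hz1.le hmid
      calc |∫ s in (0:ℝ)..z, ∫ tau in z..(2 * z - s),
              f ((tau - s) / 2) (z - (tau + s) / 2) * H tau s|
          ≤ F * (C * (2 * z) ^ (n + 1)) * z * (z - 0) := h3
        _ = F * C * 2 ^ (n + 1) * z ^ (n + 3) := by rw [mul_pow]; ring
    have houter := abs_int_le_fun he0
      (by fun_prop : Continuous fun z : ℝ => F * C * 2 ^ (n + 1) * z ^ (n + 3)) hgB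
    have hval : (∫ z in (0:ℝ)..eta, F * C * 2 ^ (n + 1) * z ^ (n + 3)) =
        F * C * 2 ^ (n + 1) * (eta ^ (n + 4) / ((n:ℝ) + 4)) := by
      rw [intervalIntegral.integral_const_mul, integral_pow,
        zero_pow (by omega : n + 3 + 1 ≠ 0)]
      push_cast; ring
    have hV0 : 0 ≤ F * C * 2 ^ (n + 1) * (eta ^ (n + 4) / ((n:ℝ) + 4)) :=
      mul_nonneg (mul_nonneg hFC (by positivity))
        (div_nonneg (pow_nonneg he0 _) (by positivity))
    have hkey : 2 ^ (n + 1) * eta ^ (n + 4) ≤ P ^ (n + 2) / 2 := by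
      have h1 : (eta + eta) ^ (n + 4) ≤ P ^ (n + 4) :=
        pow_le_pow_left₀ (by linarith) (by simp only [hPdef]; linarith) _
      have hPk3 : (0:ℝ) ≤ P ^ (n + 3) := pow_nonneg hP0 _
      have h2 : P ^ (n + 4) ≤ 2 * P ^ (n + 3) := by
        calc P ^ (n + 4) = P ^ (n + 3) * P := pow_succ P (n + 3)
          _ ≤ P ^ (n + 3) * 2 := mul_le_mul_of_nonneg_left hP2 hPk3
          _ = 2 * P ^ (n + 3) := by ring
      have h2' : P ^ (n + 3) ≤ 2 * P ^ (n + 2) := by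
        calc P ^ (n + 3) = P ^ (n + 2) * P := pow_succ P (n + 2)
          _ ≤ P ^ (n + 2) * 2 := mul_le_mul_of_nonneg_left hP2 hPk0
          _ = 2 * P ^ (n + 2) := by ring
      have h3 : (eta + eta) ^ (n + 4) = 8 * (2 ^ (n + 1) * eta ^ (n + 4)) := by
        calc (eta + eta) ^ (n + 4) = (2 * eta) ^ (n + 4) := by ring_nf
          _ = 2 ^ (n + 4) * eta ^ (n + 4) := mul_pow _ _ _
          _ = 8 * (2 ^ (n + 1) * eta ^ (n + 4)) := by
              rw [pow_succ, pow_succ, pow_succ]; ring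
      linarith
    calc |∫ z in (0:ℝ)..eta, ∫ s in (0:ℝ)..z, ∫ tau in z..(2 * z - s),
            f ((tau - s) / 2) (z - (tau + s) / 2) * H tau s|
        ≤ |∫ z in (0:ℝ)..eta, F * C * 2 ^ (n + 1) * z ^ (n + 3)| := houter
      _ = F * C * 2 ^ (n + 1) * (eta ^ (n + 4) / ((n:ℝ) + 4)) := by
          rw [hval, abs_of_nonneg hV0]
      _ = F * C * (2 ^ (n + 1) * eta ^ (n + 4)) / ((n:ℝ) + 4) := by ring
      _ ≤ F * C * (P ^ (n + 2) / 2) / ((n:ℝ) + 2) :=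
          div_le_div₀ (mul_nonneg hFC (by linarith))
            (mul_le_mul_of_nonneg_left hkey hFC) hd0 (by linarith)
  -- combine
  have h4 : ∀ a b c d : ℝ, |1 / 4 * a + 1 / 2 * b + 1 / 4 * c + 1 / 2 * d| ≤
      1 / 4 * |a| + 1 / 2 * |b| + 1 / 4 * |c| + 1 / 2 * |d| := by
    intro a b c d
    calc |1 / 4 * a + 1 / 2 * b + 1 / 4 * c + 1 / 2 * d|
        ≤ |1 / 4 * a + 1 / 2 * b + 1 / 4 * c| + |1 / 2 * d| := abs_add_le _ _
      _ ≤ (|1 / 4 * a + 1 / 2 * b| + |1 / 4 * c|) + |1 / 2 * d| := by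
          linarith [abs_add_le (1 / 4 * a + 1 / 2 * b) (1 / 4 * c)]
      _ ≤ ((|1 / 4 * a| + |1 / 2 * b|) + |1 / 4 * c|) + |1 / 2 * d| := by
          linarith [abs_add_le (1 / 4 * a) (1 / 2 * b)]
      _ = 1 / 4 * |a| + 1 / 2 * |b| + 1 / 4 * |c| + 1 / 2 * |d| := by
          rw [abs_mul, abs_mul, abs_mul, abs_mul,
            show |(1:ℝ)/4| = 1/4 by norm_num, show |(1:ℝ)/2| = 1/2 by norm_num]
  have htri : |Phi lam0 c1 f H xi eta| ≤
      1 / 4 * |∫ tau in eta..xi, ∫ s in (0:ℝ)..eta, mutld lam0 c1 tau s * H tau s|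
      + 1 / 2 * |∫ tau in (0:ℝ)..eta, ∫ s in (0:ℝ)..tau, mutld lam0 c1 tau s * H tau s|
      + 1 / 4 * |∫ z in eta..xi, ∫ s in (0:ℝ)..eta, ∫ tau in z..(z + eta - s),
          f ((tau - s) / 2) (z - (tau + s) / 2) * H tau s|
      + 1 / 2 * |∫ z in (0:ℝ)..eta, ∫ s in (0:ℝ)..z, ∫ tau in z..(2 * z - s),
          f ((tau - s) / 2) (z - (tau + s) / 2) * H tau s| := by
    rw [show Phi lam0 c1 f H xi eta =
      1 / 4 * (∫ tau in eta..xi, ∫ s in (0:ℝ)..eta, mutld lam0 c1 tau s * H tau s)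
      + 1 / 2 * (∫ tau in (0:ℝ)..eta, ∫ s in (0:ℝ)..tau, mutld lam0 c1 tau s * H tau s)
      + 1 / 4 * (∫ z in eta..xi, ∫ s in (0:ℝ)..eta, ∫ tau in z..(z + eta - s),
          f ((tau - s) / 2) (z - (tau + s) / 2) * H tau s)
      + 1 / 2 * (∫ z in (0:ℝ)..eta, ∫ s in (0:ℝ)..z, ∫ tau in z..(2 * z - s),
          f ((tau - s) / 2) (z - (tau + s) / 2) * H tau s) from rfl]
    exact h4 _ _ _ _
  have hfact : (Nat.factorial (n + 2) : ℝ) = ((n:ℝ) + 2) * (Nat.factorial (n + 1) : ℝ) := by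
    rw [show n + 2 = (n + 1) + 1 from rfl, Nat.factorial_succ]; push_cast; ring
  have hf1 : (0:ℝ) < (Nat.factorial (n + 1) : ℝ) :=
    Nat.cast_pos.2 (Nat.factorial_pos _)
  have hgoal : M ^ (n + 3) / (Nat.factorial (n + 2) : ℝ) * P ^ (n + 2) =
      M * C * P ^ (n + 2) / ((n:ℝ) + 2) := by
    rw [hfact, hCdef, pow_succ]
    simp only [div_eq_mul_inv, mul_inv]
    ring
  calc |Phi lam0 c1 f H xi eta|
      ≤ 1 / 4 * (Λ * C * P ^ (n + 2) / ((n:ℝ) + 2))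
        + 1 / 2 * (Λ * C * (P ^ (n + 2) / 2) / ((n:ℝ) + 2))
        + 1 / 4 * (F * C * P ^ (n + 2) / ((n:ℝ) + 2))
        + 1 / 2 * (F * C * (P ^ (n + 2) / 2) / ((n:ℝ) + 2)) := by
        refine htri.trans ?_
        linarith [hT1, hT2, hT3, hT4]
    _ = M * C * P ^ (n + 2) / ((n:ℝ) + 2) := by rw [hM]; ring
    _ = M ^ (n + 3) / (Nat.factorial (n + 2) : ℝ) * P ^ (n + 2) := hgoal.symm
end
end

section
/- For every n ∈ ℕ (n ≥ 0) and every (ξ,η) ∈ E, the successive approximation differences satisfy |ΔG_n(ξ,η)| ≤ (M^{n+2}/(n+1)!)·(ξ+η)^{n+1}, where M := (f̄ + Λ̄)/2. -/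
open MeasureTheory Set
open scoped ENNReal

noncomputable section

/-- The successive approximations `G_0 := G0`, `G_{n+1} := G0 + Φ_{G_n}`. -/
def Gseq (lam0 : ℝ) (c1 : ℝ → ℝ) (f : ℝ → ℝ → ℝ) : ℕ → ℝ → ℝ → ℝ
  | 0 => Gzero lam0 f
  | n + 1 => fun xi eta => Gzero lam0 f xi eta + Phi lam0 c1 f (Gseq lam0 c1 f n) xi eta

section Helpers

lemma contParam {X : Type*} [TopologicalSpace X] [FirstCountableTopology X]
    [LocallyCompactSpace X]
    {F : X → ℝ → ℝ} (hF : Continuous (Function.uncurry F))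
    {a b : X → ℝ} (ha : Continuous a) (hb : Continuous b) :
    Continuous fun x => ∫ t in a x..b x, F x t := by
  have h1 : Continuous fun x => ∫ t in (0:ℝ)..b x, F x t :=
    intervalIntegral.continuous_parametric_intervalIntegral_of_continuous hF hb
  have h2 : Continuous fun x => ∫ t in (0:ℝ)..a x, F x t :=
    intervalIntegral.continuous_parametric_intervalIntegral_of_continuous hF ha
  have key : ∀ x, ∫ t in a x..b x, F x t
      = (∫ t in (0:ℝ)..b x, F x t) - ∫ t in (0:ℝ)..a x, F x t := by
    intro x
    rw [intervalIntegral.integral_interval_sub_left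
      ((hF.uncurry_left x).intervalIntegrable _ _)
      ((hF.uncurry_left x).intervalIntegrable _ _)]
  exact (h1.sub h2).congr (fun x => (key x).symm)

lemma powInt (a b c : ℝ) (k : ℕ) :
    ∫ t in a..b, (t + c) ^ k = ((b + c) ^ (k + 1) - (a + c) ^ (k + 1)) / (k + 1) := by
  rw [intervalIntegral.integral_comp_add_right (fun x => x ^ k) c, integral_pow]

lemma powIntBound {a b c u : ℝ} (hab : a ≤ b) (hac : 0 ≤ a + c) (hbu : b + c ≤ u) (k : ℕ) :
    |∫ t in a..b, (t + c) ^ k| ≤ u ^ (k + 1) / (k + 1) := by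
  rw [powInt]
  have h1 : (0:ℝ) ≤ (a + c) ^ (k+1) := pow_nonneg hac _
  have h2 : (a + c) ^ (k+1) ≤ (b + c) ^ (k+1) := pow_le_pow_left₀ hac (by linarith) _
  have h3 : (b + c) ^ (k+1) ≤ u ^ (k+1) := pow_le_pow_left₀ (by linarith) hbu _
  have hk : (0:ℝ) < (k:ℝ) + 1 := by positivity
  rw [abs_div, abs_of_nonneg (by linarith : (0:ℝ) ≤ (b+c)^(k+1) - (a+c)^(k+1)),
    abs_of_pos hk]
  gcongr
  linarith

lemma innerBound {G : ℝ → ℝ} {a b c u C A : ℝ} {k : ℕ}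
    (hab : a ≤ b) (hac : 0 ≤ a + c) (hbu : b + c ≤ u) (hC : 0 ≤ C) (hA : 0 ≤ A)
    (hG : ∀ t ∈ Set.uIoc a b, |G t| ≤ C * (A * (t + c) ^ k)) :
    |∫ t in a..b, G t| ≤ C * (A * (u ^ (k + 1) / (k + 1))) := by
  have hcont : Continuous fun t : ℝ => C * (A * (t + c) ^ k) := by continuity
  have h1 : ‖∫ t in a..b, G t‖ ≤ |∫ t in a..b, C * (A * (t + c) ^ k)| := by
    apply intervalIntegral.norm_integral_le_abs_of_norm_le
    · exact (ae_restrict_mem measurableSet_uIoc).mono (fun t ht => by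
        simpa [Real.norm_eq_abs] using hG t ht)
    · exact hcont.intervalIntegrable _ _
  rw [Real.norm_eq_abs] at h1
  refine h1.trans ?_
  rw [intervalIntegral.integral_const_mul, intervalIntegral.integral_const_mul,
    abs_mul, abs_mul, abs_of_nonneg hC, abs_of_nonneg hA]
  have hb' := powIntBound hab hac hbu k
  gcongr


lemma absIntBound {G : ℝ → ℝ} {a b C : ℝ} (h : ∀ t ∈ Set.uIoc a b, |G t| ≤ C) :
    |∫ t in a..b, G t| ≤ C * |b - a| := by
  have := intervalIntegral.norm_integral_le_of_norm_le_const (f := G) (C := C)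
    (fun x hx => by rw [Real.norm_eq_abs]; exact h x hx)
  simpa [Real.norm_eq_abs] using this

lemma Phi_bound (lam0 : ℝ) (ct : ℝ → ℝ) (ft : ℝ → ℝ → ℝ) (H : ℝ → ℝ → ℝ)
    {Lb fb A : ℝ} (hLb : 0 ≤ Lb) (hfb : 0 ≤ fb) (hA : 0 ≤ A) (k : ℕ)
    (hmu : ∀ τ s : ℝ, 0 ≤ s → s ≤ τ → τ + s ≤ 2 → s ≤ 1 → |mutld lam0 ct τ s| ≤ Lb)
    (hft : ∀ x y : ℝ, 0 ≤ x → x ≤ 1 → 0 ≤ y → y ≤ 1 → |ft x y| ≤ fb)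
    (hH : ∀ τ s : ℝ, 0 ≤ s → s ≤ τ → τ + s ≤ 2 → s ≤ 1 → |H τ s| ≤ A * (τ + s) ^ k)
    {xi eta : ℝ} (hE : (xi, eta) ∈ Eset) :
    |Phi lam0 ct ft H xi eta| ≤
      (Lb + fb) / 2 * A * ((xi + eta) ^ (k + 1) / (k + 1)) := by
  obtain ⟨h1, h2, h3, h4⟩ := hE
  simp only at h1 h2 h3 h4
  set u : ℝ := xi + eta with hu
  have hu0 : 0 ≤ u := by simp only [hu]; linarith
  have hu2 : u ≤ 2 := by simp only [hu]; linarith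
  set Q : ℝ := A * (u ^ (k + 1) / (k + 1)) with hQ
  have hk1 : (0:ℝ) < (k:ℝ) + 1 := by positivity
  have hQ0 : 0 ≤ Q := by
    have : (0:ℝ) ≤ u ^ (k+1) := pow_nonneg hu0 _
    positivity
  -- Term 1
  have hI1 : ∀ τ ∈ Set.uIoc eta xi,
      |∫ s in (0:ℝ)..eta, mutld lam0 ct τ s * H τ s| ≤ Lb * Q := by
    intro τ hτ
    rw [Set.uIoc_of_le h3] at hτ
    refine innerBound h1 (c := τ) (by linarith [hτ.1]) (by linarith [hτ.2]) hLb hA ?_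
    intro s hs
    rw [Set.uIoc_of_le h1] at hs
    rw [abs_mul]
    have e1 : |mutld lam0 ct τ s| ≤ Lb :=
      hmu τ s hs.1.le (by linarith [hτ.1, hs.2]) (by linarith [hτ.2, hs.2]) (by linarith [hs.2])
    have e2 : |H τ s| ≤ A * (s + τ) ^ k := by
      rw [add_comm s τ]
      exact hH τ s hs.1.le (by linarith [hτ.1, hs.2]) (by linarith [hτ.2, hs.2]) (by linarith [hs.2])
    exact mul_le_mul e1 e2 (abs_nonneg _) hLb
  have hT1 : |∫ τ in eta..xi, ∫ s in (0:ℝ)..eta, mutld lam0 ct τ s * H τ s|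
      ≤ Lb * Q * (xi - eta) := by
    have := absIntBound hI1
    rwa [abs_of_nonneg (by linarith : (0:ℝ) ≤ xi - eta)] at this
  -- Term 2
  have hI2 : ∀ τ ∈ Set.uIoc (0:ℝ) eta,
      |∫ s in (0:ℝ)..τ, mutld lam0 ct τ s * H τ s| ≤ Lb * Q := by
    intro τ hτ
    rw [Set.uIoc_of_le h1] at hτ
    refine innerBound hτ.1.le (c := τ) (by linarith [hτ.1]) (by linarith [hτ.2]) hLb hA ?_
    intro s hs
    rw [Set.uIoc_of_le hτ.1.le] at hs
    rw [abs_mul]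
    have e1 : |mutld lam0 ct τ s| ≤ Lb :=
      hmu τ s hs.1.le hs.2 (by linarith [hτ.2, hs.2]) (by linarith [hτ.2, hs.2])
    have e2 : |H τ s| ≤ A * (s + τ) ^ k := by
      rw [add_comm s τ]
      exact hH τ s hs.1.le hs.2 (by linarith [hτ.2, hs.2]) (by linarith [hτ.2, hs.2])
    exact mul_le_mul e1 e2 (abs_nonneg _) hLb
  have hT2 : |∫ τ in (0:ℝ)..eta, ∫ s in (0:ℝ)..τ, mutld lam0 ct τ s * H τ s|
      ≤ Lb * Q * eta := by
    have := absIntBound hI2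
    rwa [sub_zero, abs_of_nonneg h1] at this
  -- Term 3
  have hI3 : ∀ z ∈ Set.uIoc eta xi,
      |∫ s in (0:ℝ)..eta, ∫ τ in z..(z + eta - s),
        ft ((τ - s) / 2) (z - (τ + s) / 2) * H τ s| ≤ fb * Q * eta := by
    intro z hz
    rw [Set.uIoc_of_le h3] at hz
    have key : ∀ s ∈ Set.uIoc (0:ℝ) eta,
        |∫ τ in z..(z + eta - s), ft ((τ - s) / 2) (z - (τ + s) / 2) * H τ s| ≤ fb * Q := by
      intro s hs
      rw [Set.uIoc_of_le h1] at hs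
      refine innerBound (by linarith [hs.2] : z ≤ z + eta - s) (c := s)
        (by linarith [hz.1, hs.1]) (by linarith [hz.2] : z + eta - s + s ≤ u) hfb hA ?_
      intro τ hτ
      rw [Set.uIoc_of_le (by linarith [hs.2] : z ≤ z + eta - s)] at hτ
      rw [abs_mul]
      have c1 : s ≤ τ := by linarith [hz.1, hs.2, hτ.1]
      have c2 : τ + s ≤ 2 := by linarith [hτ.2, hz.2]
      have e1 : |ft ((τ - s) / 2) (z - (τ + s) / 2)| ≤ fb := by
        refine hft _ _ (by linarith) (by linarith [hτ.2, hz.2, hs.1]) ?_ ?_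
        · linarith [hτ.2, hz.1]
        · linarith [hτ.1, hs.1, hz.2]
      have e2 : |H τ s| ≤ A * (τ + s) ^ k :=
        hH τ s hs.1.le c1 c2 (by linarith [hs.2])
      exact mul_le_mul e1 e2 (abs_nonneg _) hfb
    have := absIntBound key
    rwa [sub_zero, abs_of_nonneg h1] at this
  have hT3 : |∫ z in eta..xi, ∫ s in (0:ℝ)..eta, ∫ τ in z..(z + eta - s),
      ft ((τ - s) / 2) (z - (τ + s) / 2) * H τ s| ≤ fb * Q * eta * (xi - eta) := by
    have := absIntBound hI3
    rwa [abs_of_nonneg (by linarith : (0:ℝ) ≤ xi - eta)] at this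
  -- Term 4
  have hI4 : ∀ z ∈ Set.uIoc (0:ℝ) eta,
      |∫ s in (0:ℝ)..z, ∫ τ in z..(2 * z - s),
        ft ((τ - s) / 2) (z - (τ + s) / 2) * H τ s| ≤ fb * Q * eta := by
    intro z hz
    rw [Set.uIoc_of_le h1] at hz
    have key : ∀ s ∈ Set.uIoc (0:ℝ) z,
        |∫ τ in z..(2 * z - s), ft ((τ - s) / 2) (z - (τ + s) / 2) * H τ s| ≤ fb * Q := by
      intro s hs
      rw [Set.uIoc_of_le hz.1.le] at hs
      refine innerBound (by linarith [hs.2] : z ≤ 2 * z - s) (c := s)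
        (by linarith [hz.1, hs.1]) (by linarith [hz.2] : 2 * z - s + s ≤ u) hfb hA ?_
      intro τ hτ
      rw [Set.uIoc_of_le (by linarith [hs.2] : z ≤ 2 * z - s)] at hτ
      rw [abs_mul]
      have c1 : s ≤ τ := by linarith [hs.2, hτ.1]
      have c2 : τ + s ≤ 2 := by linarith [hτ.2, hz.2]
      have e1 : |ft ((τ - s) / 2) (z - (τ + s) / 2)| ≤ fb := by
        refine hft _ _ (by linarith) (by linarith [hτ.2, hz.2, hs.1]) ?_ ?_
        · linarith [hτ.2]
        · linarith [hτ.1, hs.1, hz.2]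
      have e2 : |H τ s| ≤ A * (τ + s) ^ k :=
        hH τ s hs.1.le c1 c2 (by linarith [hs.2, hz.2])
      exact mul_le_mul e1 e2 (abs_nonneg _) hfb
    have h5 := absIntBound key
    rw [sub_zero, abs_of_nonneg hz.1.le] at h5
    refine h5.trans ?_
    have : 0 ≤ fb * Q := mul_nonneg hfb hQ0
    nlinarith [hz.2]
  have hT4 : |∫ z in (0:ℝ)..eta, ∫ s in (0:ℝ)..z, ∫ τ in z..(2 * z - s),
      ft ((τ - s) / 2) (z - (τ + s) / 2) * H τ s| ≤ fb * Q * eta * eta := by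
    have := absIntBound hI4
    rwa [sub_zero, abs_of_nonneg h1] at this
  -- assemble
  rw [Phi]
  have habs : ∀ x y : ℝ, |x + y| ≤ |x| + |y| := fun x y => abs_add_le x y
  calc |(1 / 4) * (∫ tau in eta..xi, ∫ s in (0:ℝ)..eta, mutld lam0 ct tau s * H tau s)
    + (1 / 2) * (∫ tau in (0:ℝ)..eta, ∫ s in (0:ℝ)..tau, mutld lam0 ct tau s * H tau s)
    + (1 / 4) * (∫ z in eta..xi, ∫ s in (0:ℝ)..eta, ∫ tau in z..(z + eta - s),
        ft ((tau - s) / 2) (z - (tau + s) / 2) * H tau s)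
    + (1 / 2) * (∫ z in (0:ℝ)..eta, ∫ s in (0:ℝ)..z, ∫ tau in z..(2 * z - s),
        ft ((tau - s) / 2) (z - (tau + s) / 2) * H tau s)|
      ≤ (1/4) * (Lb * Q * (xi - eta)) + (1/2) * (Lb * Q * eta)
        + (1/4) * (fb * Q * eta * (xi - eta)) + (1/2) * (fb * Q * eta * eta) := by
        have q : ∀ c X B : ℝ, 0 ≤ c → |X| ≤ B → |c * X| ≤ c * B := fun c X B hc h => by
          rw [abs_mul, abs_of_nonneg hc]; exact mul_le_mul_of_nonneg_left h hc
        refine le_trans (abs_add_le _ _) (add_le_add (le_trans (abs_add_le _ _)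
          (add_le_add (le_trans (abs_add_le _ _) (add_le_add ?_ ?_)) ?_)) ?_)
        · exact q _ _ _ (by norm_num) hT1
        · exact q _ _ _ (by norm_num) hT2
        · exact q _ _ _ (by norm_num) hT3
        · exact q _ _ _ (by norm_num) hT4
    _ ≤ (Lb + fb) / 2 * A * (u ^ (k + 1) / (k + 1)) := by
        have e : (1/4:ℝ) * (Lb * Q * (xi - eta)) + (1/2) * (Lb * Q * eta)
          + (1/4) * (fb * Q * eta * (xi - eta)) + (1/2) * (fb * Q * eta * eta)
          = Q * (Lb * (u / 4) + fb * (eta * u / 4)) := by rw [hu]; ring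
        rw [e]
        have : Lb * (u / 4) + fb * (eta * u / 4) ≤ Lb * (1/2) + fb * (1/2) := by
          have h5 : eta * u ≤ 2 := by nlinarith [hu0, hu2, h1, h2]
          have h6 : u / 4 ≤ 1/2 := by linarith
          have h7 : eta * u / 4 ≤ 1/2 := by nlinarith [h5]
          exact add_le_add (by nlinarith) (by nlinarith)
        calc Q * (Lb * (u / 4) + fb * (eta * u / 4)) ≤ Q * (Lb * (1/2) + fb * (1/2)) := by
              exact mul_le_mul_of_nonneg_left this hQ0
          _ = (Lb + fb) / 2 * A * (u ^ (k + 1) / (k + 1)) := by rw [hQ]; ring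

end Helpers
section Cont

variable (lam0 : ℝ) {ct : ℝ → ℝ} {ft H : ℝ → ℝ → ℝ}

lemma contMuH (hct : Continuous ct) (hH : Continuous (Function.uncurry H)) :
    Continuous fun q : ℝ × ℝ => mutld lam0 ct q.1 q.2 * H q.1 q.2 := by
  have h1 : Continuous fun q : ℝ × ℝ => mutld lam0 ct q.1 q.2 := by
    unfold mutld; fun_prop
  exact h1.mul hH

lemma contT1inner (hct : Continuous ct) (hH : Continuous (Function.uncurry H)) :
    Continuous fun q : (ℝ × ℝ) × ℝ =>
      ∫ s in (0:ℝ)..q.1.2, mutld lam0 ct q.2 s * H q.2 s := by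
  refine contParam (F := fun (q : (ℝ × ℝ) × ℝ) s => mutld lam0 ct q.2 s * H q.2 s) ?_ ?_ ?_
  · exact (contMuH lam0 hct hH).comp
      (show Continuous fun w : ((ℝ × ℝ) × ℝ) × ℝ => (w.1.2, w.2) by fun_prop)
  · exact continuous_const
  · fun_prop

lemma contT2inner (hct : Continuous ct) (hH : Continuous (Function.uncurry H)) :
    Continuous fun q : (ℝ × ℝ) × ℝ =>
      ∫ s in (0:ℝ)..q.2, mutld lam0 ct q.2 s * H q.2 s := by
  refine contParam (F := fun (q : (ℝ × ℝ) × ℝ) s => mutld lam0 ct q.2 s * H q.2 s) ?_ ?_ ?_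
  · exact (contMuH lam0 hct hH).comp
      (show Continuous fun w : ((ℝ × ℝ) × ℝ) × ℝ => (w.1.2, w.2) by fun_prop)
  · exact continuous_const
  · fun_prop

lemma contT3tau (hft : Continuous (Function.uncurry ft)) (hH : Continuous (Function.uncurry H)) :
    Continuous fun r : ((ℝ × ℝ) × ℝ) × ℝ =>
      ∫ tau in r.1.2..(r.1.2 + r.1.1.2 - r.2),
        ft ((tau - r.2) / 2) (r.1.2 - (tau + r.2) / 2) * H tau r.2 := by
  refine contParam (F := fun (r : ((ℝ × ℝ) × ℝ) × ℝ) tau =>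
      ft ((tau - r.2) / 2) (r.1.2 - (tau + r.2) / 2) * H tau r.2) ?_ ?_ ?_
  · refine Continuous.mul ?_ ?_
    · exact hft.comp (show Continuous fun w : (((ℝ × ℝ) × ℝ) × ℝ) × ℝ =>
        ((w.2 - w.1.2) / 2, w.1.1.2 - (w.2 + w.1.2) / 2) by fun_prop)
    · exact hH.comp (show Continuous fun w : (((ℝ × ℝ) × ℝ) × ℝ) × ℝ =>
        (w.2, w.1.2) by fun_prop)
  · fun_prop
  · fun_prop

lemma contT3s (hft : Continuous (Function.uncurry ft)) (hH : Continuous (Function.uncurry H)) :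
    Continuous fun q : (ℝ × ℝ) × ℝ =>
      ∫ s in (0:ℝ)..q.1.2, ∫ tau in q.2..(q.2 + q.1.2 - s),
        ft ((tau - s) / 2) (q.2 - (tau + s) / 2) * H tau s := by
  refine contParam (F := fun (q : (ℝ × ℝ) × ℝ) s =>
      ∫ tau in q.2..(q.2 + q.1.2 - s), ft ((tau - s) / 2) (q.2 - (tau + s) / 2) * H tau s)
      ?_ ?_ ?_
  · exact contT3tau hft hH
  · exact continuous_const
  · fun_prop

lemma contT4tau (hft : Continuous (Function.uncurry ft)) (hH : Continuous (Function.uncurry H)) :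
    Continuous fun r : ((ℝ × ℝ) × ℝ) × ℝ =>
      ∫ tau in r.1.2..(2 * r.1.2 - r.2),
        ft ((tau - r.2) / 2) (r.1.2 - (tau + r.2) / 2) * H tau r.2 := by
  refine contParam (F := fun (r : ((ℝ × ℝ) × ℝ) × ℝ) tau =>
      ft ((tau - r.2) / 2) (r.1.2 - (tau + r.2) / 2) * H tau r.2) ?_ ?_ ?_
  · refine Continuous.mul ?_ ?_
    · exact hft.comp (show Continuous fun w : (((ℝ × ℝ) × ℝ) × ℝ) × ℝ =>
        ((w.2 - w.1.2) / 2, w.1.1.2 - (w.2 + w.1.2) / 2) by fun_prop)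
    · exact hH.comp (show Continuous fun w : (((ℝ × ℝ) × ℝ) × ℝ) × ℝ =>
        (w.2, w.1.2) by fun_prop)
  · fun_prop
  · fun_prop

lemma contT4s (hft : Continuous (Function.uncurry ft)) (hH : Continuous (Function.uncurry H)) :
    Continuous fun q : (ℝ × ℝ) × ℝ =>
      ∫ s in (0:ℝ)..q.2, ∫ tau in q.2..(2 * q.2 - s),
        ft ((tau - s) / 2) (q.2 - (tau + s) / 2) * H tau s := by
  refine contParam (F := fun (q : (ℝ × ℝ) × ℝ) s =>
      ∫ tau in q.2..(2 * q.2 - s), ft ((tau - s) / 2) (q.2 - (tau + s) / 2) * H tau s) ?_ ?_ ?_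
  · exact contT4tau hft hH
  · exact continuous_const
  · fun_prop

lemma Phi_cont (hct : Continuous ct) (hft : Continuous (Function.uncurry ft))
    (hH : Continuous (Function.uncurry H)) :
    Continuous fun p : ℝ × ℝ => Phi lam0 ct ft H p.1 p.2 := by
  unfold Phi
  refine (((Continuous.mul continuous_const ?_).add (Continuous.mul continuous_const ?_)).add
    (Continuous.mul continuous_const ?_)).add (Continuous.mul continuous_const ?_)
  · refine contParam (F := fun (p : ℝ × ℝ) tau =>
      ∫ s in (0:ℝ)..p.2, mutld lam0 ct tau s * H tau s) ?_ ?_ ?_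
    · exact contT1inner lam0 hct hH
    · exact continuous_snd
    · exact continuous_fst
  · refine contParam (F := fun (p : ℝ × ℝ) tau =>
      ∫ s in (0:ℝ)..tau, mutld lam0 ct tau s * H tau s) ?_ ?_ ?_
    · exact contT2inner lam0 hct hH
    · exact continuous_const
    · exact continuous_snd
  · refine contParam (F := fun (p : ℝ × ℝ) z =>
      ∫ s in (0:ℝ)..p.2, ∫ tau in z..(z + p.2 - s),
        ft ((tau - s) / 2) (z - (tau + s) / 2) * H tau s) ?_ ?_ ?_
    · exact contT3s hft hH
    · exact continuous_snd
    · exact continuous_fst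
  · refine contParam (F := fun (p : ℝ × ℝ) z =>
      ∫ s in (0:ℝ)..z, ∫ tau in z..(2 * z - s),
        ft ((tau - s) / 2) (z - (tau + s) / 2) * H tau s) ?_ ?_ ?_
    · exact contT4s hft hH
    · exact continuous_const
    · exact continuous_snd

lemma contG0a (hft : Continuous (Function.uncurry ft)) :
    Continuous fun q : (ℝ × ℝ) × ℝ =>
      ∫ s in (0:ℝ)..q.1.2, ft ((q.2 + s) / 2) ((q.2 - s) / 2) := by
  refine contParam (F := fun (q : (ℝ × ℝ) × ℝ) s => ft ((q.2 + s) / 2) ((q.2 - s) / 2)) ?_ ?_ ?_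
  · exact hft.comp (show Continuous fun w : ((ℝ × ℝ) × ℝ) × ℝ =>
      ((w.1.2 + w.2) / 2, (w.1.2 - w.2) / 2) by fun_prop)
  · exact continuous_const
  · fun_prop

lemma contG0b (hft : Continuous (Function.uncurry ft)) :
    Continuous fun q : (ℝ × ℝ) × ℝ =>
      ∫ s in (0:ℝ)..q.2, ft ((q.2 + s) / 2) ((q.2 - s) / 2) := by
  refine contParam (F := fun (q : (ℝ × ℝ) × ℝ) s => ft ((q.2 + s) / 2) ((q.2 - s) / 2)) ?_ ?_ ?_
  · exact hft.comp (show Continuous fun w : ((ℝ × ℝ) × ℝ) × ℝ =>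
      ((w.1.2 + w.2) / 2, (w.1.2 - w.2) / 2) by fun_prop)
  · exact continuous_const
  · fun_prop

lemma Gzero_cont (hft : Continuous (Function.uncurry ft)) :
    Continuous fun p : ℝ × ℝ => Gzero lam0 ft p.1 p.2 := by
  unfold Gzero
  refine (Continuous.add (Continuous.add (by fun_prop) (Continuous.mul continuous_const ?_))
    (Continuous.mul continuous_const ?_))
  · refine contParam (F := fun (p : ℝ × ℝ) tau =>
      ∫ s in (0:ℝ)..p.2, ft ((tau + s) / 2) ((tau - s) / 2)) ?_ ?_ ?_
    · exact contG0a hft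
    · exact continuous_snd
    · exact continuous_fst
  · refine contParam (F := fun (p : ℝ × ℝ) tau =>
      ∫ s in (0:ℝ)..tau, ft ((tau + s) / 2) ((tau - s) / 2)) ?_ ?_ ?_
    · exact contG0b hft
    · exact continuous_const
    · exact continuous_snd

lemma Gseq_cont (hct : Continuous ct) (hft : Continuous (Function.uncurry ft)) :
    ∀ n : ℕ, Continuous fun p : ℝ × ℝ => Gseq lam0 ct ft n p.1 p.2 := by
  intro n
  induction n with
  | zero => exact Gzero_cont lam0 hft
  | succ n ih =>
      show Continuous fun p : ℝ × ℝ =>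
        Gzero lam0 ft p.1 p.2 + Phi lam0 ct ft (Gseq lam0 ct ft n) p.1 p.2
      exact (Gzero_cont lam0 hft).add (Phi_cont lam0 hct hft ih)

end Cont
section Sub

lemma Phi_sub (lam0 : ℝ) {ct : ℝ → ℝ} {ft H1 H2 : ℝ → ℝ → ℝ}
    (hct : Continuous ct) (hft : Continuous (Function.uncurry ft))
    (hH1 : Continuous (Function.uncurry H1)) (hH2 : Continuous (Function.uncurry H2))
    (xi eta : ℝ) :
    Phi lam0 ct ft H1 xi eta - Phi lam0 ct ft H2 xi eta
      = Phi lam0 ct ft (fun a b => H1 a b - H2 a b) xi eta := by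
  have muInner : ∀ (H : ℝ → ℝ → ℝ), Continuous (Function.uncurry H) → ∀ tau a b : ℝ,
      IntervalIntegrable (fun s => mutld lam0 ct tau s * H tau s) MeasureTheory.volume a b := by
    intro H hH tau a b
    exact (((contMuH lam0 hct hH).comp
      (show Continuous fun s : ℝ => (tau, s) by fun_prop))).intervalIntegrable _ _
  have out1 : ∀ (H : ℝ → ℝ → ℝ), Continuous (Function.uncurry H) →
      IntervalIntegrable (fun tau => ∫ s in (0:ℝ)..eta, mutld lam0 ct tau s * H tau s)
        MeasureTheory.volume eta xi := by
    intro H hH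
    exact ((contT1inner lam0 hct hH).comp
      (show Continuous fun tau : ℝ => (((xi, eta) : ℝ × ℝ), tau) by fun_prop)).intervalIntegrable _ _
  have out2 : ∀ (H : ℝ → ℝ → ℝ), Continuous (Function.uncurry H) →
      IntervalIntegrable (fun tau => ∫ s in (0:ℝ)..tau, mutld lam0 ct tau s * H tau s)
        MeasureTheory.volume 0 eta := by
    intro H hH
    exact ((contT2inner lam0 hct hH).comp
      (show Continuous fun tau : ℝ => (((xi, eta) : ℝ × ℝ), tau) by fun_prop)).intervalIntegrable _ _
  have tauInt3 : ∀ (H : ℝ → ℝ → ℝ), Continuous (Function.uncurry H) → ∀ z s a b : ℝ,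
      IntervalIntegrable (fun tau => ft ((tau - s) / 2) (z - (tau + s) / 2) * H tau s)
        MeasureTheory.volume a b := by
    intro H hH z s a b
    refine Continuous.intervalIntegrable ?_ _ _
    exact (hft.comp (show Continuous fun tau : ℝ => ((tau - s) / 2, z - (tau + s) / 2)
      by fun_prop)).mul (hH.comp (show Continuous fun tau : ℝ => (tau, s) by fun_prop))
  have sInt3 : ∀ (H : ℝ → ℝ → ℝ), Continuous (Function.uncurry H) → ∀ z : ℝ,
      IntervalIntegrable (fun s => ∫ tau in z..(z + eta - s),
        ft ((tau - s) / 2) (z - (tau + s) / 2) * H tau s) MeasureTheory.volume 0 eta := by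
    intro H hH z
    exact ((contT3tau hft hH).comp
      (show Continuous fun s : ℝ => ((((xi, eta) : ℝ × ℝ), z), s) by fun_prop)).intervalIntegrable _ _
  have zInt3 : ∀ (H : ℝ → ℝ → ℝ), Continuous (Function.uncurry H) →
      IntervalIntegrable (fun z => ∫ s in (0:ℝ)..eta, ∫ tau in z..(z + eta - s),
        ft ((tau - s) / 2) (z - (tau + s) / 2) * H tau s) MeasureTheory.volume eta xi := by
    intro H hH
    exact ((contT3s hft hH).comp
      (show Continuous fun z : ℝ => (((xi, eta) : ℝ × ℝ), z) by fun_prop)).intervalIntegrable _ _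
  have sInt4 : ∀ (H : ℝ → ℝ → ℝ), Continuous (Function.uncurry H) → ∀ z : ℝ,
      IntervalIntegrable (fun s => ∫ tau in z..(2 * z - s),
        ft ((tau - s) / 2) (z - (tau + s) / 2) * H tau s) MeasureTheory.volume 0 z := by
    intro H hH z
    exact ((contT4tau hft hH).comp
      (show Continuous fun s : ℝ => ((((xi, eta) : ℝ × ℝ), z), s) by fun_prop)).intervalIntegrable _ _
  have zInt4 : ∀ (H : ℝ → ℝ → ℝ), Continuous (Function.uncurry H) →
      IntervalIntegrable (fun z => ∫ s in (0:ℝ)..z, ∫ tau in z..(2 * z - s),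
        ft ((tau - s) / 2) (z - (tau + s) / 2) * H tau s) MeasureTheory.volume 0 eta := by
    intro H hH
    exact ((contT4s hft hH).comp
      (show Continuous fun z : ℝ => (((xi, eta) : ℝ × ℝ), z) by fun_prop)).intervalIntegrable _ _
  have T1eq : (∫ tau in eta..xi, ∫ s in (0:ℝ)..eta, mutld lam0 ct tau s * H1 tau s)
      - (∫ tau in eta..xi, ∫ s in (0:ℝ)..eta, mutld lam0 ct tau s * H2 tau s)
      = ∫ tau in eta..xi, ∫ s in (0:ℝ)..eta, mutld lam0 ct tau s * (H1 tau s - H2 tau s) := by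
    rw [← intervalIntegral.integral_sub (out1 H1 hH1) (out1 H2 hH2)]
    refine intervalIntegral.integral_congr fun tau _ => ?_
    rw [← intervalIntegral.integral_sub (muInner H1 hH1 tau 0 eta) (muInner H2 hH2 tau 0 eta)]
    exact intervalIntegral.integral_congr fun s _ => (mul_sub _ _ _).symm
  have T2eq : (∫ tau in (0:ℝ)..eta, ∫ s in (0:ℝ)..tau, mutld lam0 ct tau s * H1 tau s)
      - (∫ tau in (0:ℝ)..eta, ∫ s in (0:ℝ)..tau, mutld lam0 ct tau s * H2 tau s)
      = ∫ tau in (0:ℝ)..eta, ∫ s in (0:ℝ)..tau, mutld lam0 ct tau s * (H1 tau s - H2 tau s) := by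
    rw [← intervalIntegral.integral_sub (out2 H1 hH1) (out2 H2 hH2)]
    refine intervalIntegral.integral_congr fun tau _ => ?_
    rw [← intervalIntegral.integral_sub (muInner H1 hH1 tau 0 tau) (muInner H2 hH2 tau 0 tau)]
    exact intervalIntegral.integral_congr fun s _ => (mul_sub _ _ _).symm
  have T3eq : (∫ z in eta..xi, ∫ s in (0:ℝ)..eta, ∫ tau in z..(z + eta - s),
        ft ((tau - s) / 2) (z - (tau + s) / 2) * H1 tau s)
      - (∫ z in eta..xi, ∫ s in (0:ℝ)..eta, ∫ tau in z..(z + eta - s),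
        ft ((tau - s) / 2) (z - (tau + s) / 2) * H2 tau s)
      = ∫ z in eta..xi, ∫ s in (0:ℝ)..eta, ∫ tau in z..(z + eta - s),
        ft ((tau - s) / 2) (z - (tau + s) / 2) * (H1 tau s - H2 tau s) := by
    rw [← intervalIntegral.integral_sub (zInt3 H1 hH1) (zInt3 H2 hH2)]
    refine intervalIntegral.integral_congr fun z _ => ?_
    rw [← intervalIntegral.integral_sub (sInt3 H1 hH1 z) (sInt3 H2 hH2 z)]
    refine intervalIntegral.integral_congr fun s _ => ?_
    rw [← intervalIntegral.integral_sub (tauInt3 H1 hH1 z s _ _) (tauInt3 H2 hH2 z s _ _)]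
    exact intervalIntegral.integral_congr fun tau _ => (mul_sub _ _ _).symm
  have T4eq : (∫ z in (0:ℝ)..eta, ∫ s in (0:ℝ)..z, ∫ tau in z..(2 * z - s),
        ft ((tau - s) / 2) (z - (tau + s) / 2) * H1 tau s)
      - (∫ z in (0:ℝ)..eta, ∫ s in (0:ℝ)..z, ∫ tau in z..(2 * z - s),
        ft ((tau - s) / 2) (z - (tau + s) / 2) * H2 tau s)
      = ∫ z in (0:ℝ)..eta, ∫ s in (0:ℝ)..z, ∫ tau in z..(2 * z - s),
        ft ((tau - s) / 2) (z - (tau + s) / 2) * (H1 tau s - H2 tau s) := by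
    rw [← intervalIntegral.integral_sub (zInt4 H1 hH1) (zInt4 H2 hH2)]
    refine intervalIntegral.integral_congr fun z _ => ?_
    rw [← intervalIntegral.integral_sub (sInt4 H1 hH1 z) (sInt4 H2 hH2 z)]
    refine intervalIntegral.integral_congr fun s _ => ?_
    rw [← intervalIntegral.integral_sub (tauInt3 H1 hH1 z s _ _) (tauInt3 H2 hH2 z s _ _)]
    exact intervalIntegral.integral_congr fun tau _ => (mul_sub _ _ _).symm
  unfold Phi
  linear_combination (1/4 : ℝ) * T1eq + (1/2 : ℝ) * T2eq + (1/4 : ℝ) * T3eq + (1/2 : ℝ) * T4eq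

end Sub
section GZB

lemma Gzero_bound (lam0 : ℝ) {ft : ℝ → ℝ → ℝ} {Lb fb : ℝ}
    (hlam0 : 0 ≤ lam0) (hlam : lam0 ≤ Lb) (hfb : 0 ≤ fb)
    (hft : ∀ x y : ℝ, 0 ≤ x → x ≤ 1 → 0 ≤ y → y ≤ 1 → |ft x y| ≤ fb) :
    ∀ τ s : ℝ, 0 ≤ s → s ≤ τ → τ + s ≤ 2 → s ≤ 1 →
      |Gzero lam0 ft τ s| ≤ (Lb + fb) / 2 * (τ + s) := by
  intro τ s hs0 hst hts2 hs1
  have hI : |∫ w in s..τ, ∫ r in (0:ℝ)..s, ft ((w + r) / 2) ((w - r) / 2)|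
      ≤ fb * s * (τ - s) := by
    have inner : ∀ w ∈ Set.uIoc s τ,
        |∫ r in (0:ℝ)..s, ft ((w + r) / 2) ((w - r) / 2)| ≤ fb * s := by
      intro w hw
      rw [Set.uIoc_of_le hst] at hw
      have h := absIntBound (G := fun r => ft ((w + r) / 2) ((w - r) / 2)) (C := fb)
        (fun r hr => by
          rw [Set.uIoc_of_le hs0] at hr
          exact hft ((w + r) / 2) ((w - r) / 2) (by linarith [hw.1, hr.1])
            (by linarith [hw.2, hr.2]) (by linarith [hw.1, hr.2]) (by linarith [hw.2, hr.1]))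
      rwa [sub_zero, abs_of_nonneg hs0] at h
    have h := absIntBound inner
    rw [abs_of_nonneg (by linarith : (0:ℝ) ≤ τ - s)] at h
    linarith [h]
  have hJ : |∫ w in (0:ℝ)..s, ∫ r in (0:ℝ)..w, ft ((w + r) / 2) ((w - r) / 2)|
      ≤ fb * s * s := by
    have inner : ∀ w ∈ Set.uIoc (0:ℝ) s,
        |∫ r in (0:ℝ)..w, ft ((w + r) / 2) ((w - r) / 2)| ≤ fb * s := by
      intro w hw
      rw [Set.uIoc_of_le hs0] at hw
      have h := absIntBound (G := fun r => ft ((w + r) / 2) ((w - r) / 2)) (C := fb)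
        (fun r hr => by
          rw [Set.uIoc_of_le hw.1.le] at hr
          exact hft ((w + r) / 2) ((w - r) / 2) (by linarith [hw.1, hr.1])
            (by linarith [hw.2, hr.2]) (by linarith [hr.2]) (by linarith [hw.2, hr.1]))
      rw [sub_zero, abs_of_nonneg hw.1.le] at h
      exact h.trans (by nlinarith [hw.2])
    have h := absIntBound inner
    rwa [sub_zero, abs_of_nonneg hs0, mul_comm (fb * s) s, mul_comm s (fb * s)] at h
  rw [Gzero]
  refine le_trans (le_trans (abs_add_le _ _) (add_le_add_left (abs_add_le _ _) _)) ?_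
  have e3 : |lam0 / 4 * (τ + s)| = lam0 / 4 * (τ + s) :=
    abs_of_nonneg (mul_nonneg (by linarith) (by linarith))
  rw [abs_mul (1/4 : ℝ), abs_mul (1/2 : ℝ), e3, abs_of_pos (by norm_num : (0:ℝ) < 1/4),
    abs_of_pos (by norm_num : (0:ℝ) < 1/2)]
  nlinarith [hI, hJ,
    mul_nonneg (mul_nonneg hfb (by linarith : (0:ℝ) ≤ 1 - s)) (by linarith : (0:ℝ) ≤ τ + s),
    mul_nonneg (by linarith : (0:ℝ) ≤ Lb - lam0) (by linarith : (0:ℝ) ≤ τ + s)]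

lemma Gzero_congr (lam0 : ℝ) {f ft : ℝ → ℝ → ℝ}
    (hEq : ∀ x y : ℝ, 0 ≤ x → x ≤ 1 → 0 ≤ y → y ≤ 1 → f x y = ft x y) :
    ∀ τ s : ℝ, 0 ≤ s → s ≤ τ → τ + s ≤ 2 → s ≤ 1 →
      Gzero lam0 f τ s = Gzero lam0 ft τ s := by
  intro τ s hs0 hst hts2 hs1
  unfold Gzero
  have h1 : (∫ w in s..τ, ∫ r in (0:ℝ)..s, f ((w + r) / 2) ((w - r) / 2))
      = ∫ w in s..τ, ∫ r in (0:ℝ)..s, ft ((w + r) / 2) ((w - r) / 2) := by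
    refine intervalIntegral.integral_congr fun w hw => ?_
    rw [Set.uIcc_of_le hst] at hw
    refine intervalIntegral.integral_congr fun r hr => ?_
    rw [Set.uIcc_of_le hs0] at hr
    exact hEq _ _ (by linarith [hw.1, hr.1]) (by linarith [hw.2, hr.2])
      (by linarith [hw.1, hr.2]) (by linarith [hw.2, hr.1])
  have h2 : (∫ w in (0:ℝ)..s, ∫ r in (0:ℝ)..w, f ((w + r) / 2) ((w - r) / 2))
      = ∫ w in (0:ℝ)..s, ∫ r in (0:ℝ)..w, ft ((w + r) / 2) ((w - r) / 2) := by
    refine intervalIntegral.integral_congr fun w hw => ?_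
    rw [Set.uIcc_of_le hs0] at hw
    refine intervalIntegral.integral_congr fun r hr => ?_
    rw [Set.uIcc_of_le hw.1] at hr
    exact hEq _ _ (by linarith [hw.1, hr.1]) (by linarith [hw.2, hr.2])
      (by linarith [hr.2]) (by linarith [hw.2, hr.1])
  rw [h1, h2]

lemma Phi_congr (lam0 : ℝ) {c1 ct : ℝ → ℝ} {f ft Ha Hb : ℝ → ℝ → ℝ}
    (hcEq : ∀ x : ℝ, 0 ≤ x → x ≤ 1 → c1 x = ct x)
    (hfEq : ∀ x y : ℝ, 0 ≤ x → x ≤ 1 → 0 ≤ y → y ≤ 1 → f x y = ft x y)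
    (hHEq : ∀ τ s : ℝ, 0 ≤ s → s ≤ τ → τ + s ≤ 2 → s ≤ 1 → Ha τ s = Hb τ s)
    {xi eta : ℝ} (hE : (xi, eta) ∈ Eset) :
    Phi lam0 c1 f Ha xi eta = Phi lam0 ct ft Hb xi eta := by
  obtain ⟨h1, h2, h3, h4⟩ := hE
  simp only at h1 h2 h3 h4
  have hmu : ∀ τ s : ℝ, 0 ≤ s → s ≤ τ → τ + s ≤ 2 → s ≤ 1 →
      mutld lam0 c1 τ s * Ha τ s = mutld lam0 ct τ s * Hb τ s := by
    intro τ s c1' c2' c3' c4'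
    unfold mutld
    rw [hcEq ((τ + s)/2) (by linarith) (by linarith),
      hcEq ((τ - s)/2) (by linarith) (by linarith), hHEq τ s c1' c2' c3' c4']
  have hfH : ∀ z τ s : ℝ, 0 ≤ s → s ≤ τ → τ + s ≤ 2 → s ≤ 1 →
      s ≤ z → z ≤ 2 → τ + s ≤ z + 1 + 1 → z + z ≥ τ + s → z ≤ τ →
      f ((τ - s) / 2) (z - (τ + s) / 2) * Ha τ s
        = ft ((τ - s) / 2) (z - (τ + s) / 2) * Hb τ s := by
    intro z τ s c1' c2' c3' c4' c5' c6' c7' c8' c9'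
    rw [hfEq _ _ (by linarith) (by linarith) (by linarith) (by linarith),
      hHEq τ s c1' c2' c3' c4']
  unfold Phi
  congr 1
  · congr 1
    · congr 1
      · congr 1
        refine intervalIntegral.integral_congr fun τ hτ => ?_
        rw [Set.uIcc_of_le h3] at hτ
        refine intervalIntegral.integral_congr fun s hs => ?_
        rw [Set.uIcc_of_le h1] at hs
        exact hmu τ s hs.1 (by linarith [hτ.1, hs.2]) (by linarith [hτ.2, hs.2])
          (by linarith [hs.2])
      · congr 1
        refine intervalIntegral.integral_congr fun τ hτ => ?_
        rw [Set.uIcc_of_le h1] at hτ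
        refine intervalIntegral.integral_congr fun s hs => ?_
        rw [Set.uIcc_of_le hτ.1] at hs
        exact hmu τ s hs.1 hs.2 (by linarith [hτ.2, hs.2]) (by linarith [hτ.2, hs.2])
    · congr 1
      refine intervalIntegral.integral_congr fun z hz => ?_
      rw [Set.uIcc_of_le h3] at hz
      refine intervalIntegral.integral_congr fun s hs => ?_
      rw [Set.uIcc_of_le h1] at hs
      refine intervalIntegral.integral_congr fun τ hτ => ?_
      rw [Set.uIcc_of_le (by linarith [hs.2] : z ≤ z + eta - s)] at hτ
      exact hfH z τ s hs.1 (by linarith [hz.1, hs.2, hτ.1]) (by linarith [hτ.2, hz.2])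
        (by linarith [hs.2]) (by linarith [hz.1, hs.2]) (by linarith [hz.2])
        (by linarith [hτ.2]) (by linarith [hτ.2, hz.1]) (by linarith [hτ.1])
  · congr 1
    refine intervalIntegral.integral_congr fun z hz => ?_
    rw [Set.uIcc_of_le h1] at hz
    refine intervalIntegral.integral_congr fun s hs => ?_
    rw [Set.uIcc_of_le hz.1] at hs
    refine intervalIntegral.integral_congr fun τ hτ => ?_
    rw [Set.uIcc_of_le (by linarith [hs.2] : z ≤ 2 * z - s)] at hτ
    exact hfH z τ s hs.1 (by linarith [hs.2, hτ.1]) (by linarith [hτ.2, hz.2])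
      (by linarith [hs.2, hz.2]) (by linarith [hs.2]) (by linarith [hz.2])
      (by linarith [hτ.2, hz.2]) (by linarith [hτ.2]) (by linarith [hτ.1])

lemma Gseq_congr (lam0 : ℝ) {c1 ct : ℝ → ℝ} {f ft : ℝ → ℝ → ℝ}
    (hcEq : ∀ x : ℝ, 0 ≤ x → x ≤ 1 → c1 x = ct x)
    (hfEq : ∀ x y : ℝ, 0 ≤ x → x ≤ 1 → 0 ≤ y → y ≤ 1 → f x y = ft x y) :
    ∀ n : ℕ, ∀ xi eta : ℝ, (xi, eta) ∈ Eset →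
      Gseq lam0 c1 f n xi eta = Gseq lam0 ct ft n xi eta := by
  intro n
  induction n with
  | zero =>
      intro xi eta hE
      obtain ⟨h1, h2, h3, h4⟩ := hE
      simp only at h1 h2 h3 h4
      exact Gzero_congr lam0 hfEq xi eta h1 h3 (by linarith) h2
  | succ n ih =>
      intro xi eta hE
      obtain ⟨h1, h2, h3, h4⟩ := hE
      simp only at h1 h2 h3 h4
      show Gzero lam0 f xi eta + Phi lam0 c1 f (Gseq lam0 c1 f n) xi eta
        = Gzero lam0 ft xi eta + Phi lam0 ct ft (Gseq lam0 ct ft n) xi eta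
      rw [Gzero_congr lam0 hfEq xi eta h1 h3 (by linarith) h2,
        Phi_congr lam0 hcEq hfEq (fun τ s d1 d2 d3 d4 =>
          ih τ s ⟨d1, d4, d2, by simp only; linarith⟩) ⟨h1, h2, h3, h4⟩]

end GZB
/-- Bound on the successive approximation differences:
`|ΔG_n(ξ,η)| ≤ M^(n+2)/(n+1)! (ξ+η)^(n+1)` on `E` for all `n`. -/
theorem DeltaG_bound (lam0 : ℝ) (hlam0 : 0 < lam0)
    (c1 : ℝ → ℝ) (hc1 : ContinuousOn c1 (Icc 0 1))
    (f : ℝ → ℝ → ℝ)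
    (hf : ContinuousOn (fun p : ℝ × ℝ => f p.1 p.2) (Icc 0 1 ×ˢ Icc 0 1)) :
    ∀ n : ℕ, ∀ xi eta : ℝ, (xi, eta) ∈ Eset →
      |Gseq lam0 c1 f (n + 1) xi eta - Gseq lam0 c1 f n xi eta| ≤
        Mconst lam0 c1 f ^ (n + 2) / (Nat.factorial (n + 1) : ℝ) * (xi + eta) ^ (n + 1) := by
  -- continuous extensions via Tietze
  obtain ⟨ctm, hctm⟩ := ContinuousMap.exists_restrict_eq (isClosed_Icc (a := (0:ℝ)) (b := 1))
    ⟨_, hc1.restrict⟩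
  set ct : ℝ → ℝ := fun x => ctm x with hctdef
  have hct : Continuous ct := ctm.continuous
  have hcEq : ∀ x : ℝ, 0 ≤ x → x ≤ 1 → c1 x = ct x := by
    intro x hx0 hx1
    have := ContinuousMap.congr_fun hctm ⟨x, hx0, hx1⟩
    exact this.symm
  obtain ⟨ftm, hftm⟩ := ContinuousMap.exists_restrict_eq
    (IsClosed.prod (isClosed_Icc (a := (0:ℝ)) (b := 1)) (isClosed_Icc (a := (0:ℝ)) (b := 1)))
    ⟨_, hf.restrict⟩
  set ft : ℝ → ℝ → ℝ := fun x y => ftm (x, y) with hftdef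
  have hft : Continuous (Function.uncurry ft) := by
    exact ftm.continuous.comp (by fun_prop)
  have hfEq : ∀ x y : ℝ, 0 ≤ x → x ≤ 1 → 0 ≤ y → y ≤ 1 → f x y = ft x y := by
    intro x y hx0 hx1 hy0 hy1
    have := ContinuousMap.congr_fun hftm ⟨(x, y), ⟨hx0, hx1⟩, ⟨hy0, hy1⟩⟩
    exact this.symm
  -- constants
  set fb : ℝ := fbar f with hfbdef
  set Lb : ℝ := Lambdabar lam0 c1 with hLbdef
  have hbddf : BddAbove ((fun p : ℝ × ℝ => |f p.1 p.2|) '' (Icc (0:ℝ) 1 ×ˢ Icc (0:ℝ) 1)) :=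
    ((isCompact_Icc.prod isCompact_Icc).bddAbove_image hf.abs)
  have hfb_ub : ∀ x y : ℝ, 0 ≤ x → x ≤ 1 → 0 ≤ y → y ≤ 1 → |f x y| ≤ fb := by
    intro x y hx0 hx1 hy0 hy1
    exact le_csSup hbddf ⟨(x, y), ⟨⟨hx0, hx1⟩, ⟨hy0, hy1⟩⟩, rfl⟩
  have hfb0 : 0 ≤ fb :=
    le_trans (abs_nonneg (f 0 0)) (hfb_ub 0 0 le_rfl zero_le_one le_rfl zero_le_one)
  have hft_ub : ∀ x y : ℝ, 0 ≤ x → x ≤ 1 → 0 ≤ y → y ≤ 1 → |ft x y| ≤ fb := by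
    intro x y hx0 hx1 hy0 hy1
    rw [← hfEq x y hx0 hx1 hy0 hy1]
    exact hfb_ub x y hx0 hx1 hy0 hy1
  have hDsub : Dset ⊆ Icc (0:ℝ) 1 ×ˢ Icc (0:ℝ) 1 := by
    rintro ⟨x, y⟩ ⟨d1, d2, d3⟩
    exact ⟨⟨le_trans d1 d2, d3⟩, ⟨d1, le_trans d2 d3⟩⟩
  have hDclosed : IsClosed Dset := by
    show IsClosed ({p : ℝ × ℝ | 0 ≤ p.2} ∩ ({p : ℝ × ℝ | p.2 ≤ p.1} ∩ {p : ℝ × ℝ | p.1 ≤ 1}))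
    exact (isClosed_le continuous_const continuous_snd).inter
      ((isClosed_le continuous_snd continuous_fst).inter
        (isClosed_le continuous_fst continuous_const))
  have hDcompact : IsCompact Dset :=
    (isCompact_Icc.prod isCompact_Icc).of_isClosed_subset hDclosed hDsub
  have hmucont : ContinuousOn (fun p : ℝ × ℝ => |lam0 - c1 p.1 + c1 p.2|) Dset := by
    refine ContinuousOn.abs ?_
    refine ContinuousOn.add (ContinuousOn.sub continuousOn_const ?_) ?_
    · exact hc1.comp continuous_fst.continuousOn
        (fun p hp => ⟨le_trans hp.1 hp.2.1, hp.2.2⟩)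
    · exact hc1.comp continuous_snd.continuousOn
        (fun p hp => ⟨hp.1, le_trans hp.2.1 hp.2.2⟩)
  have hbddmu : BddAbove ((fun p : ℝ × ℝ => |lam0 - c1 p.1 + c1 p.2|) '' Dset) :=
    hDcompact.bddAbove_image hmucont
  have hLb_ub : ∀ τ s : ℝ, 0 ≤ s → s ≤ τ → τ + s ≤ 2 → s ≤ 1 →
      |mutld lam0 ct τ s| ≤ Lb := by
    intro τ s d1 d2 d3 d4
    have hmem : ((τ + s) / 2, (τ - s) / 2) ∈ Dset :=
      ⟨by simp only; linarith, by simp only; linarith, by simp only; linarith⟩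
    have : |mutld lam0 ct τ s| = |lam0 - c1 ((τ + s) / 2) + c1 ((τ - s) / 2)| := by
      rw [mutld, ← hcEq ((τ + s) / 2) (by linarith) (by linarith),
        ← hcEq ((τ - s) / 2) (by linarith) (by linarith)]
    rw [this]
    exact le_trans (le_csSup hbddmu ⟨((τ + s) / 2, (τ - s) / 2), hmem, rfl⟩)
      (le_max_right _ _)
  have hLb0 : 0 ≤ Lb := le_trans hlam0.le (le_max_left _ _)
  have hlamLb : lam0 ≤ Lb := le_max_left _ _
  set M : ℝ := Mconst lam0 c1 f with hMdef
  have hM : (Lb + fb) / 2 = M := by rw [hMdef, Mconst]; ring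
  have hM0 : 0 ≤ M := by rw [← hM]; positivity
  -- bound for the tilde sequence
  have key : ∀ n : ℕ, ∀ xi eta : ℝ, (xi, eta) ∈ Eset →
      |Gseq lam0 ct ft (n + 1) xi eta - Gseq lam0 ct ft n xi eta| ≤
        M ^ (n + 2) / (Nat.factorial (n + 1) : ℝ) * (xi + eta) ^ (n + 1) := by
    intro n
    induction n with
    | zero =>
        intro xi eta hE
        obtain ⟨h1, h2, h3, h4⟩ := hE
        simp only at h1 h2 h3 h4
        have heq : Gseq lam0 ct ft 1 xi eta - Gseq lam0 ct ft 0 xi eta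
            = Phi lam0 ct ft (Gzero lam0 ft) xi eta := by
          show Gzero lam0 ft xi eta + Phi lam0 ct ft (Gseq lam0 ct ft 0) xi eta
            - Gzero lam0 ft xi eta = _
          rw [show Gseq lam0 ct ft 0 = Gzero lam0 ft from rfl]
          ring
        rw [heq]
        have hb := Phi_bound lam0 ct ft (Gzero lam0 ft) hLb0 hfb0 hM0 1
          hLb_ub hft_ub
          (fun τ s d1 d2 d3 d4 => by
            rw [pow_one, ← hM]
            exact Gzero_bound lam0 hlam0.le hlamLb hfb0 hft_ub τ s d1 d2 d3 d4)
          ⟨h1, h2, h3, h4⟩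
        rw [hM] at hb
        refine hb.trans ?_
        have hu0 : (0:ℝ) ≤ xi + eta := by linarith
        have hu2 : xi + eta ≤ 2 := by linarith
        have hsq : (xi + eta) ^ 2 ≤ 2 * (xi + eta) := by nlinarith
        push_cast
        norm_num
        nlinarith [mul_le_mul_of_nonneg_left hsq (mul_nonneg hM0 hM0)]
    | succ n ih =>
        intro xi eta hE
        obtain ⟨h1, h2, h3, h4⟩ := hE
        simp only at h1 h2 h3 h4
        have heq : Gseq lam0 ct ft (n + 2) xi eta - Gseq lam0 ct ft (n + 1) xi eta
            = Phi lam0 ct ft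
              (fun a b => Gseq lam0 ct ft (n + 1) a b - Gseq lam0 ct ft n a b) xi eta := by
          show Gzero lam0 ft xi eta + Phi lam0 ct ft (Gseq lam0 ct ft (n + 1)) xi eta
            - (Gzero lam0 ft xi eta + Phi lam0 ct ft (Gseq lam0 ct ft n) xi eta) = _
          rw [← Phi_sub lam0 (H1 := Gseq lam0 ct ft (n + 1)) (H2 := Gseq lam0 ct ft n)
            hct hft (Gseq_cont lam0 hct hft (n + 1)) (Gseq_cont lam0 hct hft n) xi eta]
          ring
        rw [heq]
        set A : ℝ := M ^ (n + 2) / (Nat.factorial (n + 1) : ℝ) with hAdef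
        have hA0 : 0 ≤ A := div_nonneg (pow_nonneg hM0 _) (Nat.cast_nonneg _)
        have hb := Phi_bound lam0 ct ft
          (fun a b => Gseq lam0 ct ft (n + 1) a b - Gseq lam0 ct ft n a b)
          hLb0 hfb0 hA0 (n + 1) hLb_ub hft_ub
          (fun τ s d1 d2 d3 d4 => ih τ s ⟨d1, d4, d2, by simp only; linarith⟩)
          ⟨h1, h2, h3, h4⟩
        rw [hM] at hb
        refine hb.trans (le_of_eq ?_)
        have hfact : ((Nat.factorial (n + 2) : ℕ) : ℝ)
            = ((n + 2 : ℕ) : ℝ) * ((Nat.factorial (n + 1) : ℕ) : ℝ) := by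
          rw [← Nat.cast_mul]
          norm_cast
        have hfpos : ((Nat.factorial (n + 1) : ℕ) : ℝ) ≠ 0 := by
          exact_mod_cast (Nat.factorial_pos (n + 1)).ne'
        have hc : ((n + 1 : ℕ) : ℝ) + 1 = ((n + 2 : ℕ) : ℝ) := by push_cast; ring
        rw [hAdef, hfact, hc]
        have h2pos : ((n + 2 : ℕ) : ℝ) ≠ 0 := by positivity
        field_simp
        ring
  -- transfer back
  intro n xi eta hE
  rw [Gseq_congr lam0 hcEq hfEq (n + 1) xi eta hE,
    Gseq_congr lam0 hcEq hfEq n xi eta hE]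
  exact key n xi eta hE
end
end

section
/- Let Ḡ : E → ℝ be continuous and satisfy the integral equation Ḡ = G0 + Φ_Ḡ on E, and set δ := max_{(ξ,η)∈E} |Φ_Ḡ(ξ,η)|. Then for every n ∈ ℕ (n ≥ 0) and every (ξ,η) ∈ E, the successive approximations satisfy |G_n(ξ,η) − Ḡ(ξ,η)| ≤ (δ M^n / n!)·(ξ+η)^n, where M := (f̄ + Λ̄)/2. -/
open MeasureTheory Set
open scoped ENNReal

noncomputable section

namespace BK

lemma isClosed_Eset : IsClosed Eset := by
  have : Eset = {p : ℝ × ℝ | 0 ≤ p.2} ∩ {p | p.2 ≤ 1} ∩ {p | p.2 ≤ p.1} ∩ {p | p.1 ≤ 2 - p.2} := by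
    ext p; simp [Eset, Set.mem_setOf_eq]; tauto
  rw [this]
  exact (((isClosed_le continuous_const continuous_snd).inter
    (isClosed_le continuous_snd continuous_const)).inter
    (isClosed_le continuous_snd continuous_fst)).inter
    (isClosed_le continuous_fst (continuous_const.sub continuous_snd))

lemma isClosed_Dset : IsClosed Dset := by
  have : Dset = {p : ℝ × ℝ | 0 ≤ p.2} ∩ {p | p.2 ≤ p.1} ∩ {p | p.1 ≤ 1} := by
    ext p; simp [Dset, Set.mem_setOf_eq]; tauto
  rw [this]
  exact ((isClosed_le continuous_const continuous_snd).inter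
    (isClosed_le continuous_snd continuous_fst)).inter
    (isClosed_le continuous_fst continuous_const)

lemma isCompact_Dset : IsCompact Dset := by
  refine (isCompact_Icc.prod isCompact_Icc :
    IsCompact (Icc (0:ℝ) 1 ×ˢ Icc (0:ℝ) 1)).of_isClosed_subset isClosed_Dset ?_
  rintro ⟨x, y⟩ ⟨h1, h2, h3⟩
  exact ⟨⟨le_trans h1 h2, h3⟩, ⟨h1, le_trans h2 h3⟩⟩

lemma exists_ext {X : Type*} [TopologicalSpace X] [NormalSpace X] {s : Set X} (hs : IsClosed s)
    {f : X → ℝ} (hf : ContinuousOn f s) : ∃ g : X → ℝ, Continuous g ∧ ∀ x ∈ s, g x = f x := by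
  obtain ⟨g, hg⟩ := ContinuousMap.exists_restrict_eq hs ⟨s.restrict f, hf.restrict⟩
  exact ⟨g, g.continuous, fun x hx => congrFun (congrArg ContinuousMap.toFun hg) ⟨x, hx⟩⟩

lemma contParam {X : Type*} [TopologicalSpace X] [FirstCountableTopology X] {f : X → ℝ → ℝ}
    (hf : Continuous f.uncurry) {a b : X → ℝ} (ha : Continuous a) (hb : Continuous b) :
    Continuous fun x => ∫ t in a x..b x, f x t := by
  have key : ∀ x, (∫ t in a x..b x, f x t) =
      (∫ t in (0:ℝ)..b x, f x t) - ∫ t in (0:ℝ)..a x, f x t := by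
    intro x
    have hcont : Continuous (f x) := hf.comp (Continuous.prodMk_right x)
    rw [intervalIntegral.integral_interval_sub_left (hcont.intervalIntegrable _ _)
      (hcont.intervalIntegrable _ _)]
  simp only [key]
  exact (intervalIntegral.continuous_parametric_intervalIntegral_of_continuous hf hb).sub
    (intervalIntegral.continuous_parametric_intervalIntegral_of_continuous hf ha)

lemma int_pow_shift (a b d : ℝ) (n : ℕ) :
    (∫ τ in a..b, (τ + d) ^ n) = ((b + d) ^ (n + 1) - (a + d) ^ (n + 1)) / (n + 1) := by
  rw [intervalIntegral.integral_comp_add_right (fun x => x ^ n) d, integral_pow]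

lemma inner_bound {g1 g2 : ℝ → ℝ} {a b C : ℝ}
    (h1 : IntervalIntegrable g1 volume a b) (h2 : IntervalIntegrable g2 volume a b)
    (hbd : ∀ s ∈ Set.uIoc a b, |g1 s - g2 s| ≤ C) :
    |(∫ s in a..b, g1 s) - ∫ s in a..b, g2 s| ≤ C * |b - a| := by
  have h := intervalIntegral.norm_integral_le_of_norm_le_const
    (f := fun s => g1 s - g2 s) (a := a) (b := b) (C := C) (fun s hs => by
      simpa [Real.norm_eq_abs] using hbd s hs)
  rw [intervalIntegral.integral_sub h1 h2] at h
  simpa [Real.norm_eq_abs] using h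

lemma outer_bound {J1 J2 : ℝ → ℝ} {a b K d : ℝ} {n : ℕ} (hab : a ≤ b)
    (hJ1 : IntervalIntegrable J1 volume a b) (hJ2 : IntervalIntegrable J2 volume a b)
    (hK : 0 ≤ K) (h0 : 0 ≤ a + d)
    (hbd : ∀ τ ∈ Set.Ioc a b, |J1 τ - J2 τ| ≤ K * (τ + d) ^ n) :
    |(∫ τ in a..b, J1 τ) - ∫ τ in a..b, J2 τ| ≤
      K * ((b + d) ^ (n + 1) - (a + d) ^ (n + 1)) / (n + 1) := by
  rw [← intervalIntegral.integral_sub hJ1 hJ2]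
  have hg : IntervalIntegrable (fun τ => K * (τ + d) ^ n) volume a b :=
    (Continuous.intervalIntegrable (by fun_prop) _ _)
  have hae : ∀ᵐ t ∂(volume.restrict (Set.uIoc a b)), ‖J1 t - J2 t‖ ≤ K * (t + d) ^ n := by
    refine (ae_restrict_mem measurableSet_uIoc).mono (fun t ht => ?_)
    rw [Set.uIoc_of_le hab] at ht
    simpa [Real.norm_eq_abs] using hbd t ht
  have := intervalIntegral.norm_integral_le_of_norm_le (f := fun t => J1 t - J2 t) hab
    (Filter.Eventually.of_forall fun t ht => by simpa [Real.norm_eq_abs] using hbd t ht) hg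
  rw [Real.norm_eq_abs] at this
  refine this.trans ?_
  rw [intervalIntegral.integral_const_mul, int_pow_shift]
  have hpow : (a + d) ^ (n + 1) ≤ (b + d) ^ (n + 1) :=
    pow_le_pow_left₀ h0 (by linarith) _
  rw [mul_div_assoc]

end BK

namespace BK

variable {lam0 : ℝ} {c1 c1' : ℝ → ℝ} {f f' H H' : ℝ → ℝ → ℝ}

lemma Gzero_congr (lam0 : ℝ)
    (hf : ∀ x ∈ Icc (0:ℝ) 1, ∀ y ∈ Icc (0:ℝ) 1, f' x y = f x y)
    {xi eta : ℝ} (hE : (xi, eta) ∈ Eset) :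
    Gzero lam0 f' xi eta = Gzero lam0 f xi eta := by
  obtain ⟨he0, he1, hex, hx2⟩ := hE
  simp only at he0 he1 hex hx2
  have h1 : (∫ tau in eta..xi, ∫ s in (0:ℝ)..eta, f' ((tau + s) / 2) ((tau - s) / 2))
      = ∫ tau in eta..xi, ∫ s in (0:ℝ)..eta, f ((tau + s) / 2) ((tau - s) / 2) := by
    apply intervalIntegral.integral_congr
    intro τ hτ
    rw [Set.uIcc_of_le (by linarith)] at hτ
    obtain ⟨hτ1, hτ2⟩ := hτ
    apply intervalIntegral.integral_congr
    intro s hs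
    rw [Set.uIcc_of_le (by linarith)] at hs
    obtain ⟨hs1, hs2⟩ := hs
    exact hf _ ⟨by linarith, by linarith⟩ _ ⟨by linarith, by linarith⟩
  have h2 : (∫ tau in (0:ℝ)..eta, ∫ s in (0:ℝ)..tau, f' ((tau + s) / 2) ((tau - s) / 2))
      = ∫ tau in (0:ℝ)..eta, ∫ s in (0:ℝ)..tau, f ((tau + s) / 2) ((tau - s) / 2) := by
    apply intervalIntegral.integral_congr
    intro τ hτ
    rw [Set.uIcc_of_le (by linarith)] at hτ
    obtain ⟨hτ1, hτ2⟩ := hτ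
    apply intervalIntegral.integral_congr
    intro s hs
    rw [Set.uIcc_of_le (by linarith)] at hs
    obtain ⟨hs1, hs2⟩ := hs
    exact hf _ ⟨by linarith, by linarith⟩ _ ⟨by linarith, by linarith⟩
  unfold Gzero
  rw [h1, h2]

lemma Phi_congr (lam0 : ℝ)
    (hc : ∀ x ∈ Icc (0:ℝ) 1, c1' x = c1 x)
    (hf : ∀ x ∈ Icc (0:ℝ) 1, ∀ y ∈ Icc (0:ℝ) 1, f' x y = f x y)
    (hH : ∀ τ s : ℝ, (τ, s) ∈ Eset → H' τ s = H τ s)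
    {xi eta : ℝ} (hE : (xi, eta) ∈ Eset) :
    Phi lam0 c1' f' H' xi eta = Phi lam0 c1 f H xi eta := by
  obtain ⟨he0, he1, hex, hx2⟩ := hE
  simp only at he0 he1 hex hx2
  have h1 : (∫ tau in eta..xi, ∫ s in (0:ℝ)..eta, mutld lam0 c1' tau s * H' tau s)
      = ∫ tau in eta..xi, ∫ s in (0:ℝ)..eta, mutld lam0 c1 tau s * H tau s := by
    apply intervalIntegral.integral_congr
    intro τ hτ
    rw [Set.uIcc_of_le (by linarith)] at hτ
    obtain ⟨hτ1, hτ2⟩ := hτ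
    apply intervalIntegral.integral_congr
    intro s hs
    rw [Set.uIcc_of_le (by linarith)] at hs
    obtain ⟨hs1, hs2⟩ := hs
    show mutld lam0 c1' τ s * H' τ s = mutld lam0 c1 τ s * H τ s
    unfold mutld
    rw [hc ((τ + s) / 2) ⟨by linarith, by linarith⟩, hc ((τ - s) / 2) ⟨by linarith, by linarith⟩,
      hH τ s ⟨by linarith, by linarith, by linarith, by linarith⟩]
  have h2 : (∫ tau in (0:ℝ)..eta, ∫ s in (0:ℝ)..tau, mutld lam0 c1' tau s * H' tau s)
      = ∫ tau in (0:ℝ)..eta, ∫ s in (0:ℝ)..tau, mutld lam0 c1 tau s * H tau s := by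
    apply intervalIntegral.integral_congr
    intro τ hτ
    rw [Set.uIcc_of_le (by linarith)] at hτ
    obtain ⟨hτ1, hτ2⟩ := hτ
    apply intervalIntegral.integral_congr
    intro s hs
    rw [Set.uIcc_of_le (by linarith)] at hs
    obtain ⟨hs1, hs2⟩ := hs
    show mutld lam0 c1' τ s * H' τ s = mutld lam0 c1 τ s * H τ s
    unfold mutld
    rw [hc ((τ + s) / 2) ⟨by linarith, by linarith⟩, hc ((τ - s) / 2) ⟨by linarith, by linarith⟩,
      hH τ s ⟨by linarith, by linarith, by linarith, by linarith⟩]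
  have h3 : (∫ z in eta..xi, ∫ s in (0:ℝ)..eta, ∫ tau in z..(z + eta - s),
        f' ((tau - s) / 2) (z - (tau + s) / 2) * H' tau s)
      = ∫ z in eta..xi, ∫ s in (0:ℝ)..eta, ∫ tau in z..(z + eta - s),
        f ((tau - s) / 2) (z - (tau + s) / 2) * H tau s := by
    apply intervalIntegral.integral_congr
    intro z hz
    rw [Set.uIcc_of_le (by linarith)] at hz
    obtain ⟨hz1, hz2⟩ := hz
    apply intervalIntegral.integral_congr
    intro s hs
    rw [Set.uIcc_of_le (by linarith)] at hs
    obtain ⟨hs1, hs2⟩ := hs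
    apply intervalIntegral.integral_congr
    intro τ hτ
    rw [Set.uIcc_of_le (by linarith)] at hτ
    obtain ⟨hτ1, hτ2⟩ := hτ
    show f' ((τ - s) / 2) (z - (τ + s) / 2) * H' τ s
        = f ((τ - s) / 2) (z - (τ + s) / 2) * H τ s
    rw [hf ((τ - s) / 2) ⟨by linarith, by linarith⟩ (z - (τ + s) / 2)
        ⟨by linarith, by linarith⟩,
      hH τ s ⟨by linarith, by linarith, by linarith, by linarith⟩]
  have h4 : (∫ z in (0:ℝ)..eta, ∫ s in (0:ℝ)..z, ∫ tau in z..(2 * z - s),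
        f' ((tau - s) / 2) (z - (tau + s) / 2) * H' tau s)
      = ∫ z in (0:ℝ)..eta, ∫ s in (0:ℝ)..z, ∫ tau in z..(2 * z - s),
        f ((tau - s) / 2) (z - (tau + s) / 2) * H tau s := by
    apply intervalIntegral.integral_congr
    intro z hz
    rw [Set.uIcc_of_le (by linarith)] at hz
    obtain ⟨hz1, hz2⟩ := hz
    apply intervalIntegral.integral_congr
    intro s hs
    rw [Set.uIcc_of_le (by linarith)] at hs
    obtain ⟨hs1, hs2⟩ := hs
    apply intervalIntegral.integral_congr
    intro τ hτ
    rw [Set.uIcc_of_le (by linarith)] at hτ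
    obtain ⟨hτ1, hτ2⟩ := hτ
    show f' ((τ - s) / 2) (z - (τ + s) / 2) * H' τ s
        = f ((τ - s) / 2) (z - (τ + s) / 2) * H τ s
    rw [hf ((τ - s) / 2) ⟨by linarith, by linarith⟩ (z - (τ + s) / 2)
        ⟨by linarith, by linarith⟩,
      hH τ s ⟨by linarith, by linarith, by linarith, by linarith⟩]
  unfold Phi
  rw [h1, h2, h3, h4]

lemma Gseq_congr (lam0 : ℝ)
    (hc : ∀ x ∈ Icc (0:ℝ) 1, c1' x = c1 x)
    (hf : ∀ x ∈ Icc (0:ℝ) 1, ∀ y ∈ Icc (0:ℝ) 1, f' x y = f x y) :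
    ∀ n : ℕ, ∀ τ s : ℝ, (τ, s) ∈ Eset →
      Gseq lam0 c1' f' n τ s = Gseq lam0 c1 f n τ s := by
  intro n
  induction n with
  | zero => exact fun τ s hE => Gzero_congr lam0 hf hE
  | succ n ih =>
    intro τ s hE
    show Gzero lam0 f' τ s + Phi lam0 c1' f' (Gseq lam0 c1' f' n) τ s = _
    rw [Gzero_congr lam0 hf hE, Phi_congr lam0 hc hf ih hE]
    rfl

end BK

namespace BK

set_option maxHeartbeats 1000000

variable {lam0 : ℝ} {c1 : ℝ → ℝ} {f H : ℝ → ℝ → ℝ}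

lemma cont_Gzero (lam0 : ℝ) (hf : Continuous fun p : ℝ × ℝ => f p.1 p.2) :
    Continuous fun p : ℝ × ℝ => Gzero lam0 f p.1 p.2 := by
  unfold Gzero
  have hb : Continuous fun p : ℝ × ℝ =>
      ∫ tau in p.2..p.1, ∫ s in (0:ℝ)..p.2, f ((tau + s) / 2) ((tau - s) / 2) := by
    refine contParam (f := fun (p : ℝ × ℝ) (tau : ℝ) =>
      ∫ s in (0:ℝ)..p.2, f ((tau + s) / 2) ((tau - s) / 2)) ?_ continuous_snd continuous_fst
    refine intervalIntegral.continuous_parametric_intervalIntegral_of_continuous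
      (f := fun (q : (ℝ × ℝ) × ℝ) (s : ℝ) => f ((q.2 + s) / 2) ((q.2 - s) / 2))
      (s := fun q : (ℝ × ℝ) × ℝ => q.1.2) ?_ ?_
    · show Continuous fun r : ((ℝ × ℝ) × ℝ) × ℝ => f ((r.1.2 + r.2) / 2) ((r.1.2 - r.2) / 2)
      fun_prop
    · fun_prop
  have hcin : Continuous fun tau : ℝ => ∫ s in (0:ℝ)..tau, f ((tau + s) / 2) ((tau - s) / 2) := by
    refine intervalIntegral.continuous_parametric_intervalIntegral_of_continuous
      (f := fun (tau : ℝ) (s : ℝ) => f ((tau + s) / 2) ((tau - s) / 2))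
      (s := fun tau : ℝ => tau) ?_ ?_
    · show Continuous fun r : ℝ × ℝ => f ((r.1 + r.2) / 2) ((r.1 - r.2) / 2)
      fun_prop
    · fun_prop
  have hcfun : Continuous fun p : ℝ × ℝ =>
      ∫ tau in (0:ℝ)..p.2, ∫ s in (0:ℝ)..tau, f ((tau + s) / 2) ((tau - s) / 2) := by
    refine intervalIntegral.continuous_parametric_intervalIntegral_of_continuous
      (f := fun (_ : ℝ × ℝ) (tau : ℝ) => ∫ s in (0:ℝ)..tau, f ((tau + s) / 2) ((tau - s) / 2))
      (s := fun p : ℝ × ℝ => p.2) ?_ ?_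
    · exact hcin.comp continuous_snd
    · fun_prop
  fun_prop

lemma cont_Phi (lam0 : ℝ) (hc1 : Continuous c1) (hf : Continuous fun p : ℝ × ℝ => f p.1 p.2)
    (hH : Continuous fun p : ℝ × ℝ => H p.1 p.2) :
    Continuous fun p : ℝ × ℝ => Phi lam0 c1 f H p.1 p.2 := by
  unfold Phi
  have h1 : Continuous fun p : ℝ × ℝ =>
      ∫ tau in p.2..p.1, ∫ s in (0:ℝ)..p.2, mutld lam0 c1 tau s * H tau s := by
    refine contParam (f := fun (p : ℝ × ℝ) (tau : ℝ) =>
      ∫ s in (0:ℝ)..p.2, mutld lam0 c1 tau s * H tau s) ?_ continuous_snd continuous_fst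
    refine intervalIntegral.continuous_parametric_intervalIntegral_of_continuous
      (f := fun (q : (ℝ × ℝ) × ℝ) (s : ℝ) => mutld lam0 c1 q.2 s * H q.2 s)
      (s := fun q : (ℝ × ℝ) × ℝ => q.1.2) ?_ ?_
    · show Continuous fun r : ((ℝ × ℝ) × ℝ) × ℝ => mutld lam0 c1 r.1.2 r.2 * H r.1.2 r.2
      unfold mutld; fun_prop
    · fun_prop
  have h2in : Continuous fun tau : ℝ => ∫ s in (0:ℝ)..tau, mutld lam0 c1 tau s * H tau s := by
    refine intervalIntegral.continuous_parametric_intervalIntegral_of_continuous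
      (f := fun (tau : ℝ) (s : ℝ) => mutld lam0 c1 tau s * H tau s)
      (s := fun tau : ℝ => tau) ?_ ?_
    · show Continuous fun r : ℝ × ℝ => mutld lam0 c1 r.1 r.2 * H r.1 r.2
      unfold mutld; fun_prop
    · fun_prop
  have h2 : Continuous fun p : ℝ × ℝ =>
      ∫ tau in (0:ℝ)..p.2, ∫ s in (0:ℝ)..tau, mutld lam0 c1 tau s * H tau s := by
    refine intervalIntegral.continuous_parametric_intervalIntegral_of_continuous
      (f := fun (_ : ℝ × ℝ) (tau : ℝ) => ∫ s in (0:ℝ)..tau, mutld lam0 c1 tau s * H tau s)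
      (s := fun p : ℝ × ℝ => p.2) ?_ ?_
    · exact h2in.comp continuous_snd
    · fun_prop
  have h3 : Continuous fun p : ℝ × ℝ =>
      ∫ z in p.2..p.1, ∫ s in (0:ℝ)..p.2, ∫ tau in z..(z + p.2 - s),
        f ((tau - s) / 2) (z - (tau + s) / 2) * H tau s := by
    refine contParam (f := fun (p : ℝ × ℝ) (z : ℝ) =>
      ∫ s in (0:ℝ)..p.2, ∫ tau in z..(z + p.2 - s),
        f ((tau - s) / 2) (z - (tau + s) / 2) * H tau s) ?_ continuous_snd continuous_fst
    refine intervalIntegral.continuous_parametric_intervalIntegral_of_continuous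
      (f := fun (q : (ℝ × ℝ) × ℝ) (s : ℝ) =>
        ∫ tau in q.2..(q.2 + q.1.2 - s), f ((tau - s) / 2) (q.2 - (tau + s) / 2) * H tau s)
      (s := fun q : (ℝ × ℝ) × ℝ => q.1.2) ?_ ?_
    · show Continuous fun r : ((ℝ × ℝ) × ℝ) × ℝ =>
        ∫ tau in r.1.2..(r.1.2 + r.1.1.2 - r.2),
          f ((tau - r.2) / 2) (r.1.2 - (tau + r.2) / 2) * H tau r.2
      refine contParam (f := fun (r : ((ℝ × ℝ) × ℝ) × ℝ) (tau : ℝ) =>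
        f ((tau - r.2) / 2) (r.1.2 - (tau + r.2) / 2) * H tau r.2) ?_ ?_ ?_
      · show Continuous fun w : (((ℝ × ℝ) × ℝ) × ℝ) × ℝ =>
          f ((w.2 - w.1.2) / 2) (w.1.1.2 - (w.2 + w.1.2) / 2) * H w.2 w.1.2
        fun_prop
      · fun_prop
      · fun_prop
    · fun_prop
  have h4in : Continuous fun z : ℝ => ∫ s in (0:ℝ)..z, ∫ tau in z..(2 * z - s),
      f ((tau - s) / 2) (z - (tau + s) / 2) * H tau s := by
    refine intervalIntegral.continuous_parametric_intervalIntegral_of_continuous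
      (f := fun (z : ℝ) (s : ℝ) => ∫ tau in z..(2 * z - s),
        f ((tau - s) / 2) (z - (tau + s) / 2) * H tau s)
      (s := fun z : ℝ => z) ?_ ?_
    · show Continuous fun r : ℝ × ℝ =>
        ∫ tau in r.1..(2 * r.1 - r.2), f ((tau - r.2) / 2) (r.1 - (tau + r.2) / 2) * H tau r.2
      refine contParam (f := fun (r : ℝ × ℝ) (tau : ℝ) =>
        f ((tau - r.2) / 2) (r.1 - (tau + r.2) / 2) * H tau r.2) ?_ ?_ ?_
      · show Continuous fun w : (ℝ × ℝ) × ℝ =>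
          f ((w.2 - w.1.2) / 2) (w.1.1 - (w.2 + w.1.2) / 2) * H w.2 w.1.2
        fun_prop
      · fun_prop
      · fun_prop
    · fun_prop
  have h4 : Continuous fun p : ℝ × ℝ =>
      ∫ z in (0:ℝ)..p.2, ∫ s in (0:ℝ)..z, ∫ tau in z..(2 * z - s),
        f ((tau - s) / 2) (z - (tau + s) / 2) * H tau s := by
    refine intervalIntegral.continuous_parametric_intervalIntegral_of_continuous
      (f := fun (_ : ℝ × ℝ) (z : ℝ) => ∫ s in (0:ℝ)..z, ∫ tau in z..(2 * z - s),
        f ((tau - s) / 2) (z - (tau + s) / 2) * H tau s)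
      (s := fun p : ℝ × ℝ => p.2) ?_ ?_
    · exact h4in.comp continuous_snd
    · fun_prop
  exact (((continuous_const.mul h1).add (continuous_const.mul h2)).add
    (continuous_const.mul h3)).add (continuous_const.mul h4)

lemma cont_Gseq (lam0 : ℝ) (hc1 : Continuous c1) (hf : Continuous fun p : ℝ × ℝ => f p.1 p.2) :
    ∀ n : ℕ, Continuous fun p : ℝ × ℝ => Gseq lam0 c1 f n p.1 p.2 := by
  intro n
  induction n with
  | zero => exact cont_Gzero lam0 hf
  | succ n ih =>
    show Continuous fun p : ℝ × ℝ =>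
      Gzero lam0 f p.1 p.2 + Phi lam0 c1 f (Gseq lam0 c1 f n) p.1 p.2
    exact (cont_Gzero lam0 hf).add (cont_Phi lam0 hc1 hf ih)

end BK

namespace BK

set_option maxHeartbeats 2000000

lemma Phi_diff_bound (lam0 : ℝ) (c1 : ℝ → ℝ) (f K1 K2 : ℝ → ℝ → ℝ)
    (hc1 : Continuous c1) (hf : Continuous fun p : ℝ × ℝ => f p.1 p.2)
    (hK1 : Continuous fun p : ℝ × ℝ => K1 p.1 p.2) (hK2 : Continuous fun p : ℝ × ℝ => K2 p.1 p.2)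
    {L F c : ℝ} (hL : 0 ≤ L) (hF : 0 ≤ F) (hc : 0 ≤ c) (n : ℕ)
    (hmu : ∀ τ s : ℝ, (τ, s) ∈ Eset → |mutld lam0 c1 τ s| ≤ L)
    (hfb : ∀ x y : ℝ, x ∈ Icc (0:ℝ) 1 → y ∈ Icc (0:ℝ) 1 → |f x y| ≤ F)
    (hK : ∀ τ s : ℝ, (τ, s) ∈ Eset → |K1 τ s - K2 τ s| ≤ c * (τ + s) ^ n)
    {xi eta : ℝ} (hE : (xi, eta) ∈ Eset) :
    |Phi lam0 c1 f K1 xi eta - Phi lam0 c1 f K2 xi eta| ≤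
      c * ((L + F) / 2) * (xi + eta) ^ (n + 1) / (n + 1) := by
  obtain ⟨he0, he1, hex, hx2⟩ := hE
  simp only at he0 he1 hex hx2
  have hmuK : ∀ K : ℝ → ℝ → ℝ, (Continuous fun p : ℝ × ℝ => K p.1 p.2) →
      Continuous fun r : ℝ × ℝ => mutld lam0 c1 r.1 r.2 * K r.1 r.2 := by
    intro K hKc; unfold mutld; fun_prop
  have contJa : ∀ K : ℝ → ℝ → ℝ, (Continuous fun p : ℝ × ℝ => K p.1 p.2) →
      Continuous fun τ : ℝ => ∫ s in (0:ℝ)..eta, mutld lam0 c1 τ s * K τ s := by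
    intro K hKc
    exact intervalIntegral.continuous_parametric_intervalIntegral_of_continuous'
      (f := fun (τ : ℝ) (s : ℝ) => mutld lam0 c1 τ s * K τ s) (hmuK K hKc) 0 eta
  have contJb : ∀ K : ℝ → ℝ → ℝ, (Continuous fun p : ℝ × ℝ => K p.1 p.2) →
      Continuous fun τ : ℝ => ∫ s in (0:ℝ)..τ, mutld lam0 c1 τ s * K τ s := by
    intro K hKc
    refine intervalIntegral.continuous_parametric_intervalIntegral_of_continuous
      (f := fun (τ : ℝ) (s : ℝ) => mutld lam0 c1 τ s * K τ s)
      (s := fun τ : ℝ => τ) ?_ ?_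
    · exact hmuK K hKc
    · fun_prop
  have contW3 : ∀ K : ℝ → ℝ → ℝ, (Continuous fun p : ℝ × ℝ => K p.1 p.2) →
      Continuous fun z : ℝ => ∫ s in (0:ℝ)..eta, ∫ tau in z..(z + eta - s),
        f ((tau - s) / 2) (z - (tau + s) / 2) * K tau s := by
    intro K hKc
    refine intervalIntegral.continuous_parametric_intervalIntegral_of_continuous'
      (f := fun (z : ℝ) (s : ℝ) => ∫ tau in z..(z + eta - s),
        f ((tau - s) / 2) (z - (tau + s) / 2) * K tau s) ?_ 0 eta
    show Continuous fun r : ℝ × ℝ => ∫ tau in r.1..(r.1 + eta - r.2),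
      f ((tau - r.2) / 2) (r.1 - (tau + r.2) / 2) * K tau r.2
    refine contParam (f := fun (r : ℝ × ℝ) (tau : ℝ) =>
      f ((tau - r.2) / 2) (r.1 - (tau + r.2) / 2) * K tau r.2) ?_ ?_ ?_
    · show Continuous fun w : (ℝ × ℝ) × ℝ =>
        f ((w.2 - w.1.2) / 2) (w.1.1 - (w.2 + w.1.2) / 2) * K w.2 w.1.2
      fun_prop
    · fun_prop
    · fun_prop
  have contW4 : ∀ K : ℝ → ℝ → ℝ, (Continuous fun p : ℝ × ℝ => K p.1 p.2) →
      Continuous fun z : ℝ => ∫ s in (0:ℝ)..z, ∫ tau in z..(2 * z - s),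
        f ((tau - s) / 2) (z - (tau + s) / 2) * K tau s := by
    intro K hKc
    refine intervalIntegral.continuous_parametric_intervalIntegral_of_continuous
      (f := fun (z : ℝ) (s : ℝ) => ∫ tau in z..(2 * z - s),
        f ((tau - s) / 2) (z - (tau + s) / 2) * K tau s)
      (s := fun z : ℝ => z) ?_ ?_
    · show Continuous fun r : ℝ × ℝ => ∫ tau in r.1..(2 * r.1 - r.2),
        f ((tau - r.2) / 2) (r.1 - (tau + r.2) / 2) * K tau r.2
      refine contParam (f := fun (r : ℝ × ℝ) (tau : ℝ) =>
        f ((tau - r.2) / 2) (r.1 - (tau + r.2) / 2) * K tau r.2) ?_ ?_ ?_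
      · show Continuous fun w : (ℝ × ℝ) × ℝ =>
          f ((w.2 - w.1.2) / 2) (w.1.1 - (w.2 + w.1.2) / 2) * K w.2 w.1.2
        fun_prop
      · fun_prop
      · fun_prop
    · fun_prop
  -- Term 1 bound
  have hT1 : |(∫ τ in eta..xi, ∫ s in (0:ℝ)..eta, mutld lam0 c1 τ s * K1 τ s)
      - ∫ τ in eta..xi, ∫ s in (0:ℝ)..eta, mutld lam0 c1 τ s * K2 τ s|
      ≤ (L * c * eta) * ((xi + eta) ^ (n + 1) - (eta + eta) ^ (n + 1)) / (n + 1) := by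
    refine outer_bound hex ((contJa K1 hK1).intervalIntegrable _ _)
      ((contJa K2 hK2).intervalIntegrable _ _)
      (by positivity) (by linarith) ?_
    intro τ hτ
    obtain ⟨hτ1, hτ2⟩ := hτ
    have hb := inner_bound (C := L * (c * (τ + eta) ^ n))
      (((hmuK K1 hK1).comp
        (show Continuous fun s : ℝ => ((τ : ℝ), s) by fun_prop)).intervalIntegrable 0 eta)
      (((hmuK K2 hK2).comp
        (show Continuous fun s : ℝ => ((τ : ℝ), s) by fun_prop)).intervalIntegrable 0 eta)
      ?_
    · refine hb.trans ?_
      rw [sub_zero, abs_of_nonneg he0]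
      exact le_of_eq (by ring)
    · intro s hs
      rw [Set.uIoc_of_le he0] at hs
      obtain ⟨hs1, hs2⟩ := hs
      have hmem : (τ, s) ∈ Eset :=
        ⟨by simp only; linarith, by simp only; linarith, by simp only; linarith,
          by simp only; linarith⟩
      have hpow : (τ + s) ^ n ≤ (τ + eta) ^ n :=
        pow_le_pow_left₀ (by linarith) (by linarith) n
      calc |mutld lam0 c1 τ s * K1 τ s - mutld lam0 c1 τ s * K2 τ s|
          = |mutld lam0 c1 τ s| * |K1 τ s - K2 τ s| := by rw [← mul_sub, abs_mul]
        _ ≤ L * (c * (τ + eta) ^ n) := by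
            refine mul_le_mul (hmu τ s hmem) ((hK τ s hmem).trans ?_) (abs_nonneg _) hL
            exact mul_le_mul_of_nonneg_left hpow hc
  -- Term 2 bound
  have hT2 : |(∫ τ in (0:ℝ)..eta, ∫ s in (0:ℝ)..τ, mutld lam0 c1 τ s * K1 τ s)
      - ∫ τ in (0:ℝ)..eta, ∫ s in (0:ℝ)..τ, mutld lam0 c1 τ s * K2 τ s|
      ≤ (L * c * eta) * ((eta + eta) ^ (n + 1) - (0 + eta) ^ (n + 1)) / (n + 1) := by
    refine outer_bound he0 ((contJb K1 hK1).intervalIntegrable _ _)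
      ((contJb K2 hK2).intervalIntegrable _ _)
      (by positivity) (by linarith) ?_
    intro τ hτ
    obtain ⟨hτ1, hτ2⟩ := hτ
    have hb := inner_bound (C := L * (c * (τ + eta) ^ n))
      (((hmuK K1 hK1).comp
        (show Continuous fun s : ℝ => ((τ : ℝ), s) by fun_prop)).intervalIntegrable 0 τ)
      (((hmuK K2 hK2).comp
        (show Continuous fun s : ℝ => ((τ : ℝ), s) by fun_prop)).intervalIntegrable 0 τ)
      ?_
    · refine hb.trans ?_
      rw [sub_zero, abs_of_nonneg (by linarith)]
      calc L * (c * (τ + eta) ^ n) * τ ≤ L * (c * (τ + eta) ^ n) * eta :=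
            mul_le_mul_of_nonneg_left hτ2
              (mul_nonneg hL (mul_nonneg hc (pow_nonneg (by linarith) n)))
        _ = L * c * eta * (τ + eta) ^ n := by ring
    · intro s hs
      rw [Set.uIoc_of_le (by linarith)] at hs
      obtain ⟨hs1, hs2⟩ := hs
      have hmem : (τ, s) ∈ Eset :=
        ⟨by simp only; linarith, by simp only; linarith, by simp only; linarith,
          by simp only; linarith⟩
      have hpow : (τ + s) ^ n ≤ (τ + eta) ^ n :=
        pow_le_pow_left₀ (by linarith) (by linarith) n
      calc |mutld lam0 c1 τ s * K1 τ s - mutld lam0 c1 τ s * K2 τ s|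
          = |mutld lam0 c1 τ s| * |K1 τ s - K2 τ s| := by rw [← mul_sub, abs_mul]
        _ ≤ L * (c * (τ + eta) ^ n) := by
            refine mul_le_mul (hmu τ s hmem) ((hK τ s hmem).trans ?_) (abs_nonneg _) hL
            exact mul_le_mul_of_nonneg_left hpow hc
  -- Term 3 bound
  have hT3 : |(∫ z in eta..xi, ∫ s in (0:ℝ)..eta, ∫ tau in z..(z + eta - s),
        f ((tau - s) / 2) (z - (tau + s) / 2) * K1 tau s)
      - ∫ z in eta..xi, ∫ s in (0:ℝ)..eta, ∫ tau in z..(z + eta - s),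
        f ((tau - s) / 2) (z - (tau + s) / 2) * K2 tau s|
      ≤ (F * c * (eta * eta)) * ((xi + eta) ^ (n + 1) - (eta + eta) ^ (n + 1)) / (n + 1) := by
    refine outer_bound hex ((contW3 K1 hK1).intervalIntegrable _ _)
      ((contW3 K2 hK2).intervalIntegrable _ _)
      (by positivity) (by linarith) ?_
    intro z hz
    obtain ⟨hz1, hz2⟩ := hz
    have hVcont : ∀ K : ℝ → ℝ → ℝ, (Continuous fun p : ℝ × ℝ => K p.1 p.2) →
        Continuous fun s : ℝ => ∫ tau in z..(z + eta - s),
          f ((tau - s) / 2) (z - (tau + s) / 2) * K tau s := by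
      intro K hKc
      refine contParam (f := fun (s : ℝ) (tau : ℝ) =>
        f ((tau - s) / 2) (z - (tau + s) / 2) * K tau s) ?_ ?_ ?_
      · show Continuous fun w : ℝ × ℝ =>
          f ((w.2 - w.1) / 2) (z - (w.2 + w.1) / 2) * K w.2 w.1
        fun_prop
      · fun_prop
      · fun_prop
    have hb := inner_bound (C := F * (c * (z + eta) ^ n) * eta)
      ((hVcont K1 hK1).intervalIntegrable 0 eta)
      ((hVcont K2 hK2).intervalIntegrable 0 eta) ?_
    · refine hb.trans ?_
      rw [sub_zero, abs_of_nonneg he0]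
      exact le_of_eq (by ring)
    · intro s hs
      rw [Set.uIoc_of_le he0] at hs
      obtain ⟨hs1, hs2⟩ := hs
      have hbin := inner_bound (C := F * (c * (z + eta) ^ n))
        (((hf.comp (show Continuous fun tau : ℝ => (((tau - s) / 2 : ℝ), (z - (tau + s) / 2 : ℝ))
            by fun_prop)).mul
          (hK1.comp (show Continuous fun tau : ℝ => ((tau : ℝ), s)
            by fun_prop))).intervalIntegrable z (z + eta - s))
        (((hf.comp (show Continuous fun tau : ℝ => (((tau - s) / 2 : ℝ), (z - (tau + s) / 2 : ℝ))
            by fun_prop)).mul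
          (hK2.comp (show Continuous fun tau : ℝ => ((tau : ℝ), s)
            by fun_prop))).intervalIntegrable z (z + eta - s)) ?_
      · refine hbin.trans ?_
        have habs : |z + eta - s - z| = eta - s := by
          rw [abs_of_nonneg (by linarith)]; ring
        rw [habs]
        exact mul_le_mul_of_nonneg_left (by linarith)
          (mul_nonneg hF (mul_nonneg hc (pow_nonneg (by linarith) n)))
      · intro tau htau
        rw [Set.uIoc_of_le (by linarith)] at htau
        obtain ⟨ht1, ht2⟩ := htau
        have hmem : (tau, s) ∈ Eset :=
          ⟨by simp only; linarith, by simp only; linarith, by simp only; linarith,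
            by simp only; linarith⟩
        have hx1 : (tau - s) / 2 ∈ Icc (0:ℝ) 1 := ⟨by linarith, by linarith⟩
        have hy1 : z - (tau + s) / 2 ∈ Icc (0:ℝ) 1 := ⟨by linarith, by linarith⟩
        have hpow : (tau + s) ^ n ≤ (z + eta) ^ n :=
          pow_le_pow_left₀ (by linarith) (by linarith) n
        calc |f ((tau - s) / 2) (z - (tau + s) / 2) * K1 tau s
              - f ((tau - s) / 2) (z - (tau + s) / 2) * K2 tau s|
            = |f ((tau - s) / 2) (z - (tau + s) / 2)| * |K1 tau s - K2 tau s| := by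
              rw [← mul_sub, abs_mul]
          _ ≤ F * (c * (z + eta) ^ n) := by
              refine mul_le_mul (hfb _ _ hx1 hy1) ((hK tau s hmem).trans ?_) (abs_nonneg _) hF
              exact mul_le_mul_of_nonneg_left hpow hc
  -- Term 4 bound
  have hT4 : |(∫ z in (0:ℝ)..eta, ∫ s in (0:ℝ)..z, ∫ tau in z..(2 * z - s),
        f ((tau - s) / 2) (z - (tau + s) / 2) * K1 tau s)
      - ∫ z in (0:ℝ)..eta, ∫ s in (0:ℝ)..z, ∫ tau in z..(2 * z - s),
        f ((tau - s) / 2) (z - (tau + s) / 2) * K2 tau s|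
      ≤ (F * c * (eta * eta)) * ((eta + eta) ^ (n + 1) - (0 + eta) ^ (n + 1)) / (n + 1) := by
    refine outer_bound he0 ((contW4 K1 hK1).intervalIntegrable _ _)
      ((contW4 K2 hK2).intervalIntegrable _ _)
      (by positivity) (by linarith) ?_
    intro z hz
    obtain ⟨hz1, hz2⟩ := hz
    have hVcont : ∀ K : ℝ → ℝ → ℝ, (Continuous fun p : ℝ × ℝ => K p.1 p.2) →
        Continuous fun s : ℝ => ∫ tau in z..(2 * z - s),
          f ((tau - s) / 2) (z - (tau + s) / 2) * K tau s := by
      intro K hKc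
      refine contParam (f := fun (s : ℝ) (tau : ℝ) =>
        f ((tau - s) / 2) (z - (tau + s) / 2) * K tau s) ?_ ?_ ?_
      · show Continuous fun w : ℝ × ℝ =>
          f ((w.2 - w.1) / 2) (z - (w.2 + w.1) / 2) * K w.2 w.1
        fun_prop
      · fun_prop
      · fun_prop
    have hb := inner_bound (C := F * (c * (z + eta) ^ n) * eta)
      ((hVcont K1 hK1).intervalIntegrable 0 z)
      ((hVcont K2 hK2).intervalIntegrable 0 z) ?_
    · refine hb.trans ?_
      rw [sub_zero, abs_of_nonneg (by linarith)]
      calc F * (c * (z + eta) ^ n) * eta * z ≤ F * (c * (z + eta) ^ n) * eta * eta :=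
            mul_le_mul_of_nonneg_left hz2
              (mul_nonneg (mul_nonneg hF (mul_nonneg hc (pow_nonneg (by linarith) n))) he0)
        _ = F * c * (eta * eta) * (z + eta) ^ n := by ring
    · intro s hs
      rw [Set.uIoc_of_le (by linarith)] at hs
      obtain ⟨hs1, hs2⟩ := hs
      have hbin := inner_bound (C := F * (c * (z + eta) ^ n))
        (((hf.comp (show Continuous fun tau : ℝ => (((tau - s) / 2 : ℝ), (z - (tau + s) / 2 : ℝ))
            by fun_prop)).mul
          (hK1.comp (show Continuous fun tau : ℝ => ((tau : ℝ), s)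
            by fun_prop))).intervalIntegrable z (2 * z - s))
        (((hf.comp (show Continuous fun tau : ℝ => (((tau - s) / 2 : ℝ), (z - (tau + s) / 2 : ℝ))
            by fun_prop)).mul
          (hK2.comp (show Continuous fun tau : ℝ => ((tau : ℝ), s)
            by fun_prop))).intervalIntegrable z (2 * z - s)) ?_
      · refine hbin.trans ?_
        have habs : |2 * z - s - z| = z - s := by
          rw [abs_of_nonneg (by linarith)]; ring
        rw [habs]
        exact mul_le_mul_of_nonneg_left (by linarith)
          (mul_nonneg hF (mul_nonneg hc (pow_nonneg (by linarith) n)))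
      · intro tau htau
        rw [Set.uIoc_of_le (by linarith)] at htau
        obtain ⟨ht1, ht2⟩ := htau
        have hmem : (tau, s) ∈ Eset :=
          ⟨by simp only; linarith, by simp only; linarith, by simp only; linarith,
            by simp only; linarith⟩
        have hx1 : (tau - s) / 2 ∈ Icc (0:ℝ) 1 := ⟨by linarith, by linarith⟩
        have hy1 : z - (tau + s) / 2 ∈ Icc (0:ℝ) 1 := ⟨by linarith, by linarith⟩
        have hpow : (tau + s) ^ n ≤ (z + eta) ^ n :=
          pow_le_pow_left₀ (by linarith) (by linarith) n
        calc |f ((tau - s) / 2) (z - (tau + s) / 2) * K1 tau s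
              - f ((tau - s) / 2) (z - (tau + s) / 2) * K2 tau s|
            = |f ((tau - s) / 2) (z - (tau + s) / 2)| * |K1 tau s - K2 tau s| := by
              rw [← mul_sub, abs_mul]
          _ ≤ F * (c * (z + eta) ^ n) := by
              refine mul_le_mul (hfb _ _ hx1 hy1) ((hK tau s hmem).trans ?_) (abs_nonneg _) hF
              exact mul_le_mul_of_nonneg_left hpow hc
  -- assemble
  have hsplit : Phi lam0 c1 f K1 xi eta - Phi lam0 c1 f K2 xi eta =
      (1/4) * ((∫ τ in eta..xi, ∫ s in (0:ℝ)..eta, mutld lam0 c1 τ s * K1 τ s)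
        - ∫ τ in eta..xi, ∫ s in (0:ℝ)..eta, mutld lam0 c1 τ s * K2 τ s)
      + (1/2) * ((∫ τ in (0:ℝ)..eta, ∫ s in (0:ℝ)..τ, mutld lam0 c1 τ s * K1 τ s)
        - ∫ τ in (0:ℝ)..eta, ∫ s in (0:ℝ)..τ, mutld lam0 c1 τ s * K2 τ s)
      + (1/4) * ((∫ z in eta..xi, ∫ s in (0:ℝ)..eta, ∫ tau in z..(z + eta - s),
          f ((tau - s) / 2) (z - (tau + s) / 2) * K1 tau s)
        - ∫ z in eta..xi, ∫ s in (0:ℝ)..eta, ∫ tau in z..(z + eta - s),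
          f ((tau - s) / 2) (z - (tau + s) / 2) * K2 tau s)
      + (1/2) * ((∫ z in (0:ℝ)..eta, ∫ s in (0:ℝ)..z, ∫ tau in z..(2 * z - s),
          f ((tau - s) / 2) (z - (tau + s) / 2) * K1 tau s)
        - ∫ z in (0:ℝ)..eta, ∫ s in (0:ℝ)..z, ∫ tau in z..(2 * z - s),
          f ((tau - s) / 2) (z - (tau + s) / 2) * K2 tau s) := by
    unfold Phi; ring
  rw [hsplit]
  set d1 := (∫ τ in eta..xi, ∫ s in (0:ℝ)..eta, mutld lam0 c1 τ s * K1 τ s)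
    - ∫ τ in eta..xi, ∫ s in (0:ℝ)..eta, mutld lam0 c1 τ s * K2 τ s with hd1
  set d2 := (∫ τ in (0:ℝ)..eta, ∫ s in (0:ℝ)..τ, mutld lam0 c1 τ s * K1 τ s)
    - ∫ τ in (0:ℝ)..eta, ∫ s in (0:ℝ)..τ, mutld lam0 c1 τ s * K2 τ s with hd2
  set d3 := (∫ z in eta..xi, ∫ s in (0:ℝ)..eta, ∫ tau in z..(z + eta - s),
      f ((tau - s) / 2) (z - (tau + s) / 2) * K1 tau s)
    - ∫ z in eta..xi, ∫ s in (0:ℝ)..eta, ∫ tau in z..(z + eta - s),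
      f ((tau - s) / 2) (z - (tau + s) / 2) * K2 tau s with hd3
  set d4 := (∫ z in (0:ℝ)..eta, ∫ s in (0:ℝ)..z, ∫ tau in z..(2 * z - s),
      f ((tau - s) / 2) (z - (tau + s) / 2) * K1 tau s)
    - ∫ z in (0:ℝ)..eta, ∫ s in (0:ℝ)..z, ∫ tau in z..(2 * z - s),
      f ((tau - s) / 2) (z - (tau + s) / 2) * K2 tau s with hd4
  have habs4 : |1/4 * d1 + 1/2 * d2 + 1/4 * d3 + 1/2 * d4| ≤
      1/4 * |d1| + 1/2 * |d2| + 1/4 * |d3| + 1/2 * |d4| := by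
    have h := (abs_add_le (1/4 * d1 + 1/2 * d2 + 1/4 * d3) (1/2 * d4)).trans
      (add_le_add_left (abs_add_three (1/4 * d1) (1/2 * d2) (1/4 * d3)) _)
    have e1 : |1/4 * d1| = 1/4 * |d1| := by rw [abs_mul]; norm_num
    have e2 : |1/2 * d2| = 1/2 * |d2| := by rw [abs_mul]; norm_num
    have e3 : |1/4 * d3| = 1/4 * |d3| := by rw [abs_mul]; norm_num
    have e4 : |1/2 * d4| = 1/2 * |d4| := by rw [abs_mul]; norm_num
    rw [e1, e2, e3, e4] at h
    exact h
  refine habs4.trans ?_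
  have hN : (0:ℝ) < (n:ℝ) + 1 := by positivity
  have hA0 : (0:ℝ) ≤ (xi + eta) ^ (n + 1) := pow_nonneg (by linarith) _
  have hBA : (eta + eta) ^ (n + 1) ≤ (xi + eta) ^ (n + 1) :=
    pow_le_pow_left₀ (by linarith) (by linarith) _
  have hCB : (0 + eta) ^ (n + 1) ≤ (eta + eta) ^ (n + 1) :=
    pow_le_pow_left₀ (by linarith) (by linarith) _
  have hC0 : (0:ℝ) ≤ (0 + eta) ^ (n + 1) := pow_nonneg (by linarith) _
  set A := (xi + eta) ^ (n + 1)
  set B := (eta + eta) ^ (n + 1)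
  set C := (0 + eta) ^ (n + 1)
  have hmain : 1/4 * ((L * c * eta) * (A - B)) + 1/2 * ((L * c * eta) * (B - C))
      + 1/4 * ((F * c * (eta * eta)) * (A - B)) + 1/2 * ((F * c * (eta * eta)) * (B - C))
      ≤ c * ((L + F) / 2) * A := by
    nlinarith [mul_nonneg (mul_nonneg hL hc) hC0, mul_nonneg (mul_nonneg hF hc) hC0,
      mul_nonneg (mul_nonneg (mul_nonneg hL hc) (by linarith : (0:ℝ) ≤ 1 - eta)) hA0,
      mul_nonneg (mul_nonneg (mul_nonneg hF hc) (by nlinarith : (0:ℝ) ≤ 1 - eta * eta)) hA0,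
      mul_nonneg (mul_nonneg (mul_nonneg hL hc) (by linarith : (0:ℝ) ≤ 1 - eta))
        (by linarith : (0:ℝ) ≤ A - B),
      mul_nonneg (mul_nonneg (mul_nonneg hF hc) (by nlinarith : (0:ℝ) ≤ 1 - eta * eta))
        (by linarith : (0:ℝ) ≤ A - B),
      mul_nonneg (mul_nonneg hL hc) (by linarith : (0:ℝ) ≤ A - B),
      mul_nonneg (mul_nonneg hF hc) (by linarith : (0:ℝ) ≤ A - B),
      mul_nonneg (mul_nonneg (mul_nonneg hL hc) he0) hC0,
      mul_nonneg (mul_nonneg (mul_nonneg hF hc) (mul_nonneg he0 he0)) hC0]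
  calc 1/4 * |d1| + 1/2 * |d2| + 1/4 * |d3| + 1/2 * |d4|
      ≤ 1/4 * ((L * c * eta) * (A - B) / (↑n + 1)) + 1/2 * ((L * c * eta) * (B - C) / (↑n + 1))
        + 1/4 * ((F * c * (eta * eta)) * (A - B) / (↑n + 1))
        + 1/2 * ((F * c * (eta * eta)) * (B - C) / (↑n + 1)) := by
        have b1 := mul_le_mul_of_nonneg_left hT1 (by norm_num : (0:ℝ) ≤ 1/4)
        have b2 := mul_le_mul_of_nonneg_left hT2 (by norm_num : (0:ℝ) ≤ 1/2)
        have b3 := mul_le_mul_of_nonneg_left hT3 (by norm_num : (0:ℝ) ≤ 1/4)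
        have b4 := mul_le_mul_of_nonneg_left hT4 (by norm_num : (0:ℝ) ≤ 1/2)
        exact add_le_add (add_le_add (add_le_add b1 b2) b3) b4
    _ = (1/4 * ((L * c * eta) * (A - B)) + 1/2 * ((L * c * eta) * (B - C))
        + 1/4 * ((F * c * (eta * eta)) * (A - B))
        + 1/2 * ((F * c * (eta * eta)) * (B - C))) / (↑n + 1) := by ring
    _ ≤ c * ((L + F) / 2) * A / (↑n + 1) := by
        exact (div_le_div_iff_of_pos_right hN).mpr hmain
  
end BK

namespace BK

lemma Lambdabar_bound {lam0 : ℝ} {c1 c1e : ℝ → ℝ} (hc1e : Continuous c1e)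
    (heq : ∀ x ∈ Icc (0:ℝ) 1, c1e x = c1 x) :
    ∀ τ s : ℝ, (τ, s) ∈ Eset → |mutld lam0 c1e τ s| ≤ Lambdabar lam0 c1 := by
  intro τ s hmem
  obtain ⟨h0, h1, h2, h3⟩ := hmem
  simp only at h0 h1 h2 h3
  have hx : (τ + s) / 2 ∈ Icc (0:ℝ) 1 := ⟨by linarith, by linarith⟩
  have hy : (τ - s) / 2 ∈ Icc (0:ℝ) 1 := ⟨by linarith, by linarith⟩
  have hp : (((τ + s) / 2 : ℝ), ((τ - s) / 2 : ℝ)) ∈ Dset :=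
    ⟨by simp only; linarith, by simp only; linarith, by simp only; linarith⟩
  have himg : (fun p : ℝ × ℝ => |lam0 - c1 p.1 + c1 p.2|) '' Dset
      = (fun p : ℝ × ℝ => |lam0 - c1e p.1 + c1e p.2|) '' Dset := by
    apply Set.image_congr
    rintro ⟨x, y⟩ hq
    obtain ⟨hq0, hq1, hq2⟩ := hq
    simp only at hq0 hq1 hq2
    rw [heq x ⟨by linarith, by linarith⟩, heq y ⟨by linarith, by linarith⟩]
  have hbdd : BddAbove ((fun p : ℝ × ℝ => |lam0 - c1 p.1 + c1 p.2|) '' Dset) := by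
    rw [himg]
    exact (isCompact_Dset.image (by fun_prop)).bddAbove
  have hle := le_csSup hbdd ⟨_, hp, rfl⟩
  have hval : mutld lam0 c1e τ s = lam0 - c1 ((τ + s) / 2) + c1 ((τ - s) / 2) := by
    unfold mutld
    rw [heq _ hx, heq _ hy]
  rw [hval]
  exact le_trans hle (le_max_right _ _)

lemma fbar_bound {f : ℝ → ℝ → ℝ} {fe : ℝ × ℝ → ℝ} (hfe : Continuous fe)
    (heq : ∀ p ∈ Icc (0:ℝ) 1 ×ˢ Icc (0:ℝ) 1, fe p = f p.1 p.2) :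
    ∀ x y : ℝ, x ∈ Icc (0:ℝ) 1 → y ∈ Icc (0:ℝ) 1 → |fe (x, y)| ≤ fbar f := by
  intro x y hx hy
  have himg : (fun p : ℝ × ℝ => |f p.1 p.2|) '' (Icc (0:ℝ) 1 ×ˢ Icc (0:ℝ) 1)
      = (fun p : ℝ × ℝ => |fe p|) '' (Icc (0:ℝ) 1 ×ˢ Icc (0:ℝ) 1) := by
    apply Set.image_congr
    intro q hq
    rw [heq q hq]
  have hbdd : BddAbove ((fun p : ℝ × ℝ => |f p.1 p.2|) '' (Icc (0:ℝ) 1 ×ˢ Icc (0:ℝ) 1)) := by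
    rw [himg]
    exact ((isCompact_Icc.prod isCompact_Icc).image (by fun_prop)).bddAbove
  have hle := le_csSup hbdd ⟨((x, y) : ℝ × ℝ), Set.mk_mem_prod hx hy, rfl⟩
  rw [heq (x, y) (Set.mk_mem_prod hx hy)]
  exact hle

lemma fbar_nonneg {f : ℝ → ℝ → ℝ} {fe : ℝ × ℝ → ℝ} (hfe : Continuous fe)
    (heq : ∀ p ∈ Icc (0:ℝ) 1 ×ˢ Icc (0:ℝ) 1, fe p = f p.1 p.2) : 0 ≤ fbar f := by
  have h := fbar_bound hfe heq 0 0 ⟨le_refl 0, zero_le_one⟩ ⟨le_refl 0, zero_le_one⟩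
  exact le_trans (abs_nonneg _) h

end BK

/-- Any continuous solution `Ḡ` of the integral equation is approximated by the successive
approximations: `|G_n - Ḡ| ≤ δ M^n / n! (ξ+η)^n` on `E`, where `δ = max_E |Φ_Ḡ|`. -/
theorem Gseq_approximates_solution (lam0 : ℝ) (hlam0 : 0 < lam0)
    (c1 : ℝ → ℝ) (hc1 : ContinuousOn c1 (Icc 0 1))
    (f : ℝ → ℝ → ℝ)
    (hf : ContinuousOn (fun p : ℝ × ℝ => f p.1 p.2) (Icc 0 1 ×ˢ Icc 0 1))
    (Gb : ℝ → ℝ → ℝ) (hGbcont : ContinuousOn (fun p : ℝ × ℝ => Gb p.1 p.2) Eset)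
    (hGbeq : ∀ xi eta : ℝ, (xi, eta) ∈ Eset →
      Gb xi eta = Gzero lam0 f xi eta + Phi lam0 c1 f Gb xi eta)
    (delta : ℝ)
    (hdelta : IsGreatest ((fun p : ℝ × ℝ => |Phi lam0 c1 f Gb p.1 p.2|) '' Eset) delta) :
    ∀ n : ℕ, ∀ xi eta : ℝ, (xi, eta) ∈ Eset →
      |Gseq lam0 c1 f n xi eta - Gb xi eta| ≤
        delta * Mconst lam0 c1 f ^ n / (Nat.factorial n : ℝ) * (xi + eta) ^ n := by
  obtain ⟨c1e, hc1e, hc1eq⟩ := BK.exists_ext isClosed_Icc hc1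
  obtain ⟨fe, hfe, hfeq⟩ := BK.exists_ext (isClosed_Icc.prod isClosed_Icc) hf
  obtain ⟨Gbe, hGbe, hGbeeq⟩ := BK.exists_ext BK.isClosed_Eset hGbcont
  set fe2 : ℝ → ℝ → ℝ := fun x y => fe (x, y) with hfe2def
  set Gbe2 : ℝ → ℝ → ℝ := fun x y => Gbe (x, y) with hGbe2def
  have hfe2cont : Continuous fun p : ℝ × ℝ => fe2 p.1 p.2 := hfe
  have hGbe2cont : Continuous fun p : ℝ × ℝ => Gbe2 p.1 p.2 := hGbe
  have hfeq2 : ∀ x ∈ Icc (0:ℝ) 1, ∀ y ∈ Icc (0:ℝ) 1, fe2 x y = f x y :=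
    fun x hx y hy => hfeq (x, y) (Set.mk_mem_prod hx hy)
  have hGb2 : ∀ τ s : ℝ, (τ, s) ∈ Eset → Gbe2 τ s = Gb τ s :=
    fun τ s h => hGbeeq (τ, s) h
  have hL0 : 0 ≤ Lambdabar lam0 c1 := le_trans hlam0.le (le_max_left _ _)
  have hF0 : 0 ≤ fbar f := BK.fbar_nonneg hfe hfeq
  have hmu := BK.Lambdabar_bound (lam0 := lam0) hc1e hc1eq
  have hfb : ∀ x y : ℝ, x ∈ Icc (0:ℝ) 1 → y ∈ Icc (0:ℝ) 1 → |fe2 x y| ≤ fbar f :=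
    fun x y hx hy => BK.fbar_bound hfe hfeq x y hx hy
  have hdelta0 : 0 ≤ delta := by
    obtain ⟨p, hp, hv⟩ := hdelta.1
    rw [← hv]; exact abs_nonneg _
  have hM0 : 0 ≤ Mconst lam0 c1 f := by unfold Mconst; linarith
  have hGseqE := BK.Gseq_congr lam0 hc1eq hfeq2
  have hGseqcont := BK.cont_Gseq lam0 hc1e hfe2cont
  intro n
  induction n with
  | zero =>
    intro xi eta hE
    have h0 := hGbeq xi eta hE
    have hdiff : Gseq lam0 c1 f 0 xi eta - Gb xi eta = -(Phi lam0 c1 f Gb xi eta) := by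
      show Gzero lam0 f xi eta - Gb xi eta = _
      rw [h0]; ring
    rw [hdiff, abs_neg]
    have hle : |Phi lam0 c1 f Gb xi eta| ≤ delta := hdelta.2 ⟨(xi, eta), hE, rfl⟩
    simpa [Nat.factorial] using hle
  | succ n ih =>
    intro xi eta hE
    have hc0 : 0 ≤ delta * Mconst lam0 c1 f ^ n / (Nat.factorial n : ℝ) :=
      div_nonneg (mul_nonneg hdelta0 (pow_nonneg hM0 n)) (by positivity)
    have hKbd : ∀ τ s : ℝ, (τ, s) ∈ Eset →
        |Gseq lam0 c1e fe2 n τ s - Gbe2 τ s| ≤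
          delta * Mconst lam0 c1 f ^ n / (Nat.factorial n : ℝ) * (τ + s) ^ n := by
      intro τ s h
      rw [hGseqE n τ s h, hGb2 τ s h]
      exact ih τ s h
    have key := BK.Phi_diff_bound lam0 c1e fe2 (Gseq lam0 c1e fe2 n) Gbe2 hc1e hfe2cont
      (hGseqcont n) hGbe2cont hL0 hF0 hc0 n hmu hfb hKbd hE
    have hdiff : Gseq lam0 c1 f (n + 1) xi eta - Gb xi eta =
        Phi lam0 c1e fe2 (Gseq lam0 c1e fe2 n) xi eta - Phi lam0 c1e fe2 Gbe2 xi eta := by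
      show Gzero lam0 f xi eta + Phi lam0 c1 f (Gseq lam0 c1 f n) xi eta - Gb xi eta = _
      rw [hGbeq xi eta hE, BK.Phi_congr lam0 hc1eq hfeq2 (hGseqE n) hE,
        BK.Phi_congr lam0 hc1eq hfeq2 hGb2 hE]
      ring
    rw [hdiff]
    refine key.trans ?_
    have hM : (Lambdabar lam0 c1 + fbar f) / 2 = Mconst lam0 c1 f := by unfold Mconst; ring
    rw [hM]
    apply le_of_eq
    have h1 : ((Nat.factorial n : ℝ)) ≠ 0 := Nat.cast_ne_zero.mpr (Nat.factorial_ne_zero n)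
    have h2 : ((n : ℝ) + 1) ≠ 0 := by positivity
    have hfact : ((Nat.factorial (n + 1) : ℝ)) = ((n : ℝ) + 1) * (Nat.factorial n : ℝ) := by
      push_cast [Nat.factorial_succ]; ring
    rw [hfact, pow_succ]
    field_simp
    ring
end
end

section
/- The integral equation has at most one continuous solution: if G₁, G₂ : E → ℝ are continuous and both satisfy G = G0 + Φ_G on E, then G₁(ξ,η) = G₂(ξ,η) for all (ξ,η) ∈ E. -/
open MeasureTheory Set
open scoped ENNReal

noncomputable section

/-! ### Auxiliary lemmas for the uniqueness proof -/

section AuxUnique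

lemma exists_ext2' {s : Set (ℝ×ℝ)} (hs : IsClosed s) {f : ℝ×ℝ → ℝ} (hf : ContinuousOn f s) :
    ∃ g : ℝ×ℝ → ℝ, Continuous g ∧ ∀ p ∈ s, g p = f p := by
  obtain ⟨g, hg⟩ := ContinuousMap.exists_restrict_eq (Y := ℝ) hs ⟨s.restrict f, hf.restrict⟩
  exact ⟨g, g.continuous, fun p hp => congrFun (congrArg DFunLike.coe hg) ⟨p, hp⟩⟩

lemma exists_ext1' {s : Set ℝ} (hs : IsClosed s) {f : ℝ → ℝ} (hf : ContinuousOn f s) :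
    ∃ g : ℝ → ℝ, Continuous g ∧ ∀ p ∈ s, g p = f p := by
  obtain ⟨g, hg⟩ := ContinuousMap.exists_restrict_eq (Y := ℝ) hs ⟨s.restrict f, hf.restrict⟩
  exact ⟨g, g.continuous, fun p hp => congrFun (congrArg DFunLike.coe hg) ⟨p, hp⟩⟩

lemma memE_of' (τ s : ℝ) (h1 : 0 ≤ s) (h2 : s ≤ 1) (h3 : s ≤ τ) (h4 : τ ≤ 2 - s) :
    (τ, s) ∈ Eset := ⟨h1, h2, h3, h4⟩

lemma isClosed_Eset' : IsClosed Eset := by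
  simp only [Eset, setOf_and]
  have c2 : Continuous fun p : ℝ×ℝ => p.2 := continuous_snd
  have cf : Continuous fun p : ℝ×ℝ => p.1 := continuous_fst
  exact (isClosed_le continuous_const c2).inter ((isClosed_le c2 continuous_const).inter
    ((isClosed_le c2 cf).inter (isClosed_le cf (continuous_const.sub c2))))

lemma isCompact_Eset' : IsCompact Eset := by
  have hbox : IsCompact (Icc ((0:ℝ),(0:ℝ)) (2,1)) := isCompact_Icc
  refine IsCompact.of_isClosed_subset hbox isClosed_Eset' ?_
  rintro ⟨x, y⟩ ⟨h1, h2, h3, h4⟩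
  simp only at h1 h2 h3 h4
  simp only [mem_Icc, Prod.mk_le_mk]
  exact ⟨⟨by linarith, h1⟩, ⟨by linarith, h2⟩⟩

lemma cont_slice {g : ℝ → ℝ → ℝ} (hg : Continuous fun p : ℝ×ℝ => g p.1 p.2) (τ : ℝ) :
    Continuous fun s => g τ s :=
  hg.comp (Continuous.prodMk_right τ)

lemma sub_double (a b c : ℝ) (u : ℝ → ℝ) (hu : Continuous u) (μf g1 g2 : ℝ → ℝ → ℝ)
    (hμ : Continuous fun p : ℝ×ℝ => μf p.1 p.2)
    (h1 : Continuous fun p : ℝ×ℝ => g1 p.1 p.2) (h2 : Continuous fun p : ℝ×ℝ => g2 p.1 p.2) :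
    (∫ τ in a..b, ∫ s in c..u τ, μf τ s * g1 τ s) - (∫ τ in a..b, ∫ s in c..u τ, μf τ s * g2 τ s)
      = ∫ τ in a..b, ∫ s in c..u τ, μf τ s * (g1 τ s - g2 τ s) := by
  have key : ∀ (g : ℝ → ℝ → ℝ), (Continuous fun p : ℝ×ℝ => g p.1 p.2) →
      Continuous fun τ => ∫ s in c..u τ, μf τ s * g τ s := by
    intro g hg
    exact intervalIntegral.continuous_parametric_intervalIntegral_of_continuous
      (f := fun τ s => μf τ s * g τ s) (hμ.mul hg) hu
  rw [← intervalIntegral.integral_sub ((key g1 h1).intervalIntegrable _ _)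
      ((key g2 h2).intervalIntegrable _ _)]
  apply intervalIntegral.integral_congr
  intro τ _
  simp only
  rw [← intervalIntegral.integral_sub (f := fun s => μf τ s * g1 τ s) (g := fun s => μf τ s * g2 τ s)
      (((cont_slice hμ τ).mul (cont_slice h1 τ)).intervalIntegrable _ _)
      (((cont_slice hμ τ).mul (cont_slice h2 τ)).intervalIntegrable _ _)]
  simp [mul_sub]

lemma cont_inner3 (l r : ℝ → ℝ → ℝ)
    (hl : Continuous fun p : ℝ×ℝ => l p.1 p.2) (hr : Continuous fun p : ℝ×ℝ => r p.1 p.2)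
    (F : ℝ → ℝ → ℝ → ℝ) (hF : Continuous fun p : ℝ×ℝ×ℝ => F p.1 p.2.1 p.2.2)
    (g : ℝ → ℝ → ℝ) (hg : Continuous fun p : ℝ×ℝ => g p.1 p.2) :
    Continuous fun p : ℝ×ℝ => ∫ τ in l p.1 p.2..r p.1 p.2, F p.1 p.2 τ * g τ p.2 := by
  have hφ : Continuous fun q : (ℝ×ℝ)×ℝ => F q.1.1 q.1.2 q.2 * g q.2 q.1.2 := by
    have c1 : Continuous fun q : (ℝ×ℝ)×ℝ => F q.1.1 q.1.2 q.2 :=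
      hF.comp (by fun_prop : Continuous fun q : (ℝ×ℝ)×ℝ => ((q.1.1, q.1.2, q.2) : ℝ×ℝ×ℝ))
    have c2 : Continuous fun q : (ℝ×ℝ)×ℝ => g q.2 q.1.2 :=
      hg.comp (by fun_prop : Continuous fun q : (ℝ×ℝ)×ℝ => ((q.2, q.1.2) : ℝ×ℝ))
    exact c1.mul c2
  have hcont : ∀ (e : ℝ → ℝ → ℝ), (Continuous fun p : ℝ×ℝ => e p.1 p.2) →
      Continuous fun p : ℝ×ℝ => ∫ τ in (0:ℝ)..e p.1 p.2, F p.1 p.2 τ * g τ p.2 := by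
    intro e he
    exact intervalIntegral.continuous_parametric_intervalIntegral_of_continuous
      (f := fun (p : ℝ×ℝ) τ => F p.1 p.2 τ * g τ p.2) hφ he
  have heq : ∀ p : ℝ×ℝ, (∫ τ in l p.1 p.2..r p.1 p.2, F p.1 p.2 τ * g τ p.2)
      = (∫ τ in (0:ℝ)..r p.1 p.2, F p.1 p.2 τ * g τ p.2)
        - (∫ τ in (0:ℝ)..l p.1 p.2, F p.1 p.2 τ * g τ p.2) := by
    intro p
    have j1 : IntervalIntegrable (fun τ => F p.1 p.2 τ * g τ p.2) volume 0 (r p.1 p.2) :=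
      Continuous.intervalIntegrable (hφ.comp (Continuous.prodMk_right p)) _ _
    have j2 : IntervalIntegrable (fun τ => F p.1 p.2 τ * g τ p.2) volume 0 (l p.1 p.2) :=
      Continuous.intervalIntegrable (hφ.comp (Continuous.prodMk_right p)) _ _
    rw [intervalIntegral.integral_interval_sub_left j1 j2]
  simp only [heq]
  exact (hcont r hr).sub (hcont l hl)

lemma sub_triple (a b c : ℝ) (u : ℝ → ℝ) (hu : Continuous u) (l r : ℝ → ℝ → ℝ)
    (hl : Continuous fun p : ℝ×ℝ => l p.1 p.2) (hr : Continuous fun p : ℝ×ℝ => r p.1 p.2)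
    (F : ℝ → ℝ → ℝ → ℝ) (hF : Continuous fun p : ℝ×ℝ×ℝ => F p.1 p.2.1 p.2.2)
    (g1 g2 : ℝ → ℝ → ℝ)
    (h1 : Continuous fun p : ℝ×ℝ => g1 p.1 p.2) (h2 : Continuous fun p : ℝ×ℝ => g2 p.1 p.2) :
    (∫ z in a..b, ∫ s in c..u z, ∫ τ in l z s..r z s, F z s τ * g1 τ s)
      - (∫ z in a..b, ∫ s in c..u z, ∫ τ in l z s..r z s, F z s τ * g2 τ s)
      = ∫ z in a..b, ∫ s in c..u z, ∫ τ in l z s..r z s, F z s τ * (g1 τ s - g2 τ s) := by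
  have inner3 := fun g hg => cont_inner3 l r hl hr F hF g hg
  have mid : ∀ (g : ℝ → ℝ → ℝ), (Continuous fun p : ℝ×ℝ => g p.1 p.2) →
      Continuous fun z => ∫ s in c..u z, ∫ τ in l z s..r z s, F z s τ * g τ s := by
    intro g hg
    exact intervalIntegral.continuous_parametric_intervalIntegral_of_continuous
      (f := fun z s => ∫ τ in l z s..r z s, F z s τ * g τ s) (inner3 g hg) hu
  rw [← intervalIntegral.integral_sub ((mid g1 h1).intervalIntegrable _ _)
      ((mid g2 h2).intervalIntegrable _ _)]
  apply intervalIntegral.integral_congr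
  intro z _
  simp only
  have i1 : IntervalIntegrable (fun s => ∫ τ in l z s..r z s, F z s τ * g1 τ s)
      volume c (u z) := ((inner3 g1 h1).comp (Continuous.prodMk_right z)).intervalIntegrable _ _
  have i2 : IntervalIntegrable (fun s => ∫ τ in l z s..r z s, F z s τ * g2 τ s)
      volume c (u z) := ((inner3 g2 h2).comp (Continuous.prodMk_right z)).intervalIntegrable _ _
  rw [← intervalIntegral.integral_sub i1 i2]
  apply intervalIntegral.integral_congr
  intro s _
  simp only
  have hτc : ∀ (g : ℝ → ℝ → ℝ), (Continuous fun p : ℝ×ℝ => g p.1 p.2) →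
      Continuous fun τ => F z s τ * g τ s := by
    intro g hg
    have cF : Continuous fun τ => F z s τ :=
      hF.comp (by fun_prop : Continuous fun τ : ℝ => ((z, s, τ) : ℝ×ℝ×ℝ))
    have cg : Continuous fun τ => g τ s :=
      hg.comp (by fun_prop : Continuous fun τ : ℝ => ((τ, s) : ℝ×ℝ))
    exact cF.mul cg
  rw [← intervalIntegral.integral_sub ((hτc g1 h1).intervalIntegrable _ _)
      ((hτc g2 h2).intervalIntegrable _ _)]
  simp [mul_sub]

lemma bound_pow (c C : ℝ) (hc : 0 ≤ c) (hCc : 0 ≤ C) (n : ℕ) (F : ℝ → ℝ)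
    (h : ∀ s ∈ Ioc (0:ℝ) c, |F s| ≤ C * s ^ n) :
    |∫ s in (0:ℝ)..c, F s| ≤ C * c ^ (n+1) / (n+1) := by
  have hb : IntervalIntegrable (fun s => C * s ^ n) volume 0 c :=
    (continuous_const.mul (continuous_pow n)).intervalIntegrable _ _
  have hae : ∀ᵐ s ∂(volume.restrict (Set.uIoc (0:ℝ) c)), ‖F s‖ ≤ C * s ^ n := by
    rw [uIoc_of_le hc]
    exact (ae_restrict_iff' measurableSet_Ioc).2
      (ae_of_all _ (fun s hs => by simpa [Real.norm_eq_abs] using h s hs))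
  have key := intervalIntegral.norm_integral_le_of_norm_le hc
    ((ae_restrict_iff' measurableSet_Ioc).1 (by rwa [uIoc_of_le hc] at hae)) hb
  rw [Real.norm_eq_abs] at key
  refine key.trans ?_
  rw [intervalIntegral.integral_const_mul, integral_pow]
  rw [show ((0:ℝ)) ^ (n+1) = 0 by simp, sub_zero]
  rw [mul_div_assoc]


lemma bound_const (a b C : ℝ) (hab : a ≤ b) (F : ℝ → ℝ)
    (h : ∀ t ∈ Ioc a b, |F t| ≤ C) : |∫ t in a..b, F t| ≤ C * (b - a) := by
  have key := intervalIntegral.norm_integral_le_of_norm_le_const (C := C) (f := F) (a := a) (b := b)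
    (by rw [uIoc_of_le hab]; intro x hx; simpa [Real.norm_eq_abs] using h x hx)
  rwa [Real.norm_eq_abs, abs_of_nonneg (sub_nonneg.2 hab)] at key

lemma abs_comb4 (T1 T2 T3 T4 : ℝ) :
    |1/4*T1 + 1/2*T2 + 1/4*T3 + 1/2*T4| ≤ 1/4*|T1| + 1/2*|T2| + 1/4*|T3| + 1/2*|T4| := by
  have h := abs_add_le (1/4*T1 + 1/2*T2 + 1/4*T3) (1/2*T4)
  have h2 := abs_add_le (1/4*T1 + 1/2*T2) (1/4*T3)
  have h3 := abs_add_le (1/4*T1) (1/2*T2)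
  have e1 : |1/4*T1| = 1/4*|T1| := by rw [abs_mul]; norm_num
  have e2 : |1/2*T2| = 1/2*|T2| := by rw [abs_mul]; norm_num
  have e3 : |1/4*T3| = 1/4*|T3| := by rw [abs_mul]; norm_num
  have e4 : |1/2*T4| = 1/2*|T4| := by rw [abs_mul]; norm_num
  linarith

end AuxUnique

/-- Uniqueness of continuous solutions of the integral equation `G = G0 + Φ_G` on `E`. -/
theorem integral_equation_uniqueness (lam0 : ℝ) (hlam0 : 0 < lam0)
    (c1 : ℝ → ℝ) (hc1 : ContinuousOn c1 (Icc 0 1))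
    (f : ℝ → ℝ → ℝ)
    (hf : ContinuousOn (fun p : ℝ × ℝ => f p.1 p.2) (Icc 0 1 ×ˢ Icc 0 1))
    (G1 G2 : ℝ → ℝ → ℝ)
    (hG1cont : ContinuousOn (fun p : ℝ × ℝ => G1 p.1 p.2) Eset)
    (hG2cont : ContinuousOn (fun p : ℝ × ℝ => G2 p.1 p.2) Eset)
    (hG1eq : ∀ xi eta : ℝ, (xi, eta) ∈ Eset →
      G1 xi eta = Gzero lam0 f xi eta + Phi lam0 c1 f G1 xi eta)
    (hG2eq : ∀ xi eta : ℝ, (xi, eta) ∈ Eset →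
      G2 xi eta = Gzero lam0 f xi eta + Phi lam0 c1 f G2 xi eta) :
    ∀ xi eta : ℝ, (xi, eta) ∈ Eset → G1 xi eta = G2 xi eta := by
  obtain ⟨ct, hctc, hct⟩ := exists_ext1' isClosed_Icc hc1
  obtain ⟨f2, hf2c, hf2⟩ := exists_ext2' (isClosed_Icc.prod isClosed_Icc) hf
  obtain ⟨g1, hg1c, hg1⟩ := exists_ext2' isClosed_Eset' hG1cont
  obtain ⟨g2, hg2c, hg2⟩ := exists_ext2' isClosed_Eset' hG2cont
  set Ft : ℝ → ℝ → ℝ := fun x y => f2 (x, y) with hFtdef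
  set W : ℝ → ℝ → ℝ := fun a b => g1 (a, b) - g2 (a, b) with hWdef
  have hWc : Continuous fun p : ℝ×ℝ => W p.1 p.2 := by
    simp only [hWdef]
    exact hg1c.sub hg2c
  have hμtc : Continuous fun p : ℝ×ℝ => mutld lam0 ct p.1 p.2 := by
    unfold mutld
    exact (continuous_const.sub (hctc.comp (by fun_prop))).add (hctc.comp (by fun_prop))
  have hF3c : Continuous fun p : ℝ×ℝ×ℝ =>
      Ft ((p.2.2 - p.2.1)/2) (p.1 - (p.2.2 + p.2.1)/2) := by
    simp only [hFtdef]
    exact hf2c.comp (by fun_prop)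
  -- bounds on the extended functions
  obtain ⟨M0, hM0⟩ := isCompact_Eset'.exists_bound_of_continuousOn hWc.continuousOn
  have hM0' : ∀ τ s : ℝ, (τ, s) ∈ Eset → |W τ s| ≤ M0 := by
    intro τ s h
    simpa [Real.norm_eq_abs] using hM0 (τ, s) h
  have hM0nn : 0 ≤ M0 :=
    le_trans (abs_nonneg _) (hM0' 0 0 (memE_of' 0 0 le_rfl zero_le_one le_rfl (by norm_num)))
  obtain ⟨A1, hA1⟩ := isCompact_Eset'.exists_bound_of_continuousOn hμtc.continuousOn
  have hbox : IsCompact (Icc ((0:ℝ),(0:ℝ)) (1,1)) := isCompact_Icc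
  obtain ⟨A2, hA2⟩ := hbox.exists_bound_of_continuousOn hf2c.continuousOn
  set A : ℝ := |A1| + |A2| with hAdef
  have hA0 : 0 ≤ A := by rw [hAdef]; positivity
  have hμb : ∀ τ s : ℝ, (τ, s) ∈ Eset → |mutld lam0 ct τ s| ≤ A := by
    intro τ s h
    have h1 := hA1 (τ, s) h
    rw [Real.norm_eq_abs] at h1
    rw [hAdef]
    linarith [le_abs_self A1, abs_nonneg A2]
  have hFb : ∀ x y : ℝ, 0 ≤ x → x ≤ 1 → 0 ≤ y → y ≤ 1 → |Ft x y| ≤ A := by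
    intro x y h1 h2 h3 h4
    have hm : (x, y) ∈ Icc ((0:ℝ),(0:ℝ)) (1,1) := by
      simp only [mem_Icc, Prod.mk_le_mk]
      exact ⟨⟨h1, h3⟩, ⟨h2, h4⟩⟩
    have h5 := hA2 (x, y) hm
    rw [Real.norm_eq_abs] at h5
    simp only [hFtdef]
    rw [hAdef]
    linarith [le_abs_self A2, abs_nonneg A1]
  -- the `Phi` with original data equals the `Phi` with extended data, on `E`
  have congrPhi : ∀ (G : ℝ → ℝ → ℝ) (g : ℝ × ℝ → ℝ), (∀ p ∈ Eset, g p = G p.1 p.2) →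
      ∀ ξ η : ℝ, (ξ, η) ∈ Eset →
        Phi lam0 c1 f G ξ η = Phi lam0 ct Ft (fun a b => g (a, b)) ξ η := by
    intro G g hg ξ η hmem
    obtain ⟨he1, he2, he3, he4⟩ := hmem
    simp only at he1 he2 he3 he4
    have hc : ∀ x : ℝ, 0 ≤ x → x ≤ 1 → ct x = c1 x := fun x u v => hct x (mem_Icc.2 ⟨u, v⟩)
    have hfe : ∀ x y : ℝ, 0 ≤ x → x ≤ 1 → 0 ≤ y → y ≤ 1 → Ft x y = f x y := by
      intro x y u v w q
      simp only [hFtdef]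
      exact hf2 (x, y) (mem_prod.2 ⟨mem_Icc.2 ⟨u, v⟩, mem_Icc.2 ⟨w, q⟩⟩)
    have hmu : ∀ τ s : ℝ, 0 ≤ s → s ≤ τ → τ ≤ 2 - s →
        mutld lam0 ct τ s = mutld lam0 c1 τ s := by
      intro τ s u v w
      unfold mutld
      rw [hc ((τ+s)/2) (by linarith) (by linarith), hc ((τ-s)/2) (by linarith) (by linarith)]
    have e1 : (∫ tau in η..ξ, ∫ s in (0:ℝ)..η, mutld lam0 c1 tau s * G tau s)
        = ∫ tau in η..ξ, ∫ s in (0:ℝ)..η, mutld lam0 ct tau s * g (tau, s) := by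
      refine intervalIntegral.integral_congr fun τ hτ => ?_
      rw [uIcc_of_le he3] at hτ
      refine intervalIntegral.integral_congr fun s hs => ?_
      rw [uIcc_of_le he1] at hs
      have hE : (τ, s) ∈ Eset := memE_of' τ s hs.1 (by linarith [hs.2, hτ.1])
        (by linarith [hs.2, hτ.1]) (by linarith [hτ.2, hs.2])
      rw [hmu τ s hs.1 (by linarith [hτ.1, hs.2]) (by linarith [hτ.2, hs.2]), hg (τ, s) hE]
    have e2 : (∫ tau in (0:ℝ)..η, ∫ s in (0:ℝ)..tau, mutld lam0 c1 tau s * G tau s)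
        = ∫ tau in (0:ℝ)..η, ∫ s in (0:ℝ)..tau, mutld lam0 ct tau s * g (tau, s) := by
      refine intervalIntegral.integral_congr fun τ hτ => ?_
      rw [uIcc_of_le he1] at hτ
      refine intervalIntegral.integral_congr fun s hs => ?_
      rw [uIcc_of_le hτ.1] at hs
      have hE : (τ, s) ∈ Eset := memE_of' τ s hs.1 (by linarith [hs.2, hτ.2])
        hs.2 (by linarith [hτ.2, hs.1, hs.2])
      rw [hmu τ s hs.1 hs.2 (by linarith [hτ.2, hs.1, hs.2]), hg (τ, s) hE]
    have e3 : (∫ z in η..ξ, ∫ s in (0:ℝ)..η, ∫ tau in z..(z + η - s),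
          f ((tau - s) / 2) (z - (tau + s) / 2) * G tau s)
        = ∫ z in η..ξ, ∫ s in (0:ℝ)..η, ∫ tau in z..(z + η - s),
          Ft ((tau - s) / 2) (z - (tau + s) / 2) * g (tau, s) := by
      refine intervalIntegral.integral_congr fun z hz => ?_
      rw [uIcc_of_le he3] at hz
      refine intervalIntegral.integral_congr fun s hs => ?_
      rw [uIcc_of_le he1] at hs
      refine intervalIntegral.integral_congr fun τ hτ => ?_
      rw [uIcc_of_le (by linarith [hs.2] : z ≤ z + η - s)] at hτ
      have hE : (τ, s) ∈ Eset := memE_of' τ s hs.1 (by linarith [hs.2])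
        (by linarith [hs.2, hz.1, hτ.1]) (by linarith [hτ.2, hz.2])
      rw [hfe ((τ-s)/2) (z-(τ+s)/2) (by linarith [hs.2, hz.1, hτ.1])
        (by linarith [hτ.2, hz.2, hs.1]) (by linarith [hτ.2, hz.1])
        (by linarith [hτ.1, hz.2, hs.1]), hg (τ, s) hE]
    have e4 : (∫ z in (0:ℝ)..η, ∫ s in (0:ℝ)..z, ∫ tau in z..(2 * z - s),
          f ((tau - s) / 2) (z - (tau + s) / 2) * G tau s)
        = ∫ z in (0:ℝ)..η, ∫ s in (0:ℝ)..z, ∫ tau in z..(2 * z - s),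
          Ft ((tau - s) / 2) (z - (tau + s) / 2) * g (tau, s) := by
      refine intervalIntegral.integral_congr fun z hz => ?_
      rw [uIcc_of_le he1] at hz
      refine intervalIntegral.integral_congr fun s hs => ?_
      rw [uIcc_of_le hz.1] at hs
      refine intervalIntegral.integral_congr fun τ hτ => ?_
      rw [uIcc_of_le (by linarith [hs.2] : z ≤ 2 * z - s)] at hτ
      have hE : (τ, s) ∈ Eset := memE_of' τ s hs.1 (by linarith [hs.2, hz.2])
        (by linarith [hs.2, hτ.1]) (by linarith [hτ.2, hz.2, hs.1])
      rw [hfe ((τ-s)/2) (z-(τ+s)/2) (by linarith [hs.2, hτ.1])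
        (by linarith [hτ.2, hz.2, hs.1]) (by linarith [hτ.2])
        (by linarith [hτ.1, hz.2, hs.1]), hg (τ, s) hE]
    simp only [Phi]
    rw [e1, e2, e3, e4]
  -- the difference `W` satisfies the homogeneous equation with extended data
  have hWeq : ∀ ξ η : ℝ, (ξ, η) ∈ Eset → W ξ η = Phi lam0 ct Ft W ξ η := by
    intro ξ η hmem
    have d1 := hG1eq ξ η hmem
    have d2 := hG2eq ξ η hmem
    have k1 := congrPhi G1 g1 hg1 ξ η hmem
    have k2 := congrPhi G2 g2 hg2 ξ η hmem
    have start : W ξ η = Phi lam0 ct Ft (fun a b => g1 (a, b)) ξ η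
        - Phi lam0 ct Ft (fun a b => g2 (a, b)) ξ η := by
      rw [← k1, ← k2]
      have w1 : W ξ η = G1 ξ η - G2 ξ η := by
        rw [hWdef]
        simp only
        rw [hg1 (ξ, η) hmem, hg2 (ξ, η) hmem]
      rw [w1, d1, d2]
      ring
    rw [start]
    have s1 : (∫ τ in η..ξ, ∫ s in (0:ℝ)..η, mutld lam0 ct τ s * g1 (τ, s))
        - (∫ τ in η..ξ, ∫ s in (0:ℝ)..η, mutld lam0 ct τ s * g2 (τ, s))
        = ∫ τ in η..ξ, ∫ s in (0:ℝ)..η, mutld lam0 ct τ s * (g1 (τ, s) - g2 (τ, s)) :=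
      sub_double η ξ 0 (fun _ => η) continuous_const (mutld lam0 ct)
        (fun a b => g1 (a, b)) (fun a b => g2 (a, b)) hμtc hg1c hg2c
    have s2 : (∫ τ in (0:ℝ)..η, ∫ s in (0:ℝ)..τ, mutld lam0 ct τ s * g1 (τ, s))
        - (∫ τ in (0:ℝ)..η, ∫ s in (0:ℝ)..τ, mutld lam0 ct τ s * g2 (τ, s))
        = ∫ τ in (0:ℝ)..η, ∫ s in (0:ℝ)..τ, mutld lam0 ct τ s * (g1 (τ, s) - g2 (τ, s)) :=
      sub_double 0 η 0 (fun τ => τ) continuous_id (mutld lam0 ct)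
        (fun a b => g1 (a, b)) (fun a b => g2 (a, b)) hμtc hg1c hg2c
    have s3 : (∫ z in η..ξ, ∫ s in (0:ℝ)..η, ∫ τ in z..(z + η - s),
          Ft ((τ - s) / 2) (z - (τ + s) / 2) * g1 (τ, s))
        - (∫ z in η..ξ, ∫ s in (0:ℝ)..η, ∫ τ in z..(z + η - s),
          Ft ((τ - s) / 2) (z - (τ + s) / 2) * g2 (τ, s))
        = ∫ z in η..ξ, ∫ s in (0:ℝ)..η, ∫ τ in z..(z + η - s),
          Ft ((τ - s) / 2) (z - (τ + s) / 2) * (g1 (τ, s) - g2 (τ, s)) :=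
      sub_triple η ξ 0 (fun _ => η) continuous_const (fun z _ => z) (fun z s => z + η - s)
        (by fun_prop) (by fun_prop) (fun z s τ => Ft ((τ - s) / 2) (z - (τ + s) / 2)) hF3c
        (fun a b => g1 (a, b)) (fun a b => g2 (a, b)) hg1c hg2c
    have s4 : (∫ z in (0:ℝ)..η, ∫ s in (0:ℝ)..z, ∫ τ in z..(2 * z - s),
          Ft ((τ - s) / 2) (z - (τ + s) / 2) * g1 (τ, s))
        - (∫ z in (0:ℝ)..η, ∫ s in (0:ℝ)..z, ∫ τ in z..(2 * z - s),
          Ft ((τ - s) / 2) (z - (τ + s) / 2) * g2 (τ, s))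
        = ∫ z in (0:ℝ)..η, ∫ s in (0:ℝ)..z, ∫ τ in z..(2 * z - s),
          Ft ((τ - s) / 2) (z - (τ + s) / 2) * (g1 (τ, s) - g2 (τ, s)) :=
      sub_triple 0 η 0 (fun z => z) continuous_id (fun z _ => z) (fun z s => 2 * z - s)
        (by fun_prop) (by fun_prop) (fun z s τ => Ft ((τ - s) / 2) (z - (τ + s) / 2)) hF3c
        (fun a b => g1 (a, b)) (fun a b => g2 (a, b)) hg1c hg2c
    simp only [Phi, hWdef]
    linear_combination (1/4) * s1 + (1/2) * s2 + (1/4) * s3 + (1/2) * s4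
  -- the iterated (Volterra) bound
  have key : ∀ n : ℕ, ∀ ξ η : ℝ, (ξ, η) ∈ Eset →
      |W ξ η| ≤ M0 * (2*A+2)^n * η^n / (n.factorial : ℝ) := by
    intro n
    induction n with
    | zero =>
      intro ξ η hmem
      simpa using hM0' ξ η hmem
    | succ n ih =>
      intro ξ η hmem
      obtain ⟨he1, he2, he3, he4⟩ := id hmem
      simp only at he1 he2 he3 he4
      set D : ℝ := M0 * (2*A+2)^n / (n.factorial : ℝ) with hDdef
      have hDnn : 0 ≤ D := by
        rw [hDdef]
        exact div_nonneg (mul_nonneg hM0nn (by positivity)) (Nat.cast_nonneg _)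
      have ihD : ∀ τ s : ℝ, (τ, s) ∈ Eset → |W τ s| ≤ D * s^n := by
        intro τ s h
        have h2 := ih τ s h
        have e : M0 * (2*A+2)^n * s^n / (n.factorial : ℝ) = D * s^n := by rw [hDdef]; ring
        linarith
      have hADnn : 0 ≤ A * D := mul_nonneg hA0 hDnn
      have hprodμ : ∀ τ s : ℝ, (τ, s) ∈ Eset → |mutld lam0 ct τ s * W τ s| ≤ A * D * s^n := by
        intro τ s h
        rw [abs_mul]
        refine le_trans (mul_le_mul (hμb τ s h) (ihD τ s h) (abs_nonneg _) hA0)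
          (le_of_eq (by ring))
      have hprodF : ∀ z τ s : ℝ, 0 ≤ (τ-s)/2 → (τ-s)/2 ≤ 1 → 0 ≤ z-(τ+s)/2 → z-(τ+s)/2 ≤ 1 →
          (τ, s) ∈ Eset → |Ft ((τ-s)/2) (z-(τ+s)/2) * W τ s| ≤ A * D * s^n := by
        intro z τ s u1 u2 u3 u4 h
        rw [abs_mul]
        refine le_trans (mul_le_mul (hFb _ _ u1 u2 u3 u4) (ihD τ s h) (abs_nonneg _) hA0)
          (le_of_eq (by ring))
      set X : ℝ := D * η^(n+1) / ((n:ℝ)+1) with hXdef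
      have hXnn : 0 ≤ X := by
        rw [hXdef]
        exact div_nonneg (mul_nonneg hDnn (pow_nonneg he1 _)) (by positivity)
      have hAXe : A * D * η^(n+1) / ((n:ℝ)+1) = A * X := by rw [hXdef]; ring
      have hAXnn : 0 ≤ A * X := mul_nonneg hA0 hXnn
      have bnd1 : |∫ tau in η..ξ, ∫ s in (0:ℝ)..η, mutld lam0 ct tau s * W tau s|
          ≤ A * X * 2 := by
        have hb : ∀ τ ∈ Ioc η ξ, |∫ s in (0:ℝ)..η, mutld lam0 ct τ s * W τ s|
            ≤ A * D * η^(n+1) / ((n:ℝ)+1) := by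
          intro τ hτ
          exact bound_pow η (A*D) he1 hADnn n _ (fun s hs => hprodμ τ s
            (memE_of' τ s hs.1.le (by linarith [hs.2]) (by linarith [hs.2, hτ.1])
              (by linarith [hτ.2, hs.2])))
        have h1 := bound_const η ξ _ he3 _ hb
        refine h1.trans ?_
        rw [hAXe]
        calc (A * X) * (ξ - η) ≤ (A * X) * 2 :=
              mul_le_mul_of_nonneg_left (by linarith) hAXnn
          _ = A * X * 2 := by ring
      have bnd2 : |∫ tau in (0:ℝ)..η, ∫ s in (0:ℝ)..tau, mutld lam0 ct tau s * W tau s|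
          ≤ A * X := by
        have hb : ∀ τ ∈ Ioc (0:ℝ) η, |∫ s in (0:ℝ)..τ, mutld lam0 ct τ s * W τ s|
            ≤ A * D * η^(n+1) / ((n:ℝ)+1) := by
          intro τ hτ
          have h1 := bound_pow τ (A*D) hτ.1.le hADnn n _ (fun s hs => hprodμ τ s
            (memE_of' τ s hs.1.le (by linarith [hs.2, hτ.2]) hs.2
              (by linarith [hτ.2, hs.1, hs.2])))
          refine h1.trans ?_
          have h2 : τ^(n+1) ≤ η^(n+1) := pow_le_pow_left₀ hτ.1.le hτ.2 _
          have h3 : A*D*τ^(n+1) ≤ A*D*η^(n+1) := mul_le_mul_of_nonneg_left h2 hADnn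
          exact div_le_div_of_nonneg_right h3 (by positivity)
        have h1 := bound_const 0 η _ he1 _ hb
        refine h1.trans ?_
        rw [sub_zero, hAXe]
        calc (A * X) * η ≤ (A * X) * 1 := mul_le_mul_of_nonneg_left he2 hAXnn
          _ = A * X := mul_one _
      have bnd3 : |∫ z in η..ξ, ∫ s in (0:ℝ)..η, ∫ tau in z..(z + η - s),
            Ft ((tau - s) / 2) (z - (tau + s) / 2) * W tau s| ≤ A * X * 2 := by
        have hb : ∀ z ∈ Ioc η ξ, |∫ s in (0:ℝ)..η, ∫ tau in z..(z + η - s),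
            Ft ((tau - s) / 2) (z - (tau + s) / 2) * W tau s|
            ≤ A * D * η^(n+1) / ((n:ℝ)+1) := by
          intro z hz
          refine bound_pow η (A*D) he1 hADnn n _ (fun s hs => ?_)
          have hinner : ∀ τ ∈ Ioc z (z + η - s),
              |Ft ((τ - s) / 2) (z - (τ + s) / 2) * W τ s| ≤ A * D * s^n := by
            intro τ hτ
            exact hprodF z τ s (by linarith [hs.2, hz.1, hτ.1])
              (by linarith [hτ.2, hz.2, hs.1]) (by linarith [hτ.2, hz.1])
              (by linarith [hτ.1, hz.2, hs.1])
              (memE_of' τ s hs.1.le (by linarith [hs.2])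
                (by linarith [hs.2, hz.1, hτ.1]) (by linarith [hτ.2, hz.2]))
          have h1 := bound_const z (z + η - s) (A*D*s^n) (by linarith [hs.2]) _ hinner
          refine h1.trans ?_
          have hsn : 0 ≤ A*D*s^n := mul_nonneg hADnn (pow_nonneg hs.1.le n)
          calc A*D*s^n * (z + η - s - z) ≤ A*D*s^n * 1 :=
                mul_le_mul_of_nonneg_left (by linarith [hs.1]) hsn
            _ = A*D*s^n := mul_one _
        have h1 := bound_const η ξ _ he3 _ hb
        refine h1.trans ?_
        rw [hAXe]
        calc (A * X) * (ξ - η) ≤ (A * X) * 2 :=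
              mul_le_mul_of_nonneg_left (by linarith) hAXnn
          _ = A * X * 2 := by ring
      have bnd4 : |∫ z in (0:ℝ)..η, ∫ s in (0:ℝ)..z, ∫ tau in z..(2 * z - s),
            Ft ((tau - s) / 2) (z - (tau + s) / 2) * W tau s| ≤ A * X := by
        have hb : ∀ z ∈ Ioc (0:ℝ) η, |∫ s in (0:ℝ)..z, ∫ tau in z..(2 * z - s),
            Ft ((tau - s) / 2) (z - (tau + s) / 2) * W tau s|
            ≤ A * D * η^(n+1) / ((n:ℝ)+1) := by
          intro z hz
          refine le_trans (bound_pow z (A*D) hz.1.le hADnn n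
            (fun s => ∫ tau in z..(2 * z - s), Ft ((tau - s) / 2) (z - (tau + s) / 2) * W tau s)
            (fun s hs => ?_)) ?_
          swap
          · have h2 : z^(n+1) ≤ η^(n+1) := pow_le_pow_left₀ hz.1.le hz.2 _
            have h3 : A*D*z^(n+1) ≤ A*D*η^(n+1) := mul_le_mul_of_nonneg_left h2 hADnn
            exact div_le_div_of_nonneg_right h3 (by positivity)
          have hinner : ∀ τ ∈ Ioc z (2 * z - s),
              |Ft ((τ - s) / 2) (z - (τ + s) / 2) * W τ s| ≤ A * D * s^n := by
            intro τ hτ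
            exact hprodF z τ s (by linarith [hs.2, hτ.1])
              (by linarith [hτ.2, hz.2, hs.1]) (by linarith [hτ.2])
              (by linarith [hτ.1, hz.2, hs.1])
              (memE_of' τ s hs.1.le (by linarith [hs.2, hz.2])
                (by linarith [hs.2, hτ.1]) (by linarith [hτ.2, hz.2, hs.1]))
          have h4 := bound_const z (2 * z - s) (A*D*s^n) (by linarith [hs.2]) _ hinner
          refine h4.trans ?_
          have hsn : 0 ≤ A*D*s^n := mul_nonneg hADnn (pow_nonneg hs.1.le n)
          calc A*D*s^n * (2 * z - s - z) ≤ A*D*s^n * 1 :=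
                mul_le_mul_of_nonneg_left (by linarith [hs.1, hz.2]) hsn
            _ = A*D*s^n := mul_one _
        have h1 := bound_const 0 η _ he1 _ hb
        refine h1.trans ?_
        rw [sub_zero, hAXe]
        calc (A * X) * η ≤ (A * X) * 1 := mul_le_mul_of_nonneg_left he2 hAXnn
          _ = A * X := mul_one _
      rw [hWeq ξ η hmem]
      simp only [Phi]
      refine le_trans (abs_comb4 _ _ _ _) ?_
      have heq2 : M0 * (2*A+2)^(n+1) * η^(n+1) / (((n+1).factorial : ℝ)) = (2*A+2) * X := by
        rw [hXdef, hDdef, Nat.factorial_succ]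
        have hfne : ((n.factorial : ℝ)) ≠ 0 := Nat.cast_ne_zero.2 n.factorial_ne_zero
        have hn1 : ((n:ℝ)+1) ≠ 0 := by positivity
        push_cast
        field_simp
        ring
      have final : (1:ℝ)/4*(A*X*2) + 1/2*(A*X) + 1/4*(A*X*2) + 1/2*(A*X)
          ≤ M0 * (2*A+2)^(n+1) * η^(n+1) / (((n+1).factorial : ℝ)) := by
        rw [heq2]
        nlinarith [hXnn]
      refine le_trans (add_le_add (add_le_add (add_le_add
        (mul_le_mul_of_nonneg_left bnd1 (by norm_num))
        (mul_le_mul_of_nonneg_left bnd2 (by norm_num)))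
        (mul_le_mul_of_nonneg_left bnd3 (by norm_num)))
        (mul_le_mul_of_nonneg_left bnd4 (by norm_num))) final
  -- conclusion
  intro ξ η hmem
  obtain ⟨he1, he2, he3, he4⟩ := id hmem
  simp only at he1 he2 he3 he4
  have hb : ∀ n : ℕ, |W ξ η| ≤ M0 * ((2*A+2)^n / (n.factorial : ℝ)) := by
    intro n
    have h1 := key n ξ η hmem
    have h2 : η^n ≤ 1 := pow_le_one₀ he1 he2
    have hnum : M0 * (2*A+2)^n * η^n ≤ M0 * (2*A+2)^n * 1 :=
      mul_le_mul_of_nonneg_left h2 (mul_nonneg hM0nn (by positivity))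
    calc |W ξ η| ≤ M0 * (2*A+2)^n * η^n / (n.factorial : ℝ) := h1
      _ ≤ M0 * (2*A+2)^n * 1 / (n.factorial : ℝ) :=
          div_le_div_of_nonneg_right hnum (Nat.cast_nonneg _)
      _ = M0 * ((2*A+2)^n / (n.factorial : ℝ)) := by ring
  have hlim : Filter.Tendsto (fun n : ℕ => M0 * ((2*A+2)^n / (n.factorial : ℝ)))
      Filter.atTop (nhds 0) := by
    have h1 := FloorSemiring.tendsto_pow_div_factorial_atTop (K := ℝ) (2*A+2)
    simpa using h1.const_mul M0
  have h0 : |W ξ η| ≤ 0 := ge_of_tendsto' hlim hb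
  have hWz : W ξ η = 0 := abs_nonpos_iff.mp h0
  rw [hWdef] at hWz
  simp only at hWz
  rw [hg1 (ξ, η) hmem, hg2 (ξ, η) hmem] at hWz
  linarith
end
end
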